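/- arXiv:1710.10097 — 9 statements merged into one kernel-verified Lean document; each statement's English description precedes it below -/
import Mathlib

section
/- Let G be a connected graph on n vertices and m edges whose edges are assigned s×s real positive definite matrix weights, and let Q be its (matrix-weighted) incidence matrix. Then the rank of Q equals (n−1)s. -/
open Matrix
open scoped MatrixOrder

/-- Let `G` be a connected graph on `n` vertices and `m` edges whose edges are
assigned `s × s` real positive definite matrix weights, and let `Q` be its matrix-weighted
incidence matrix (built from the inverses of the positive definite square roots of the weights,
with respect to a chosen orientation `o` enumerating the edges). Then `rank Q = (n-1)s`. -/
theorem rank_incidence_of_connected_posDef {n m s : ℕ}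
    (G : SimpleGraph (Fin n)) [DecidableRel G.Adj] (hG : G.Connected)
    (o : Fin m → Fin n × Fin n)
    (ho_adj : ∀ j, G.Adj (o j).1 (o j).2)
    (ho_inj : Function.Injective fun j => Sym2.mk (o j).1 (o j).2)
    (ho_surj : ∀ e ∈ G.edgeSet, ∃ j, Sym2.mk (o j).1 (o j).2 = e)
    (W : Fin m → Matrix (Fin s) (Fin s) ℝ)
    (hW : ∀ j, (W j).PosDef)
    (Q : Matrix (Fin n × Fin s) (Fin m × Fin s) ℝ)
    (hQ : ∀ p q, Q p q =
      if p.1 = (o q.1).1 then ((CFC.sqrt (W q.1))⁻¹) p.2 q.2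
      else if p.1 = (o q.1).2 then -(((CFC.sqrt (W q.1))⁻¹) p.2 q.2)
      else 0) :
    Q.rank = (n - 1) * s := by
  classical
  have hn : 0 < n := Fin.pos_iff_nonempty.mpr hG.nonempty
  set S : Fin m → Matrix (Fin s) (Fin s) ℝ := fun j => (CFC.sqrt (W j))⁻¹ with hSdef
  -- the square roots are invertible
  have hdet0 : ∀ j, IsUnit (CFC.sqrt (W j)).det := by
    intro j
    have h1 : (CFC.sqrt (W j)).det * (CFC.sqrt (W j)).det = (W j).det := by
      rw [← Matrix.det_mul, CFC.sqrt_mul_sqrt_self (W j) (hW j).posSemidef.nonneg]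
    have h2 : (W j).det ≠ 0 := ne_of_gt (hW j).det_pos
    refine isUnit_iff_ne_zero.mpr fun h => h2 ?_
    rw [← h1, h]; ring
  have hdet : ∀ j, IsUnit ((S j)ᵀ).det := by
    intro j
    obtain ⟨u, hu⟩ := hdet0 j
    rw [Matrix.det_transpose, hSdef, Matrix.det_nonsing_inv, ← hu, Ring.inverse_unit]
    exact (u⁻¹).isUnit
  -- the key mulVec formula
  have hmul : ∀ (x : Fin n × Fin s → ℝ) (j : Fin m) (t : Fin s),
      (Qᵀ *ᵥ x) (j, t) =
        ((S j)ᵀ *ᵥ fun r => x ((o j).1, r) - x ((o j).2, r)) t := by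
    intro x j t
    have hne : (o j).1 ≠ (o j).2 := (ho_adj j).ne
    simp only [Matrix.mulVec, dotProduct, Matrix.transpose_apply]
    rw [Fintype.sum_prod_type]
    have key : ∀ i : Fin n, ∀ r : Fin s, Q (i, r) (j, t) * x (i, r) =
        (if i = (o j).1 then S j r t * x (i, r) else 0) +
        (if i = (o j).2 then -(S j r t * x (i, r)) else 0) := by
      intro i r
      rw [hQ]
      by_cases h1 : i = (o j).1 <;> by_cases h2 : i = (o j).2 <;>
        simp_all <;> ring
    simp only [key, Finset.sum_add_distrib]
    have e1 : ∀ i, (∑ r, if i = (o j).1 then S j r t * x (i, r) else 0) =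
        if i = (o j).1 then ∑ r, S j r t * x (i, r) else 0 := by
      intro i; split <;> simp
    have e2 : ∀ i, (∑ r, if i = (o j).2 then -(S j r t * x (i, r)) else 0) =
        if i = (o j).2 then ∑ r, -(S j r t * x (i, r)) else 0 := by
      intro i; split <;> simp
    simp only [e1, e2, Finset.sum_ite_eq', Finset.mem_univ, if_true]
    rw [← Finset.sum_add_distrib]
    congr 1
    ext r
    ring
  -- linear map embedding constants
  let φ : (Fin s → ℝ) →ₗ[ℝ] (Fin n × Fin s → ℝ) :=
    { toFun := fun c p => c p.2
      map_add' := by intros; rfl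
      map_smul' := by intros; rfl }
  have hφinj : Function.Injective φ := by
    intro c d h
    funext r
    have := congrFun h (⟨0, hn⟩, r)
    exact this
  -- kernel computation
  have hker : LinearMap.ker (Matrix.mulVecLin Qᵀ) = LinearMap.range φ := by
    apply le_antisymm
    · intro x hx
      have hx' : Qᵀ *ᵥ x = 0 := hx
      -- for each edge, the difference vanishes
      have hdiff : ∀ j : Fin m, ∀ r, x ((o j).1, r) = x ((o j).2, r) := by
        intro j
        have h0 : ((S j)ᵀ *ᵥ fun r => x ((o j).1, r) - x ((o j).2, r)) = 0 := by
          funext t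
          rw [← hmul x j t, hx']
          rfl
        have h1 : (fun r => x ((o j).1, r) - x ((o j).2, r)) = 0 := by
          have := congrArg (fun v => ((S j)ᵀ)⁻¹ *ᵥ v) h0
          simpa [Matrix.mulVec_mulVec, Matrix.nonsing_inv_mul _ (hdet j)] using this
        intro r
        have := congrFun h1 r
        simp only [Pi.zero_apply] at this
        linarith
      -- edge-constancy along adjacency
      have hadj : ∀ u v : Fin n, G.Adj u v → ∀ r, x (u, r) = x (v, r) := by
        intro u v huv r
        obtain ⟨j, hj⟩ := ho_surj s(u, v) huv
        rw [Sym2.eq_iff] at hj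
        rcases hj with hj | hj
        · have h1 : (o j).1 = u := by simp [hj]
          have h2 : (o j).2 = v := by simp [hj]
          rw [← h1, ← h2]; exact hdiff j r
        · have h1 : (o j).1 = v := by simp [hj]
          have h2 : (o j).2 = u := by simp [hj]
          rw [← h1, ← h2]; exact (hdiff j r).symm
      -- constancy by connectivity
      have hconst : ∀ u v : Fin n, ∀ r, x (u, r) = x (v, r) := by
        intro u v r
        obtain ⟨w⟩ := hG.preconnected u v
        induction w with
        | nil => rfl
        | cons h p ih => exact (hadj _ _ h r).trans ih
      refine ⟨fun r => x (⟨0, hn⟩, r), ?_⟩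
      funext p
      exact hconst ⟨0, hn⟩ p.1 p.2
    · rintro _ ⟨c, rfl⟩
      have : Qᵀ *ᵥ (φ c) = 0 := by
        funext q
        obtain ⟨j, t⟩ := q
        rw [hmul (φ c) j t]
        simp [φ, Matrix.mulVec, dotProduct]
      exact this
  -- rank computation
  have hrk : Qᵀ.rank + s = n * s := by
    have h1 := LinearMap.finrank_range_add_finrank_ker (Matrix.mulVecLin Qᵀ)
    rw [hker] at h1
    rw [LinearMap.finrank_range_of_inj hφinj] at h1
    simp only [Module.finrank_fintype_fun_eq_card, Fintype.card_prod, Fintype.card_fin] at h1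
    exact h1
  rw [← Matrix.rank_transpose Q]
  have : (n - 1) * s = n * s - 1 * s := by rw [Nat.sub_mul]
  rw [this, one_mul]
  omega
end

section
/- Let G be a connected graph on n vertices whose edges are assigned s×s real positive definite matrix weights, and let L be its (matrix-weighted) Laplacian matrix formed from the inverses of the weights. Then the rank of L equals (n−1)s. -/
open Matrix

/-- Matrix-weighted Laplacian: each edge weight is replaced by its inverse. -/
noncomputable def matLap {n s : ℕ} (G : SimpleGraph (Fin n)) [DecidableRel G.Adj]
    (w : Sym2 (Fin n) → Matrix (Fin s) (Fin s) ℝ) :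
    Matrix (Fin n × Fin s) (Fin n × Fin s) ℝ :=
  Matrix.of fun p q =>
    if p.1 = q.1 then (∑ k ∈ G.neighborFinset p.1, (w s(p.1, k))⁻¹) p.2 q.2
    else if G.Adj p.1 q.1 then (-(w s(p.1, q.1))⁻¹) p.2 q.2
    else 0

/-- Block formula for the Laplacian acting on a vector. -/
lemma matLap_mulVec' {n s : ℕ} (G : SimpleGraph (Fin n)) [DecidableRel G.Adj]
    (w : Sym2 (Fin n) → Matrix (Fin s) (Fin s) ℝ)
    (x : Fin n × Fin s → ℝ) (i : Fin n) (a : Fin s) :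
    (matLap G w).mulVec x (i, a)
      = ∑ k ∈ G.neighborFinset i,
          ((w (s(i, k)))⁻¹ *ᵥ fun b => x (i, b) - x (k, b)) a := by
  have h1 : (matLap G w).mulVec x (i, a)
      = ∑ j : Fin n, ∑ b : Fin s,
          (if i = j then (∑ k ∈ G.neighborFinset i, (w (s(i, k)))⁻¹) a b
           else if G.Adj i j then (-(w (s(i, j)))⁻¹) a b else 0) * x (j, b) := by
    simp [matLap, Matrix.mulVec, dotProduct, Fintype.sum_prod_type]
  rw [h1, ← Finset.add_sum_erase Finset.univ _ (Finset.mem_univ i)]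
  have hdiag : ∑ b : Fin s,
      (if i = i then (∑ k ∈ G.neighborFinset i, (w (s(i, k)))⁻¹) a b
       else if G.Adj i i then (-(w (s(i, i)))⁻¹) a b else 0) * x (i, b)
      = ∑ k ∈ G.neighborFinset i, ∑ b : Fin s, (w (s(i, k)))⁻¹ a b * x (i, b) := by
    simp only [eq_self_iff_true, if_true, Matrix.sum_apply, Finset.sum_mul]
    rw [Finset.sum_comm]
  have hoff : ∑ j ∈ Finset.univ.erase i, ∑ b : Fin s,
      (if i = j then (∑ k ∈ G.neighborFinset i, (w (s(i, k)))⁻¹) a b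
       else if G.Adj i j then (-(w (s(i, j)))⁻¹) a b else 0) * x (j, b)
      = ∑ k ∈ G.neighborFinset i, ∑ b : Fin s, -((w (s(i, k)))⁻¹ a b * x (k, b)) := by
    have step1 : ∀ j ∈ Finset.univ.erase i, (∑ b : Fin s,
        (if i = j then (∑ k ∈ G.neighborFinset i, (w (s(i, k)))⁻¹) a b
         else if G.Adj i j then (-(w (s(i, j)))⁻¹) a b else 0) * x (j, b))
        = if G.Adj i j then ∑ b : Fin s, -((w (s(i, j)))⁻¹ a b * x (j, b)) else 0 := by
      intro j hj
      have hij : ¬ (i = j) := fun h => (Finset.mem_erase.mp hj).1 h.symm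
      simp only [if_neg hij]
      split_ifs with h
      · simp [Matrix.neg_apply, neg_mul]
      · simp
    rw [Finset.sum_congr rfl step1]
    have h0 : (if G.Adj i i then ∑ b : Fin s, -((w (s(i, i)))⁻¹ a b * x (i, b)) else 0)
        = 0 := by simp
    rw [Finset.sum_erase_eq_sub (Finset.mem_univ i), h0, sub_zero, ← Finset.sum_filter]
    apply Finset.sum_congr
    · ext k; simp [SimpleGraph.mem_neighborFinset]
    · intros; rfl
  rw [hdiag, hoff, ← Finset.sum_add_distrib]
  refine Finset.sum_congr rfl fun k _ => ?_
  simp only [Matrix.mulVec, dotProduct, mul_sub]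
  rw [← Finset.sum_add_distrib]
  refine Finset.sum_congr rfl fun b _ => ?_
  ring

/-- Swapping the two indices in a sum over ordered adjacent pairs. -/
lemma nb_sum_swap {n : ℕ} (G : SimpleGraph (Fin n)) [DecidableRel G.Adj]
    (f : Fin n → Fin n → ℝ) :
    ∑ i : Fin n, ∑ k ∈ G.neighborFinset i, f i k
      = ∑ i : Fin n, ∑ k ∈ G.neighborFinset i, f k i := by
  have h : ∀ (g : Fin n → Fin n → ℝ), ∑ i : Fin n, ∑ k ∈ G.neighborFinset i, g i k
      = ∑ i : Fin n, ∑ k : Fin n, if G.Adj i k then g i k else 0 := by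
    intro g
    refine Finset.sum_congr rfl fun i _ => ?_
    simp only [← SimpleGraph.mem_neighborFinset, Finset.sum_ite_mem, Finset.univ_inter]
  rw [h, h, Finset.sum_comm]
  refine Finset.sum_congr rfl fun i _ => Finset.sum_congr rfl fun k _ => ?_
  exact if_congr (G.adj_comm k i) rfl rfl

/-- The quadratic form of the matrix-weighted Laplacian. -/
lemma matLap_quadForm {n s : ℕ} (G : SimpleGraph (Fin n)) [DecidableRel G.Adj]
    (w : Sym2 (Fin n) → Matrix (Fin s) (Fin s) ℝ) (x : Fin n × Fin s → ℝ) :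
    x ⬝ᵥ ((matLap G w).mulVec x)
      = ∑ i : Fin n, ∑ k ∈ G.neighborFinset i,
          (fun a => x (i, a)) ⬝ᵥ ((w (s(i, k)))⁻¹ *ᵥ fun b => x (i, b) - x (k, b)) := by
  rw [dotProduct, Fintype.sum_prod_type]
  refine Finset.sum_congr rfl fun i _ => ?_
  calc ∑ a : Fin s, x (i, a) * (matLap G w).mulVec x (i, a)
      = ∑ a : Fin s, ∑ k ∈ G.neighborFinset i,
          x (i, a) * ((w (s(i, k)))⁻¹ *ᵥ fun b => x (i, b) - x (k, b)) a := by
        refine Finset.sum_congr rfl fun a _ => ?_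
        rw [matLap_mulVec' G w x i a, Finset.mul_sum]
    _ = ∑ k ∈ G.neighborFinset i, ∑ a : Fin s,
          x (i, a) * ((w (s(i, k)))⁻¹ *ᵥ fun b => x (i, b) - x (k, b)) a :=
        Finset.sum_comm
    _ = _ := rfl

/-- The linear map embedding `Fin s → ℝ` as blockwise-constant vectors. -/
def constLin (n s : ℕ) : (Fin s → ℝ) →ₗ[ℝ] (Fin n × Fin s → ℝ) where
  toFun c := fun p => c p.2
  map_add' _ _ := rfl
  map_smul' _ _ := rfl

/-- Let `G` be a connected graph on `n` vertices whose edges are assigned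
`s × s` real positive definite matrix weights, and let `L` be its matrix-weighted Laplacian
formed from the inverses of the weights. Then `rank L = (n-1)s`. -/
theorem rank_matLap_of_connected_posDef {n s : ℕ}
    (G : SimpleGraph (Fin n)) [DecidableRel G.Adj] (hG : G.Connected)
    (w : Sym2 (Fin n) → Matrix (Fin s) (Fin s) ℝ)
    (hw : ∀ e ∈ G.edgeSet, (w e).PosDef) :
    (matLap G w).rank = (n - 1) * s := by
  have hne : Nonempty (Fin n) := hG.nonempty
  obtain ⟨i0⟩ := hne
  -- the inverse weights on edges are positive definite
  have hinv : ∀ i k : Fin n, G.Adj i k → ((w (s(i, k)))⁻¹).PosDef := by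
    intro i k h
    exact (hw _ (G.mem_edgeSet.mpr h)).inv
  -- kernel = range of constLin
  have hker : LinearMap.ker (matLap G w).mulVecLin = LinearMap.range (constLin n s) := by
    ext x
    constructor
    · intro hx
      have hx0 : (matLap G w).mulVec x = 0 := hx
      -- the quadratic form vanishes
      have hQ : x ⬝ᵥ ((matLap G w).mulVec x) = 0 := by rw [hx0, dotProduct_zero]
      -- sum over ordered adjacent pairs of the symmetrized nonnegative terms is zero
      set T : Fin n → Fin n → ℝ := fun i k =>
        (fun a => x (i, a)) ⬝ᵥ ((w (s(i, k)))⁻¹ *ᵥ fun b => x (i, b) - x (k, b)) with hT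
      have hsum : ∑ i : Fin n, ∑ k ∈ G.neighborFinset i, (T i k + T k i) = 0 := by
        have h1 : ∑ i : Fin n, ∑ k ∈ G.neighborFinset i, T i k = 0 := by
          rw [← matLap_quadForm G w x]; exact hQ
        have h2 : ∑ i : Fin n, ∑ k ∈ G.neighborFinset i, T k i = 0 := by
          rw [← nb_sum_swap G T]; exact h1
        simp only [Finset.sum_add_distrib, h1, h2, add_zero]
      -- symmetrized term is the pd quadratic form of the difference
      have hkey : ∀ i k : Fin n, G.Adj i k → T i k + T k i
          = (fun b => x (i, b) - x (k, b)) ⬝ᵥ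
              ((w (s(i, k)))⁻¹ *ᵥ fun b => x (i, b) - x (k, b)) := by
        intro i k h
        have hsw : (s(k, i) : Sym2 (Fin n)) = s(i, k) := Sym2.eq_swap
        have hd : (fun b => x (k, b) - x (i, b)) = -(fun b => x (i, b) - x (k, b)) := by
          funext b; simp
        simp only [hT, hsw, hd, Matrix.mulVec_neg, dotProduct_neg]
        have he : (fun b => x (i, b) - x (k, b))
            = (fun b => x (i, b)) - (fun b => x (k, b)) := rfl
        rw [he, sub_dotProduct]
        ring
      -- each symmetrized term is nonnegative, hence zero, hence the difference is zero
      have hzero : ∀ i k : Fin n, G.Adj i k → ∀ b, x (i, b) = x (k, b) := by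
        intro i k hik
        have hnn : ∀ i ∈ (Finset.univ : Finset (Fin n)),
            0 ≤ ∑ k ∈ G.neighborFinset i, (T i k + T k i) := by
          intro i _
          refine Finset.sum_nonneg fun k hk => ?_
          have hadj := (SimpleGraph.mem_neighborFinset G i k).mp hk
          rw [hkey i k hadj]
          by_cases hd : (fun b => x (i, b) - x (k, b)) = 0
          · rw [hd]; simp
          · have := (hinv i k hadj).dotProduct_mulVec_pos hd
            simp only [star_trivial] at this
            exact le_of_lt this
        have houter := (Finset.sum_eq_zero_iff_of_nonneg hnn).mp hsum i (Finset.mem_univ i)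
        have hnn2 : ∀ k ∈ G.neighborFinset i, 0 ≤ T i k + T k i := by
          intro k hk
          have hadj := (SimpleGraph.mem_neighborFinset G i k).mp hk
          rw [hkey i k hadj]
          by_cases hd : (fun b => x (i, b) - x (k, b)) = 0
          · rw [hd]; simp
          · have := (hinv i k hadj).dotProduct_mulVec_pos hd
            simp only [star_trivial] at this
            exact le_of_lt this
        have hterm := (Finset.sum_eq_zero_iff_of_nonneg hnn2).mp houter k
          ((SimpleGraph.mem_neighborFinset G i k).mpr hik)
        rw [hkey i k hik] at hterm
        by_contra hcon
        push_neg at hcon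
        obtain ⟨b, hb⟩ := hcon
        have hd : (fun b => x (i, b) - x (k, b)) ≠ 0 := by
          intro h0
          exact hb (by have := congrFun h0 b; simpa [sub_eq_zero] using this)
        have := (hinv i k hik).dotProduct_mulVec_pos hd
        simp only [star_trivial] at this
        rw [hterm] at this
        exact lt_irrefl 0 this
      -- by connectivity, x is blockwise constant
      have hwalk : ∀ {i j : Fin n}, G.Walk i j → ∀ b, x (i, b) = x (j, b) := by
        intro i j p
        induction p with
        | nil => intro b; rfl
        | cons h _ ih => intro b; exact (hzero _ _ h b).trans (ih b)
      have hall : ∀ i j : Fin n, ∀ b, x (i, b) = x (j, b) := by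
        intro i j
        obtain ⟨p⟩ := hG.preconnected i j
        exact hwalk p
      exact ⟨fun b => x (i0, b), funext fun p =>
        (hall i0 p.1 p.2).trans (congrArg x rfl)⟩
    · rintro ⟨c, rfl⟩
      have : (matLap G w).mulVec (constLin n s c) = 0 := by
        funext p
        obtain ⟨i, a⟩ := p
        rw [matLap_mulVec' G w _ i a]
        refine Finset.sum_eq_zero fun k _ => ?_
        have h0 : (fun b => constLin n s c (i, b) - constLin n s c (k, b))
            = (0 : Fin s → ℝ) := by
          funext b; simp [constLin]
        rw [h0, Matrix.mulVec_zero]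
        rfl
      exact this
  -- constLin is injective
  have hinj : Function.Injective (constLin n s) := by
    intro c c' h
    funext b
    exact congrFun h (i0, b)
  -- dimension count
  have hkerdim : Module.finrank ℝ (LinearMap.ker (matLap G w).mulVecLin) = s := by
    rw [hker, LinearMap.finrank_range_of_inj hinj, Module.finrank_fintype_fun_eq_card,
      Fintype.card_fin]
  have hrn := LinearMap.finrank_range_add_finrank_ker (matLap G w).mulVecLin
  rw [hkerdim, Module.finrank_fintype_fun_eq_card, Fintype.card_prod, Fintype.card_fin,
    Fintype.card_fin] at hrn
  have hrank : (matLap G w).rank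
      = Module.finrank ℝ (LinearMap.range (matLap G w).mulVecLin) := rfl
  have hn : 0 < n := i0.pos
  rw [hrank, Nat.sub_mul, one_mul]
  omega
end

section
/- Let T be a tree on n vertices whose edges are assigned s×s real invertible (nonsingular) matrix weights, and let L be its Laplacian matrix formed from the inverses of the weights. Then the rank of L equals (n−1)s. -/
open Matrix

namespace RankMatLapAux

open Finset SimpleGraph

variable {n s : ℕ}

/-- Incidence sign of an oriented edge. -/
noncomputable def inc (e : Sym2 (Fin n)) (v : Fin n) : ℝ :=
  if v = e.out.1 then 1 else if v = e.out.2 then -1 else 0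

lemma mk_out (e : Sym2 (Fin n)) : s(e.out.1, e.out.2) = e := by
  rw [Sym2.mk, Prod.mk.eta, e.out_eq]

lemma inc_eq_zero_of_not_mem {e : Sym2 (Fin n)} {v : Fin n} (h : v ∉ e) : inc e v = 0 := by
  rw [← mk_out e, Sym2.mem_iff] at h
  push_neg at h
  simp [inc, h.1, h.2]

variable (G : SimpleGraph (Fin n)) [DecidableRel G.Adj]

lemma adj_out {e : Sym2 (Fin n)} (he : e ∈ G.edgeSet) : G.Adj e.out.1 e.out.2 := by
  rwa [← SimpleGraph.mem_edgeSet, mk_out]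

lemma out_ne {e : Sym2 (Fin n)} (he : e ∈ G.edgeSet) : e.out.1 ≠ e.out.2 :=
  (adj_out G he).ne

lemma inc_sq {e : Sym2 (Fin n)} (he : e ∈ G.edgeSet) (v : Fin n) :
    inc e v * inc e v = if v ∈ e then 1 else 0 := by
  have hne := out_ne G he
  by_cases h1 : v = e.out.1
  · subst h1; simp [inc, Sym2.out_fst_mem]
  · by_cases h2 : v = e.out.2
    · subst h2; simp [inc, hne.symm, Sym2.out_snd_mem]
    · have hnm : v ∉ e := by
        rw [← mk_out e, Sym2.mem_iff]; tauto
      simp [inc, h1, h2, hnm]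

lemma inc_mul_of_eq {u v : Fin n} (huv : G.Adj u v) :
    inc s(u, v) u * inc s(u, v) v = -1 := by
  have he : s(u, v) ∈ G.edgeSet := huv
  have hne := out_ne G he
  have h := mk_out s(u, v)
  rcases Sym2.eq_iff.mp h with ⟨h1, h2⟩ | ⟨h1, h2⟩
  · simp only [inc]
    rw [if_pos h1.symm, if_neg (fun hv => huv.ne.symm (hv.trans h1)), if_pos h2.symm]
    ring
  · simp only [inc]
    rw [if_neg (fun hu => huv.ne (hu.trans h1)), if_pos h2.symm, if_pos h1.symm]
    ring

lemma inc_mul_of_ne {e : Sym2 (Fin n)} {u v : Fin n} (huv : u ≠ v) (hne : e ≠ s(u, v)) :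
    inc e u * inc e v = 0 := by
  by_cases hu : u ∈ e
  · by_cases hv : v ∈ e
    · exact absurd ((Sym2.mem_and_mem_iff huv).mp ⟨hu, hv⟩) hne
    · rw [inc_eq_zero_of_not_mem hv, mul_zero]
  · rw [inc_eq_zero_of_not_mem hu, zero_mul]

/-- The (tensored) incidence matrix. -/
noncomputable def Bmat : Matrix (Fin s × {e // e ∈ G.edgeFinset}) (Fin n × Fin s) ℝ :=
  Matrix.of fun ke vl => inc ke.2.1 vl.1 * (if ke.1 = vl.2 then 1 else 0)

/-- Block diagonal matrix of inverted weights. -/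
noncomputable def Dmat (w : Sym2 (Fin n) → Matrix (Fin s) (Fin s) ℝ) :
    Matrix (Fin s × {e // e ∈ G.edgeFinset}) (Fin s × {e // e ∈ G.edgeFinset}) ℝ :=
  Matrix.blockDiagonal fun e : {e // e ∈ G.edgeFinset} => (w e.1)⁻¹

lemma DB_entry (w : Sym2 (Fin n) → Matrix (Fin s) (Fin s) ℝ)
    (k : Fin s) (e : {e // e ∈ G.edgeFinset}) (u : Fin n) (m : Fin s) :
    (Dmat G w * Bmat G (s := s)) (k, e) (u, m) = ((w e.1)⁻¹) k m * inc e.1 u := by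
  simp only [mul_apply, Dmat, Matrix.blockDiagonal_apply, Bmat, Matrix.of_apply,
    Fintype.sum_prod_type, ite_mul, mul_ite, zero_mul, mul_zero, mul_one,
    Fintype.sum_ite_eq, Fintype.sum_ite_eq']
  rw [Finset.sum_comm]
  simp only [Fintype.sum_ite_eq, Fintype.sum_ite_eq']

lemma entry_eq (w : Sym2 (Fin n) → Matrix (Fin s) (Fin s) ℝ) (v u : Fin n) (l m : Fin s) :
    ((Bmat G (s := s))ᵀ * (Dmat G w * Bmat G (s := s))) (v, l) (u, m)
      = ∑ e : {e // e ∈ G.edgeFinset}, inc e.1 v * inc e.1 u * ((w e.1)⁻¹) l m := by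
  rw [mul_apply, Fintype.sum_prod_type_right]
  refine Finset.sum_congr rfl fun e _ => ?_
  have : ∀ k : Fin s, (Bmat G (s := s))ᵀ (v, l) (k, e) * (Dmat G w * Bmat G (s := s)) (k, e) (u, m)
      = if k = l then inc e.1 v * (((w e.1)⁻¹) k m * inc e.1 u) else 0 := by
    intro k
    rw [DB_entry, transpose_apply]
    simp only [Bmat, Matrix.of_apply]
    by_cases hk : k = l
    · rw [if_pos hk, if_pos hk, mul_one]
    · rw [if_neg hk, if_neg hk, mul_zero, zero_mul]
  rw [Finset.sum_congr rfl fun k _ => this k, Finset.sum_ite_eq' Finset.univ l]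
  simp only [Finset.mem_univ, if_true]
  ring

lemma sum_incident (v : Fin n) (f : Sym2 (Fin n) → ℝ) :
    (∑ e : {e // e ∈ G.edgeFinset}, if v ∈ e.1 then f e.1 else 0)
      = ∑ k ∈ G.neighborFinset v, f s(v, k) := by
  rw [← Finset.sum_subtype G.edgeFinset (fun _ => Iff.rfl) (fun e => if v ∈ e then f e else 0),
    ← Finset.sum_filter]
  rw [show {e ∈ G.edgeFinset | v ∈ e} = G.incidenceFinset v from
    (G.incidenceFinset_eq_filter v).symm]
  have himg : G.incidenceFinset v = (G.neighborFinset v).image (fun k => s(v, k)) := by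
    ext e
    simp only [mem_incidenceFinset, Finset.mem_image, mem_neighborFinset]
    constructor
    · rintro ⟨he, hv⟩
      refine ⟨Sym2.Mem.other hv, ?_, Sym2.other_spec hv⟩
      rwa [← SimpleGraph.mem_edgeSet, Sym2.other_spec hv]
    · rintro ⟨k, hk, rfl⟩
      exact ⟨hk, Sym2.mem_mk_left v k⟩
  rw [himg, Finset.sum_image]
  intro a _ b _ hab
  exact (Sym2.congr_right).mp hab

lemma decomp (w : Sym2 (Fin n) → Matrix (Fin s) (Fin s) ℝ) :
    matLap G w = (Bmat G (s := s))ᵀ * (Dmat G w * Bmat G (s := s)) := by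
  ext ⟨v, l⟩ ⟨u, m⟩
  rw [entry_eq]
  simp only [matLap, Matrix.of_apply]
  by_cases hvu : v = u
  · subst hvu
    rw [if_pos rfl]
    have h1 : ∀ e : {e // e ∈ G.edgeFinset}, inc e.1 v * inc e.1 v * ((w e.1)⁻¹) l m
        = if v ∈ e.1 then ((w e.1)⁻¹) l m else 0 := by
      intro e
      rw [inc_sq G (mem_edgeFinset.mp e.2)]
      split <;> simp
    rw [Finset.sum_congr rfl fun e _ => h1 e,
      sum_incident G v (fun e => ((w e)⁻¹) l m), Matrix.sum_apply]
  · rw [if_neg hvu]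
    by_cases hadj : G.Adj v u
    · rw [if_pos hadj]
      have hmem : s(v, u) ∈ G.edgeFinset := mem_edgeFinset.mpr hadj
      rw [Finset.sum_eq_single (⟨s(v, u), hmem⟩ : {e // e ∈ G.edgeFinset})]
      · rw [inc_mul_of_eq G hadj]
        simp
      · intro e _ hne
        rw [inc_mul_of_ne hvu (fun h => hne (Subtype.ext h)), zero_mul]
      · intro h; exact absurd (Finset.mem_univ _) h
    · rw [if_neg hadj]
      rw [Finset.sum_eq_zero]
      intro e _
      have hne : e.1 ≠ s(v, u) := by
        intro h
        exact hadj ((SimpleGraph.mem_edgeSet G).mp (h ▸ mem_edgeFinset.mp e.2))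
      rw [inc_mul_of_ne hvu hne, zero_mul]

lemma rank_mul_of_inj {l m k : Type*} [Fintype l] [Fintype m] [Fintype k]
    (A : Matrix l m ℝ) (M : Matrix m k ℝ) (h : Function.Injective A.mulVecLin) :
    (A * M).rank = M.rank := by
  rw [Matrix.rank, Matrix.rank, Matrix.mulVecLin_mul, LinearMap.range_comp]
  exact (Submodule.equivMapOfInjective _ h _).finrank_eq.symm

/-- The rows of the tree incidence matrix are linearly independent. -/
lemma Bt_inj (hT : G.IsTree) : Function.Injective (Bmat G (s := s))ᵀ.mulVecLin := by
  classical
  rw [← LinearMap.ker_eq_bot, LinearMap.ker_eq_bot']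
  intro x hx
  funext ⟨l0, e0⟩
  have hx' : ∀ v l, (∑ e : {e // e ∈ G.edgeFinset}, inc e.1 v * x (l, e)) = 0 := by
    intro v l
    have h0 := congrFun hx (v, l)
    simp only [mulVecLin_apply, mulVec, dotProduct, transpose_apply, Bmat, Matrix.of_apply,
      Pi.zero_apply] at h0
    rw [Fintype.sum_prod_type_right] at h0
    have h1 : ∀ e : {e // e ∈ G.edgeFinset}, ∀ k : Fin s,
        inc e.1 v * (if k = l then (1:ℝ) else 0) * x (k, e)
          = if k = l then inc e.1 v * x (k, e) else 0 := by
      intro e k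
      by_cases hk : k = l
      · rw [if_pos hk, if_pos hk, mul_one]
      · rw [if_neg hk, if_neg hk, mul_zero, zero_mul]
    rw [Finset.sum_congr rfl fun e _ => Finset.sum_congr rfl fun k _ => h1 e k] at h0
    simpa only [Finset.sum_ite_eq' Finset.univ l, Finset.mem_univ, if_true] using h0
  set a := e0.1.out.1 with ha
  set b := e0.1.out.2 with hb
  have he0 : e0.1 ∈ G.edgeSet := mem_edgeFinset.mp e0.2
  set Gd := G.deleteEdges {e0.1} with hGd
  set y : Fin n → ℝ := fun v => if Gd.Reachable v a then 1 else 0 with hy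
  have key : ∀ e : {e // e ∈ G.edgeFinset},
      (∑ v, y v * inc e.1 v) = y e.1.out.1 - y e.1.out.2 := by
    intro e
    have hne := out_ne G (mem_edgeFinset.mp e.2)
    have hsplit : ∀ v, y v * inc e.1 v
        = (if v = e.1.out.1 then y v else 0) + (if v = e.1.out.2 then -(y v) else 0) := by
      intro v
      simp only [inc]
      by_cases h1 : v = e.1.out.1
      · rw [if_pos h1, if_pos h1, if_neg (h1 ▸ hne), mul_one, add_zero]
      · rw [if_neg h1, if_neg h1]
        by_cases h2 : v = e.1.out.2
        · rw [if_pos h2, if_pos h2]; ring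
        · rw [if_neg h2, if_neg h2, mul_zero, add_zero]
    rw [Finset.sum_congr rfl fun v _ => hsplit v, Finset.sum_add_distrib,
      Finset.sum_ite_eq' Finset.univ, Finset.sum_ite_eq' Finset.univ]
    simp [sub_eq_add_neg]
  have hbridge : ¬ Gd.Reachable b a := by
    have hbr : G.IsBridge s(a, b) :=
      (SimpleGraph.isAcyclic_iff_forall_adj_isBridge.mp hT.2) (adj_out G he0)
    rw [SimpleGraph.isBridge_iff] at hbr
    intro hr
    apply hbr
    have hGd' : Gd = G.deleteEdges {s(a, b)} := by
      rw [hGd, ha, hb, mk_out]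
    exact hGd' ▸ hr.symm
  have hce0 : y a - y b = 1 := by
    have h1 : y a = 1 := if_pos (SimpleGraph.Reachable.refl a)
    have h2 : y b = 0 := if_neg hbridge
    rw [h1, h2, sub_zero]
  have hce : ∀ e : {e // e ∈ G.edgeFinset}, e ≠ e0 → y e.1.out.1 - y e.1.out.2 = 0 := by
    intro e hne
    have hadj : Gd.Adj e.1.out.1 e.1.out.2 := by
      rw [hGd, SimpleGraph.deleteEdges_adj]
      refine ⟨adj_out G (mem_edgeFinset.mp e.2), ?_⟩
      rw [mk_out, Set.mem_singleton_iff]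
      exact fun h => hne (Subtype.ext h)
    have hiff : Gd.Reachable e.1.out.1 a ↔ Gd.Reachable e.1.out.2 a :=
      ⟨fun h => hadj.symm.reachable.trans h, fun h => hadj.reachable.trans h⟩
    by_cases hr : Gd.Reachable e.1.out.1 a
    · have hr2 := hiff.mp hr
      show (if Gd.Reachable e.1.out.1 a then (1:ℝ) else 0)
          - (if Gd.Reachable e.1.out.2 a then (1:ℝ) else 0) = 0
      rw [if_pos hr, if_pos hr2, sub_self]
    · have hr2 : ¬ Gd.Reachable e.1.out.2 a := fun h => hr (hiff.mpr h)
      show (if Gd.Reachable e.1.out.1 a then (1:ℝ) else 0)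
          - (if Gd.Reachable e.1.out.2 a then (1:ℝ) else 0) = 0
      rw [if_neg hr, if_neg hr2, sub_zero]
  have main : (∑ v, y v * (∑ e : {e // e ∈ G.edgeFinset}, inc e.1 v * x (l0, e)))
      = x (l0, e0) := by
    calc (∑ v, y v * ∑ e : {e // e ∈ G.edgeFinset}, inc e.1 v * x (l0, e))
        = ∑ e : {e // e ∈ G.edgeFinset}, (∑ v, y v * inc e.1 v) * x (l0, e) := by
          simp_rw [Finset.mul_sum, Finset.sum_mul]
          rw [Finset.sum_comm]
          refine Finset.sum_congr rfl fun e _ => Finset.sum_congr rfl fun v _ => by ring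
      _ = x (l0, e0) := by
          rw [Finset.sum_congr rfl fun e _ => by rw [key e]]
          rw [Finset.sum_eq_single e0]
          · rw [hce0, one_mul]
          · intro e _ hne; rw [hce e hne, zero_mul]
          · intro h; exact absurd (Finset.mem_univ _) h
  rw [← main, Finset.sum_congr rfl fun v _ => by rw [hx' v l0], Pi.zero_apply]
  simp

end RankMatLapAux

open RankMatLapAux in
/-- Let `T` be a tree on `n` vertices whose edges are assigned `s × s` real
invertible matrix weights, and let `L` be its Laplacian formed from the inverses of the
weights. Then `rank L = (n-1)s`. -/
theorem rank_matLap_of_tree_invertible {n s : ℕ}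
    (G : SimpleGraph (Fin n)) [DecidableRel G.Adj] (hT : G.IsTree)
    (w : Sym2 (Fin n) → Matrix (Fin s) (Fin s) ℝ)
    (hw : ∀ e ∈ G.edgeSet, IsUnit (w e)) :
    (matLap G w).rank = (n - 1) * s := by
  classical
  rw [decomp G w, rank_mul_of_inj _ _ (Bt_inj G hT)]
  have hD : IsUnit (Dmat G w).det := by
    rw [Dmat, Matrix.det_blockDiagonal, isUnit_iff_ne_zero, Finset.prod_ne_zero_iff]
    intro e _
    rw [Matrix.det_nonsing_inv]
    exact (isUnit_ringInverse.mpr ((Matrix.isUnit_iff_isUnit_det _).mp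
      (hw e.1 (SimpleGraph.mem_edgeFinset.mp e.2)))).ne_zero
  rw [Matrix.rank_mul_eq_right_of_isUnit_det _ _ hD, ← Matrix.rank_transpose, Matrix.rank,
    LinearMap.finrank_range_of_inj (Bt_inj G hT), Module.finrank_fintype_fun_eq_card,
    Fintype.card_prod, Fintype.card_coe, Fintype.card_fin]
  have hc := hT.card_edgeFinset
  rw [Fintype.card_fin] at hc
  have hc' : G.edgeFinset.card = n - 1 := by omega
  rw [hc', Nat.mul_comm]
end

section
/- Let G be a connected graph on n vertices and let s ≥ 1. Then G is a tree if and only if for every assignment of s×s real invertible matrix weights to the edges of G, the rank of the associated Laplacian matrix L (formed from the inverses of the weights) equals (n−1)s. -/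
open Matrix

namespace MatLapAux

open Finset

variable {n s : ℕ}

lemma sum_sum_antisymm {M : Type*} [AddCommGroup M] (D : SimpleGraph (Fin n)) [DecidableRel D.Adj]
    (A : Finset (Fin n)) (F : Fin n → Fin n → M)
    (hF : ∀ a b, D.Adj a b → F a b + F b a = 0) :
    ∑ a ∈ A, ∑ k ∈ (D.neighborFinset a).filter (· ∈ A), F a k = 0 := by
  classical
  have h1 : ∀ a, ∑ k ∈ (D.neighborFinset a).filter (· ∈ A), F a k
      = ∑ k ∈ A, if D.Adj a k then F a k else 0 := by
    intro a
    rw [show (D.neighborFinset a).filter (· ∈ A) = A.filter (fun k => D.Adj a k) by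
      ext k; simp [SimpleGraph.mem_neighborFinset, and_comm], Finset.sum_filter]
  simp_rw [h1]
  rw [← Finset.sum_product']
  apply Finset.sum_involution (fun p _ => p.swap)
  · intro p hp
    by_cases h : D.Adj p.1 p.2
    · simpa [h, h.symm] using hF _ _ h
    · have h' : ¬ D.Adj p.2 p.1 := fun hh => h hh.symm
      simp [h, h']
  · intro p hp hne
    by_cases h : D.Adj p.1 p.2
    · intro hsw
      exact h.ne' (congrArg Prod.fst hsw)
    · simp [h] at hne
  · intro p hp
    rfl
  · intro p hp
    simp only [Finset.mem_product] at hp ⊢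
    exact ⟨hp.2, hp.1⟩


/-- The unweighted graph Laplacian as a linear map. -/
noncomputable def glap (D : SimpleGraph (Fin n)) [DecidableRel D.Adj] :
    (Fin n → ℝ) →ₗ[ℝ] (Fin n → ℝ) where
  toFun y := fun i => ∑ k ∈ D.neighborFinset i, (y i - y k)
  map_add' a b := by
    funext i
    simp only [Pi.add_apply]
    rw [← Finset.sum_add_distrib]
    exact Finset.sum_congr rfl fun k _ => by ring
  map_smul' c a := by
    funext i
    simp only [RingHom.id_apply, Pi.smul_apply, smul_eq_mul, Finset.mul_sum]
    exact Finset.sum_congr rfl fun k _ => by ring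

lemma glap_apply (D : SimpleGraph (Fin n)) [DecidableRel D.Adj] (y : Fin n → ℝ) (i : Fin n) :
    glap D y i = ∑ k ∈ D.neighborFinset i, (y i - y k) := rfl

/-- Connectivity transfer for functions equal across edges. -/
lemma eq_of_reachable {α : Type*} {H : SimpleGraph (Fin n)} (f : Fin n → α)
    (h : ∀ a b, H.Adj a b → f a = f b) {a b : Fin n} (hr : H.Reachable a b) : f a = f b := by
  obtain ⟨p⟩ := hr
  induction p with
  | nil => rfl
  | cons h' p ih => exact (h _ _ h').trans ih


lemma adj_eq_of_energy_zero (D : SimpleGraph (Fin n)) [DecidableRel D.Adj] (y : Fin n → ℝ)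
    (h0 : ∑ i, y i * glap D y i = 0) : ∀ a b, D.Adj a b → y a = y b := by
  have hA := sum_sum_antisymm D Finset.univ
    (fun a b => y a * (y a - y b) - (y a - y b)^2/2) (by intro a b _; ring)
  have hfil : ∀ a : Fin n, (D.neighborFinset a).filter (· ∈ (Finset.univ : Finset (Fin n)))
      = D.neighborFinset a := fun a => Finset.filter_true_of_mem fun x _ => Finset.mem_univ x
  simp_rw [hfil, Finset.sum_sub_distrib, sub_eq_zero] at hA
  have hlhs : ∑ a : Fin n, ∑ k ∈ D.neighborFinset a, y a * (y a - y k) = 0 := by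
    rw [← h0]
    exact Finset.sum_congr rfl fun a _ => by rw [glap_apply, Finset.mul_sum]
  rw [hlhs] at hA
  have hz : ∀ a ∈ (Finset.univ : Finset (Fin n)), ∀ k ∈ D.neighborFinset a,
      (y a - y k)^2/2 = 0 := by
    have h1 := (Finset.sum_eq_zero_iff_of_nonneg (fun a _ => Finset.sum_nonneg
      (fun k _ => by positivity))).mp hA.symm
    intro a ha k hk
    exact (Finset.sum_eq_zero_iff_of_nonneg (fun k _ => by positivity)).mp (h1 a ha) k hk
  intro a b hab
  have := hz a (Finset.mem_univ a) b ((SimpleGraph.mem_neighborFinset _ _ _).mpr hab)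
  have h2 : (y a - y b)^2 = 0 := by linarith
  have := pow_eq_zero_iff (n := 2) (by norm_num) |>.mp h2
  linarith [this]


/-- Deleting a non-bridge edge preserves connectivity. -/
lemma connected_delete (G : SimpleGraph (Fin n)) (hG : G.Connected) {u v : Fin n}
    (hr : (G \ SimpleGraph.fromEdgeSet {s(u, v)}).Reachable u v) :
    (G \ SimpleGraph.fromEdgeSet {s(u, v)}).Connected := by
  set D := G \ SimpleGraph.fromEdgeSet {s(u, v)} with hD
  have hpre : D.Preconnected := by
    intro a b
    obtain ⟨p⟩ := hG.preconnected a b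
    induction p with
    | nil => exact SimpleGraph.Reachable.refl _
    | @cons a c b h p ih =>
      refine SimpleGraph.Reachable.trans ?_ ih
      by_cases he : s(a, c) = s(u, v)
      · rcases Sym2.eq_iff.mp he with ⟨rfl, rfl⟩ | ⟨rfl, rfl⟩
        · exact hr
        · exact hr.symm
      · refine SimpleGraph.Adj.reachable ?_
        rw [hD, SimpleGraph.sdiff_adj]
        refine ⟨h, ?_⟩
        rw [SimpleGraph.fromEdgeSet_adj]
        rintro ⟨hmem, -⟩
        exact he (by simpa using hmem)
  haveI := hG.nonempty
  exact SimpleGraph.Connected.mk hpre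

/-- the all-ones sum functional -/
noncomputable def sumL : (Fin n → ℝ) →ₗ[ℝ] ℝ where
  toFun y := ∑ i, y i
  map_add' a b := by simp [Finset.sum_add_distrib]
  map_smul' c a := by simp [Finset.mul_sum]

/-- For a connected graph, the range of the Laplacian is the zero-sum hyperplane. -/
lemma range_glap (D : SimpleGraph (Fin n)) [DecidableRel D.Adj] (hD : D.Connected)
    (hn : 0 < n) :
    LinearMap.range (glap D) = LinearMap.ker (sumL (n := n)) := by
  classical
  have hle : LinearMap.range (glap D) ≤ LinearMap.ker (sumL (n := n)) := by
    rintro z ⟨y, rfl⟩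
    rw [LinearMap.mem_ker]
    show ∑ i, glap D y i = 0
    have := sum_sum_antisymm D Finset.univ (fun a b => y a - y b) (fun a b _ => by ring)
    simp_rw [Finset.filter_true_of_mem (fun x _ => Finset.mem_univ x)] at this
    rw [← this]
    exact Finset.sum_congr rfl fun a _ => (glap_apply D y a)
  -- kernel of glap is the constants
  have hkerg : LinearMap.ker (glap D)
      = LinearMap.range (LinearMap.funLeft ℝ ℝ (fun _ : Fin n => (0 : Fin 1))) := by
    apply le_antisymm
    · intro y hy
      rw [LinearMap.mem_ker] at hy
      refine ⟨fun _ => y ⟨0, hn⟩, ?_⟩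
      funext a
      have h0 : ∑ i, y i * glap D y i = 0 := by rw [hy]; simp
      have hadj := adj_eq_of_energy_zero D y h0
      exact (eq_of_reachable y hadj (hD.preconnected ⟨0, hn⟩ a)).symm ▸ rfl
    · rintro y ⟨c, rfl⟩
      rw [LinearMap.mem_ker]
      funext i
      rw [glap_apply]
      exact Finset.sum_eq_zero fun k _ => sub_self _
  have hkd : Module.finrank ℝ (LinearMap.ker (glap D)) = 1 := by
    rw [hkerg, LinearMap.finrank_range_of_inj
      (LinearMap.funLeft_injective_of_surjective ℝ ℝ _ (fun i => ⟨⟨0, hn⟩, by simp [Fin.eq_zero]⟩))]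
    simp [Module.finrank_pi]
  have hrg : Module.finrank ℝ (LinearMap.range (glap D)) = n - 1 := by
    have := LinearMap.finrank_range_add_finrank_ker (glap D)
    rw [hkd, Module.finrank_pi] at this
    simp at this
    omega
  have hsurj : Function.Surjective (sumL (n := n)) := by
    intro c
    refine ⟨fun a => if a = ⟨0, hn⟩ then c else 0, ?_⟩
    simp [sumL, Finset.sum_ite_eq']
  have hks : Module.finrank ℝ (LinearMap.ker (sumL (n := n))) = n - 1 := by
    have := LinearMap.finrank_range_add_finrank_ker (sumL (n := n))
    rw [LinearMap.range_eq_top.mpr hsurj] at this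
    simp [Module.finrank_pi] at this
    omega
  exact Submodule.eq_of_le_of_finrank_eq hle (by rw [hrg, hks])


lemma matLap_mulVec (G : SimpleGraph (Fin n)) [DecidableRel G.Adj]
    (w : Sym2 (Fin n) → Matrix (Fin s) (Fin s) ℝ) (x : Fin n × Fin s → ℝ) (i : Fin n) (σ : Fin s) :
    (matLap G w).mulVec x (i, σ)
      = ∑ k ∈ G.neighborFinset i, ∑ τ, (w (s(i, k)))⁻¹ σ τ * (x (i, τ) - x (k, τ)) := by
  classical
  have hsplit : ∀ (j : Fin n) (τ : Fin s), matLap G w (i,σ) (j,τ) * x (j,τ) =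
      (if j = i then (∑ k ∈ G.neighborFinset i, (w (s(i,k)))⁻¹) σ τ * x (j,τ) else 0)
      + (if G.Adj i j then -((w (s(i,j)))⁻¹ σ τ) * x (j,τ) else 0) := by
    intro j τ
    simp only [matLap, Matrix.of_apply]
    by_cases h : i = j
    · subst h
      simp [G.irrefl]
    · simp [h, Ne.symm h, Matrix.neg_apply]
  have : (matLap G w).mulVec x (i, σ) = ∑ j : Fin n, ∑ τ : Fin s, matLap G w (i,σ) (j,τ) * x (j,τ) := by
    rw [Matrix.mulVec, dotProduct, Fintype.sum_prod_type]
  rw [this]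
  simp_rw [hsplit, Finset.sum_add_distrib]
  have h1 : ∑ j : Fin n, ∑ τ : Fin s,
      (if j = i then (∑ k ∈ G.neighborFinset i, (w (s(i,k)))⁻¹) σ τ * x (j,τ) else 0)
      = ∑ k ∈ G.neighborFinset i, ∑ τ : Fin s, (w (s(i,k)))⁻¹ σ τ * x (i,τ) := by
    rw [Finset.sum_eq_single_of_mem i (Finset.mem_univ i)]
    · simp only [if_pos rfl]
      rw [Finset.sum_comm]
      exact Finset.sum_congr rfl fun τ _ => by
        rw [Matrix.sum_apply, Finset.sum_mul]
        simp
    · intro j _ hj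
      simp [hj]
  have h2 : ∑ j : Fin n, ∑ τ : Fin s,
      (if G.Adj i j then -((w (s(i,j)))⁻¹ σ τ) * x (j,τ) else 0)
      = ∑ k ∈ G.neighborFinset i, ∑ τ : Fin s, -((w (s(i,k)))⁻¹ σ τ * x (k,τ)) := by
    rw [SimpleGraph.neighborFinset_eq_filter, Finset.sum_filter]
    exact Finset.sum_congr rfl fun j _ => by
      by_cases h : G.Adj i j <;> simp [h]
  rw [h1, h2, ← Finset.sum_add_distrib]
  exact Finset.sum_congr rfl fun k _ => by
    rw [← Finset.sum_add_distrib]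
    exact Finset.sum_congr rfl fun τ _ => by ring


lemma tree_kernel_adj (G : SimpleGraph (Fin n)) [DecidableRel G.Adj]
    (w : Sym2 (Fin n) → Matrix (Fin s) (Fin s) ℝ)
    (hT : G.IsTree) (hw : ∀ e ∈ G.edgeSet, IsUnit (w e))
    (x : Fin n × Fin s → ℝ) (hx : (matLap G w).mulVec x = 0)
    {i j : Fin n} (hadj : G.Adj i j) : ∀ τ, x (i, τ) = x (j, τ) := by
  classical
  set D := G \ SimpleGraph.fromEdgeSet {s(i, j)} with hD
  have hbridge : G.IsBridge (s(i, j)) :=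
    SimpleGraph.isAcyclic_iff_forall_adj_isBridge.mp hT.IsAcyclic hadj
  have hj : ¬ D.Reachable i j := SimpleGraph.isBridge_iff.mp hbridge
  set S : Finset (Fin n) := Finset.univ.filter (fun a => D.Reachable i a) with hS
  have hiS : i ∈ S := by
    simp only [hS, Finset.mem_filter, Finset.mem_univ, true_and]
    exact SimpleGraph.Reachable.refl i
  have hjS : j ∉ S := by simp [hS, hj]
  -- the key pair classification
  have hpair : ∀ a ∈ S, ∀ k, G.Adj a k → k ∉ S → a = i ∧ k = j := by
    intro a ha k hak hkS
    have hra : D.Reachable i a := by simpa [hS] using ha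
    by_cases he : s(a, k) = s(i, j)
    · rcases Sym2.eq_iff.mp he with ⟨rfl, rfl⟩ | ⟨rfl, rfl⟩
      · exact ⟨rfl, rfl⟩
      · exact absurd ha hjS
    · exfalso
      have hDak : D.Adj a k := by
        rw [hD, SimpleGraph.sdiff_adj]
        refine ⟨hak, ?_⟩
        rw [SimpleGraph.fromEdgeSet_adj]
        rintro ⟨hmem, -⟩
        exact he (by simpa using hmem)
      exact hkS (by simp [hS]; exact hra.trans hDak.reachable)
  -- per-coordinate flow value
  intro τ₀
  -- We prove the full vector difference is zero.
  suffices hvec : ∀ σ : Fin s,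
      (∑ τ, (w (s(i, j)))⁻¹ σ τ * (x (i, τ) - x (j, τ))) = 0 by
    have hu : IsUnit (w (s(i, j))) := hw _ ((SimpleGraph.mem_edgeSet G).mpr hadj)
    have hdet : IsUnit (w (s(i, j))).det := (Matrix.isUnit_iff_isUnit_det _).mp hu
    set d : Fin s → ℝ := fun τ => x (i, τ) - x (j, τ) with hd
    have hmv : (w (s(i, j)))⁻¹.mulVec d = 0 := funext fun σ => hvec σ
    have : d = 0 := by
      have h1 : (w (s(i, j))).mulVec ((w (s(i, j)))⁻¹.mulVec d) = d := by
        rw [Matrix.mulVec_mulVec, Matrix.mul_nonsing_inv _ hdet, Matrix.one_mulVec]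
      rw [hmv, Matrix.mulVec_zero] at h1
      exact h1.symm
    have := congrFun this τ₀
    simpa [hd, sub_eq_zero] using this
  intro σ
  set F : Fin n → Fin n → ℝ :=
    fun a k => ∑ τ, (w (s(a, k)))⁻¹ σ τ * (x (a, τ) - x (k, τ)) with hF
  have hanti : ∀ a b, G.Adj a b → F a b + F b a = 0 := by
    intro a b _
    rw [hF]
    simp only
    rw [Sym2.eq_swap (a := b) (b := a), ← Finset.sum_add_distrib]
    exact Finset.sum_eq_zero fun τ _ => by ring
  have hzero : ∀ a, ∑ k ∈ G.neighborFinset a, F a k = 0 := by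
    intro a
    have := congrFun hx (a, σ)
    rw [matLap_mulVec] at this
    simpa using this
  have hsumS : ∑ a ∈ S, ∑ k ∈ G.neighborFinset a, F a k = 0 :=
    Finset.sum_eq_zero fun a _ => hzero a
  rw [show (fun a => ∑ k ∈ G.neighborFinset a, F a k)
      = fun a => (∑ k ∈ (G.neighborFinset a).filter (· ∈ S), F a k)
        + (∑ k ∈ (G.neighborFinset a).filter (¬ · ∈ S), F a k) from
      funext fun a => (Finset.sum_filter_add_sum_filter_not _ _ _).symm] at hsumS
  rw [Finset.sum_add_distrib, sum_sum_antisymm G S F hanti, zero_add] at hsumS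
  -- now hsumS : ∑ a ∈ S, ∑ k ∈ filter (∉ S) (N a), F a k = 0
  have houter : ∑ a ∈ S, ∑ k ∈ (G.neighborFinset a).filter (¬ · ∈ S), F a k
      = ∑ k ∈ (G.neighborFinset i).filter (¬ · ∈ S), F i k := by
    apply Finset.sum_eq_single_of_mem i hiS
    intro a ha hne
    have : (G.neighborFinset a).filter (¬ · ∈ S) = ∅ := by
      apply Finset.eq_empty_of_forall_notMem
      intro k hk
      rw [Finset.mem_filter, SimpleGraph.mem_neighborFinset] at hk
      exact hne (hpair a ha k hk.1 (by simpa using hk.2)).1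
    rw [this, Finset.sum_empty]
  have hsingle : (G.neighborFinset i).filter (¬ · ∈ S) = {j} := by
    ext k
    rw [Finset.mem_filter, SimpleGraph.mem_neighborFinset, Finset.mem_singleton]
    constructor
    · rintro ⟨h1, h2⟩
      exact (hpair i hiS k h1 (by simpa using h2)).2
    · rintro rfl
      exact ⟨hadj, by simpa using hjS⟩
  rw [houter, hsingle, Finset.sum_singleton] at hsumS
  exact hsumS


lemma tree_rank (G : SimpleGraph (Fin n)) [DecidableRel G.Adj]
    (w : Sym2 (Fin n) → Matrix (Fin s) (Fin s) ℝ)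
    (hT : G.IsTree) (hn : 0 < n) (hw : ∀ e ∈ G.edgeSet, IsUnit (w e)) :
    (matLap G w).rank = (n - 1) * s := by
  classical
  set L := matLap G w with hL
  set C : (Fin s → ℝ) →ₗ[ℝ] (Fin n × Fin s → ℝ) :=
    LinearMap.funLeft ℝ ℝ (Prod.snd : Fin n × Fin s → Fin s) with hC
  have hker : LinearMap.ker L.mulVecLin = LinearMap.range C := by
    apply le_antisymm
    · intro x hx
      rw [LinearMap.mem_ker, Matrix.mulVecLin_apply] at hx
      set i₀ : Fin n := ⟨0, hn⟩
      refine ⟨fun τ => x (i₀, τ), ?_⟩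
      funext p
      have hf : ∀ a b : Fin n, G.Adj a b → (fun τ => x (a, τ)) = (fun τ => x (b, τ)) :=
        fun a b hab => funext (tree_kernel_adj G w hT hw x hx hab)
      have := eq_of_reachable (fun a => (fun τ => x (a, τ))) hf
        (hT.isConnected.preconnected i₀ p.1)
      exact congrFun this p.2
    · rintro x ⟨c, rfl⟩
      rw [LinearMap.mem_ker, Matrix.mulVecLin_apply]
      funext p
      obtain ⟨i, σ⟩ := p
      rw [matLap_mulVec]
      have : ∀ a : Fin n, ∀ τ : Fin s, C c (a, τ) = c τ := fun a τ => rfl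
      simp [this]
  have hCinj : Function.Injective C :=
    LinearMap.funLeft_injective_of_surjective ℝ ℝ _
      (fun τ => ⟨(⟨0, hn⟩, τ), rfl⟩)
  have hkerrank : Module.finrank ℝ (LinearMap.ker L.mulVecLin) = s := by
    rw [hker, LinearMap.finrank_range_of_inj hCinj]
    simp [Module.finrank_pi]
  have hrn := LinearMap.finrank_range_add_finrank_ker L.mulVecLin
  rw [hkerrank] at hrn
  have hdom : Module.finrank ℝ (Fin n × Fin s → ℝ) = n * s := by
    simp [Module.finrank_pi]
  rw [hdom] at hrn
  have : L.rank = Module.finrank ℝ (LinearMap.range L.mulVecLin) := rfl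
  rw [this]
  have hns : (n - 1) * s + s = n * s := by
    cases n with
    | zero => omega
    | succ m => simp [Nat.succ_sub_one, Nat.succ_mul]
  omega


lemma not_tree_exists (G : SimpleGraph (Fin n)) [DecidableRel G.Adj]
    (hG : G.Connected) (hs : 1 ≤ s) (hna : ¬ G.IsAcyclic) :
    ∃ w : Sym2 (Fin n) → Matrix (Fin s) (Fin s) ℝ,
      (∀ e ∈ G.edgeSet, IsUnit (w e)) ∧ (matLap G w).rank ≠ (n - 1) * s := by
  classical
  rw [SimpleGraph.isAcyclic_iff_forall_adj_isBridge] at hna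
  push_neg at hna
  obtain ⟨u, v, hadj, hnb⟩ := hna
  set D := G \ SimpleGraph.fromEdgeSet {s(u, v)} with hDdef
  haveI : DecidableRel D.Adj := fun a b => Classical.dec _
  have hruv : D.Reachable u v := by
    by_contra h
    exact hnb (SimpleGraph.isBridge_iff.mpr h)
  have hDconn : D.Connected := connected_delete G hG hruv
  have hn : 0 < n := by
    obtain ⟨a⟩ := hG.nonempty
    exact a.pos
  have hune : u ≠ v := hadj.ne
  set r : Fin n → ℝ := fun a => (if a = u then (1:ℝ) else 0) - (if a = v then 1 else 0) with hrdef
  have hrker : r ∈ LinearMap.ker (sumL (n := n)) := by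
    rw [LinearMap.mem_ker]
    simp [sumL, hrdef, Finset.sum_sub_distrib, Finset.sum_ite_eq']
  obtain ⟨y, hy⟩ : ∃ y, glap D y = r := by
    rw [← range_glap D hDconn hn] at hrker
    exact hrker
  set d : ℝ := y u - y v with hddef
  have hru : r u = 1 := by simp [hrdef, hune]
  have hd : d ≠ 0 := by
    intro h0
    have henergy : ∑ i, y i * glap D y i = 0 := by
      rw [hy]
      have : ∀ i, y i * r i = (if i = u then y i else 0) - (if i = v then y i else 0) := by
        intro i
        by_cases h1 : i = u
        · subst h1; simp [hrdef, hune]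
        · by_cases h2 : i = v
          · subst h2
            simp [hrdef, Ne.symm hune]
          · simp [hrdef, h1, h2]
      simp_rw [this, Finset.sum_sub_distrib, Finset.sum_ite_eq']
      simpa using h0
    have hae := adj_eq_of_energy_zero D y henergy
    have : glap D y u = 0 := by
      rw [glap_apply]
      exact Finset.sum_eq_zero fun k hk =>
        sub_eq_zero.mpr (hae u k ((SimpleGraph.mem_neighborFinset _ _ _).mp hk))
    rw [hy] at this
    rw [hru] at this
    exact one_ne_zero this
  set t : ℝ := -d⁻¹ with htdef
  set c : Sym2 (Fin n) → ℝ := fun e => if e = s(u, v) then t else 1 with hcdef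
  have hc : ∀ e, c e ≠ 0 := by
    intro e
    rw [hcdef]
    by_cases h : e = s(u, v) <;> simp [h, htdef, inv_ne_zero hd]
  -- the scalar kernel identity
  have hscalar : ∀ i, ∑ k ∈ G.neighborFinset i, c (s(i, k)) * (y i - y k) = 0 := by
    intro i
    have hsplit := Finset.sum_filter_add_sum_filter_not (G.neighborFinset i)
      (fun k => s(i, k) = s(u, v)) (fun k => c (s(i, k)) * (y i - y k))
    have hB : ∑ k ∈ (G.neighborFinset i).filter (fun k => ¬ s(i, k) = s(u, v)),
        c (s(i, k)) * (y i - y k) = r i := by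
      have hDneigh : (G.neighborFinset i).filter (fun k => ¬ s(i, k) = s(u, v))
          = D.neighborFinset i := by
        ext k
        simp only [Finset.mem_filter, SimpleGraph.mem_neighborFinset, hDdef,
          SimpleGraph.sdiff_adj, SimpleGraph.fromEdgeSet_adj, Set.mem_singleton_iff]
        constructor
        · rintro ⟨h1, h2⟩
          exact ⟨h1, fun hh => h2 hh.1⟩
        · rintro ⟨h1, h2⟩
          exact ⟨h1, fun hh => h2 ⟨hh, h1.ne⟩⟩
      calc ∑ k ∈ (G.neighborFinset i).filter (fun k => ¬ s(i, k) = s(u, v)),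
          c (s(i, k)) * (y i - y k)
          = ∑ k ∈ (G.neighborFinset i).filter (fun k => ¬ s(i, k) = s(u, v)),
            (y i - y k) := by
            refine Finset.sum_congr rfl fun k hk => ?_
            have hne := (Finset.mem_filter.mp hk).2
            rw [hcdef]
            simp only [hne, if_false, one_mul]
        _ = ∑ k ∈ D.neighborFinset i, (y i - y k) := by rw [hDneigh]
        _ = r i := by rw [← glap_apply, hy]
    have hA : ∑ k ∈ (G.neighborFinset i).filter (fun k => s(i, k) = s(u, v)),
        c (s(i, k)) * (y i - y k) = - r i := by
      by_cases h1 : i = u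
      · subst h1
        have hfil : (G.neighborFinset i).filter (fun k => s(i, k) = s(i, v)) = {v} := by
          ext k
          simp only [Finset.mem_filter, SimpleGraph.mem_neighborFinset, Finset.mem_singleton]
          constructor
          · rintro ⟨h2, h3⟩
            rcases Sym2.eq_iff.mp h3 with ⟨-, h5⟩ | ⟨h4, h5⟩
            · exact h5
            · exact absurd h4 hune
          · rintro rfl
            exact ⟨hadj, rfl⟩
        rw [hfil, Finset.sum_singleton, hcdef]
        simp only [if_pos rfl, hru]
        rw [htdef, ← hddef]
        field_simp
        simp [hd]
      · by_cases h2 : i = v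
        · subst h2
          have hfil : (G.neighborFinset i).filter (fun k => s(i, k) = s(u, i)) = {u} := by
            ext k
            simp only [Finset.mem_filter, SimpleGraph.mem_neighborFinset, Finset.mem_singleton]
            constructor
            · rintro ⟨h3, h4⟩
              rcases Sym2.eq_iff.mp h4 with ⟨h5, h6⟩ | ⟨-, h6⟩
              · exact absurd h5 h1
              · exact h6
            · rintro rfl
              exact ⟨hadj.symm, Sym2.eq_swap⟩
          rw [hfil, Finset.sum_singleton, hcdef]
          simp only [Sym2.eq_swap, if_pos rfl]
          have hrv : r i = -1 := by simp [hrdef, Ne.symm hune]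
          rw [hrv, htdef]
          have : y i - y u = -d := by rw [hddef]; ring
          rw [this]
          field_simp
          simp [hd]
        · have hfil : (G.neighborFinset i).filter (fun k => s(i, k) = s(u, v)) = ∅ := by
            apply Finset.eq_empty_of_forall_notMem
            intro k hk
            rw [Finset.mem_filter] at hk
            rcases Sym2.eq_iff.mp hk.2 with ⟨h3, -⟩ | ⟨h3, -⟩
            · exact h1 h3
            · exact h2 h3
          have hri : r i = 0 := by simp [hrdef, h1, h2]
          rw [hfil, Finset.sum_empty, hri, neg_zero]
    rw [← hsplit, hA, hB]
    ring
  -- the matrix weights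
  set w : Sym2 (Fin n) → Matrix (Fin s) (Fin s) ℝ :=
    fun e => (c e)⁻¹ • (1 : Matrix (Fin s) (Fin s) ℝ) with hwdef
  have hwinv : ∀ e, (w e)⁻¹ = c e • (1 : Matrix (Fin s) (Fin s) ℝ) := by
    intro e
    apply Matrix.inv_eq_right_inv
    rw [hwdef]
    rw [Matrix.smul_mul, Matrix.mul_smul, one_mul, smul_smul, inv_mul_cancel₀ (hc e), one_smul]
  have hwu : ∀ e ∈ G.edgeSet, IsUnit (w e) := by
    intro e _
    rw [Matrix.isUnit_iff_isUnit_det, hwdef]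
    simp only [Matrix.det_smul, Matrix.det_one, mul_one]
    exact (isUnit_iff_ne_zero.mpr (pow_ne_zero _ (inv_ne_zero (hc e))))
  refine ⟨w, hwu, ?_⟩
  -- the 2s-dimensional kernel
  set Φ : ((Fin s → ℝ) × (Fin s → ℝ)) →ₗ[ℝ] (Fin n × Fin s → ℝ) :=
    { toFun := fun q => fun p => q.1 p.2 + y p.1 * q.2 p.2
      map_add' := fun a b => by funext p; simp; ring
      map_smul' := fun m a => by funext p; simp; ring } with hΦdef
  have hΦle : LinearMap.range Φ ≤ LinearMap.ker (matLap G w).mulVecLin := by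
    rintro x ⟨q, rfl⟩
    rw [LinearMap.mem_ker, Matrix.mulVecLin_apply]
    funext p
    obtain ⟨i, σ⟩ := p
    rw [matLap_mulVec]
    have hterm : ∀ k : Fin n, ∑ τ, (w (s(i, k)))⁻¹ σ τ * ((Φ q) (i, τ) - (Φ q) (k, τ))
        = c (s(i, k)) * (y i - y k) * q.2 σ := by
      intro k
      rw [hwinv]
      have : ∀ τ, (c (s(i, k)) • (1 : Matrix (Fin s) (Fin s) ℝ)) σ τ
          * ((Φ q) (i, τ) - (Φ q) (k, τ))
          = if σ = τ then c (s(i, k)) * ((Φ q) (i, τ) - (Φ q) (k, τ)) else 0 := by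
        intro τ
        rw [Matrix.smul_apply, Matrix.one_apply]
        by_cases h : σ = τ <;> simp [h]
      simp_rw [this, Finset.sum_ite_eq (Finset.univ : Finset (Fin s)) σ, if_pos (Finset.mem_univ σ)]
      have : (Φ q) (i, σ) - (Φ q) (k, σ) = (y i - y k) * q.2 σ := by
        show (q.1 σ + y i * q.2 σ) - (q.1 σ + y k * q.2 σ) = _
        ring
      rw [this]
      ring
    simp_rw [hterm]
    rw [← Finset.sum_mul, hscalar i, zero_mul]
    rfl
  have hΦinj : Function.Injective Φ := by
    rw [injective_iff_map_eq_zero]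
    intro q hq
    have h1 : ∀ σ, q.1 σ + y u * q.2 σ = 0 := fun σ => congrFun hq (u, σ)
    have h2 : ∀ σ, q.1 σ + y v * q.2 σ = 0 := fun σ => congrFun hq (v, σ)
    have hq2 : q.2 = 0 := by
      funext σ
      have : (y u - y v) * q.2 σ = 0 := by
        have := h1 σ
        have := h2 σ
        ring_nf
        linarith [h1 σ, h2 σ]
      rcases mul_eq_zero.mp this with h | h
      · exact absurd h hd
      · exact h
    have hq1 : q.1 = 0 := by
      funext σ
      have := h1 σ
      rw [hq2] at this
      simpa using this
    exact Prod.ext hq1 hq2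
  -- rank bound
  have hker2s : s + s ≤ Module.finrank ℝ (LinearMap.ker (matLap G w).mulVecLin) := by
    have h1 : Module.finrank ℝ (LinearMap.range Φ) = s + s := by
      rw [LinearMap.finrank_range_of_inj hΦinj]
      simp [Module.finrank_prod, Module.finrank_pi]
    calc s + s = Module.finrank ℝ (LinearMap.range Φ) := h1.symm
      _ ≤ _ := Submodule.finrank_mono hΦle
  have hrn := LinearMap.finrank_range_add_finrank_ker (matLap G w).mulVecLin
  have hdom : Module.finrank ℝ (Fin n × Fin s → ℝ) = n * s := by
    simp [Module.finrank_pi]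
  rw [hdom] at hrn
  have hrank : (matLap G w).rank = Module.finrank ℝ (LinearMap.range (matLap G w).mulVecLin) := rfl
  have hn2 : 2 ≤ n := by
    have h1 := u.isLt
    have h2 := v.isLt
    have h3 : u.val ≠ v.val := fun h => hune (Fin.ext h)
    omega
  intro heq
  rw [hrank] at heq
  have hns : (n - 1) * s + s = n * s := by
    cases n with
    | zero => omega
    | succ m => simp [Nat.succ_sub_one, Nat.succ_mul]
  set K := Module.finrank ℝ (LinearMap.ker (matLap G w).mulVecLin)
  set R := Module.finrank ℝ (LinearMap.range (matLap G w).mulVecLin)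
  set a := (n - 1) * s
  set b := n * s
  clear_value K R a b
  omega

end MatLapAux

/-- Let `G` be a connected graph on `n` vertices and let `s ≥ 1`. Then `G` is a
tree if and only if for every assignment of `s × s` real invertible matrix weights to the
edges of `G`, the rank of the associated Laplacian (formed from the inverses of the weights)
equals `(n-1)s`. -/
theorem isTree_iff_forall_weights_rank_eq {n s : ℕ}
    (G : SimpleGraph (Fin n)) [DecidableRel G.Adj] (hG : G.Connected) (hs : 1 ≤ s) :
    G.IsTree ↔
      ∀ w : Sym2 (Fin n) → Matrix (Fin s) (Fin s) ℝ,
        (∀ e ∈ G.edgeSet, IsUnit (w e)) → (matLap G w).rank = (n - 1) * s := by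
  constructor
  · intro hT w hw
    refine MatLapAux.tree_rank G w hT ?_ hw
    obtain ⟨a⟩ := hG.nonempty
    exact a.pos
  · intro hall
    by_contra hnT
    have hna : ¬ G.IsAcyclic := fun h => hnT ⟨hG, h⟩
    obtain ⟨w, hw, hne⟩ := MatLapAux.not_tree_exists G hG hs hna
    exact hne (hall w hw)
end

section
/- Let T be a tree on n vertices whose edges e_1,…,e_{n−1} are assigned s×s real matrix weights W_1,…,W_{n−1}, and let D be its distance matrix. Then det D = (−1)^{(n−1)s} · 2^{(n−2)s} · det(∏_{i=1}^{n−1} W_i) · det(∑_{i=1}^{n−1} W_i). -/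
open Matrix


namespace BapatAux
variable {n : ℕ} {G : SimpleGraph (Fin n)}

/-- the unique path from `v` to the root `r`. -/
noncomputable def pp (hT : G.IsTree) (r v : Fin n) : G.Walk v r :=
  (hT.existsUnique_path v r).choose

lemma pp_isPath (hT : G.IsTree) (r v : Fin n) : (pp hT r v).IsPath :=
  (hT.existsUnique_path v r).choose_spec.1

lemma pp_unique (hT : G.IsTree) {r v : Fin n} (q : G.Walk v r) (hq : q.IsPath) :
    q = pp hT r v :=
  (hT.existsUnique_path v r).choose_spec.2 q hq

lemma pp_self (hT : G.IsTree) (r : Fin n) : pp hT r r = SimpleGraph.Walk.nil :=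
  (pp_unique hT SimpleGraph.Walk.nil (by simp)).symm

/-- parent of a vertex (junk value at the root). -/
noncomputable def par (hT : G.IsTree) (r v : Fin n) : Fin n := (pp hT r v).getVert 1

lemma pp_not_nil (hT : G.IsTree) {r v : Fin n} (hv : v ≠ r) : ¬ (pp hT r v).Nil :=
  SimpleGraph.Walk.not_nil_of_ne hv

lemma adj_par (hT : G.IsTree) {r v : Fin n} (hv : v ≠ r) : G.Adj v (par hT r v) :=
  SimpleGraph.Walk.adj_snd (pp_not_nil hT hv)

lemma pp_eq_cons (hT : G.IsTree) {r v : Fin n} (hv : v ≠ r) :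
    pp hT r v = SimpleGraph.Walk.cons (adj_par hT hv) (pp hT r (par hT r v)) := by
  have h1 : (pp hT r v).tail = pp hT r (par hT r v) := by
    apply pp_unique
    exact (pp_isPath hT r v).tail
  conv_lhs => rw [← SimpleGraph.Walk.cons_tail_eq (pp hT r v) (pp_not_nil hT hv)]
  congr 1

/-- depth of a vertex -/
noncomputable def dep (hT : G.IsTree) (r v : Fin n) : ℕ := (pp hT r v).length

lemma dep_par (hT : G.IsTree) {r v : Fin n} (hv : v ≠ r) :
    dep hT r (par hT r v) + 1 = dep hT r v := by
  unfold dep; rw [pp_eq_cons hT hv, SimpleGraph.Walk.length_cons]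

/-- ancestor relation: `u` lies on the path from `v` to the root. -/
def Anc (hT : G.IsTree) (r u v : Fin n) : Prop := u ∈ (pp hT r v).support

noncomputable instance (hT : G.IsTree) (r u v : Fin n) : Decidable (Anc hT r u v) :=
  List.instDecidableMemOfLawfulBEq u (pp hT r v).support

lemma anc_self (hT : G.IsTree) (r v : Fin n) : Anc hT r v v :=
  SimpleGraph.Walk.start_mem_support _

lemma anc_root_iff (hT : G.IsTree) (r u : Fin n) : Anc hT r u r ↔ u = r := by
  unfold Anc; rw [pp_self hT r]; simp

lemma anc_iff (hT : G.IsTree) {r v : Fin n} (hv : v ≠ r) (u : Fin n) :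
    Anc hT r u v ↔ u = v ∨ Anc hT r u (par hT r v) := by
  unfold Anc; rw [pp_eq_cons hT hv, SimpleGraph.Walk.support_cons]; simp

lemma not_anc_par (hT : G.IsTree) {r v : Fin n} (hv : v ≠ r) :
    ¬ Anc hT r v (par hT r v) := by
  have := pp_isPath hT r v
  rw [pp_eq_cons hT hv, SimpleGraph.Walk.cons_isPath_iff] at this
  exact this.2

lemma dichotomy (hT : G.IsTree) {r i k : Fin n} (h : G.Adj i k) :
    (k ≠ r ∧ par hT r k = i) ∨ (i ≠ r ∧ par hT r i = k) := by
  classical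
  by_cases hk : k ∈ (pp hT r i).support
  · right
    have hir : i ≠ r := by
      rintro rfl
      rw [pp_self] at hk
      simp at hk
      exact G.ne_of_adj h hk.symm
    refine ⟨hir, ?_⟩
    have htp : ((pp hT r i).takeUntil k hk).IsPath := (pp_isPath hT r i).takeUntil hk
    have hsingle : (SimpleGraph.Walk.cons h SimpleGraph.Walk.nil : G.Walk i k).IsPath := by
      simp [SimpleGraph.Walk.cons_isPath_iff, G.ne_of_adj h]
    have := hT.IsAcyclic.path_unique ⟨(pp hT r i).takeUntil k hk, htp⟩
      ⟨SimpleGraph.Walk.cons h SimpleGraph.Walk.nil, hsingle⟩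
    have heq : (pp hT r i).takeUntil k hk = SimpleGraph.Walk.cons h SimpleGraph.Walk.nil :=
      congrArg Subtype.val this
    have hspec := (pp hT r i).take_spec hk
    unfold par
    rw [← hspec, heq]
    simp [SimpleGraph.Walk.getVert_cons_succ, SimpleGraph.Walk.getVert_zero]
  · left
    have hq : (SimpleGraph.Walk.cons h.symm (pp hT r i)).IsPath := by
      rw [SimpleGraph.Walk.cons_isPath_iff]
      exact ⟨pp_isPath hT r i, hk⟩
    have hkr : k ≠ r := by
      rintro rfl
      exact hk ((pp hT _ i).end_mem_support)
    refine ⟨hkr, ?_⟩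
    have := pp_unique hT _ hq
    unfold par
    rw [← this]
    simp [SimpleGraph.Walk.getVert_cons_succ, SimpleGraph.Walk.getVert_zero]

lemma dep_pos (hT : G.IsTree) {r v : Fin n} (hv : v ≠ r) : 0 < dep hT r v := by
  have := dep_par hT hv; omega

/-- if `u` is an ancestor of `k` and a path from `k` avoids `par u`, the endpoint is
still a descendant of `u`. -/
lemma C1 (hT : G.IsTree) (r : Fin n) {k j : Fin n} (Q : G.Walk k j) (hQ : Q.IsPath) :
    ∀ u, u ≠ r → Anc hT r u k → par hT r u ∉ Q.support → Anc hT r u j := by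
  induction Q with
  | nil => exact fun u _ h _ => h
  | @cons k m j h Q' ih =>
    intro u hu hanc hpar
    rw [SimpleGraph.Walk.support_cons, List.mem_cons] at hpar
    push_neg at hpar
    rw [SimpleGraph.Walk.cons_isPath_iff] at hQ
    rcases dichotomy hT (r := r) h with ⟨hm, hpm⟩ | ⟨hk, hpk⟩
    · exact ih hQ.1 u hu ((anc_iff hT hm u).2 (Or.inr (hpm.symm ▸ hanc))) hpar.2
    · rcases (anc_iff hT hk u).1 hanc with rfl | hanc'
      · exact absurd (hpk ▸ Q'.start_mem_support) hpar.2
      · exact ih hQ.1 u hu (hpk ▸ hanc') hpar.2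

/-- if `u` is not an ancestor of `k` and a path from `k` avoids `u`, the endpoint is
still not a descendant of `u`. -/
lemma C2 (hT : G.IsTree) (r : Fin n) {k j : Fin n} (Q : G.Walk k j) (hQ : Q.IsPath) :
    ∀ u, u ≠ r → ¬ Anc hT r u k → u ∉ Q.support → ¬ Anc hT r u j := by
  induction Q with
  | nil => exact fun u _ h _ => h
  | @cons k m j h Q' ih =>
    intro u hu hanc hmem
    rw [SimpleGraph.Walk.support_cons, List.mem_cons] at hmem
    push_neg at hmem
    rw [SimpleGraph.Walk.cons_isPath_iff] at hQ
    rcases dichotomy hT (r := r) h with ⟨hm, hpm⟩ | ⟨hk, hpk⟩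
    · refine ih hQ.1 u hu ?_ hmem.2
      intro hum
      rcases (anc_iff hT hm u).1 hum with rfl | hanc'
      · exact hmem.2 Q'.start_mem_support
      · exact hanc (hpm ▸ hanc')
    · refine ih hQ.1 u hu ?_ hmem.2
      intro hum
      exact hanc ((anc_iff hT hk u).2 (Or.inr (hpk.symm ▸ hum)))

lemma edge_inj (hT : G.IsTree) {r u v : Fin n} (hu : u ≠ r) (hv : v ≠ r)
    (h : s(u, par hT r u) = s(v, par hT r v)) : u = v := by
  rw [Sym2.eq_iff] at h
  rcases h with ⟨h1, _⟩ | ⟨h1, h2⟩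
  · exact h1
  · have d1 := dep_par hT hu
    have d2 := dep_par hT hv
    rw [h2] at d1
    rw [← h1] at d2
    omega

/-- the key edge-membership characterization. -/
lemma edge_mem_iff (hT : G.IsTree) (r : Fin n) {i j : Fin n} (P : G.Walk i j)
    (hP : P.IsPath) (u : Fin n) (hu : u ≠ r) :
    s(u, par hT r u) ∈ P.edges ↔ ¬ (Anc hT r u i ↔ Anc hT r u j) := by
  induction P with
  | nil => simp
  | @cons i k j h Q ih =>
    rw [SimpleGraph.Walk.cons_isPath_iff] at hP
    rw [SimpleGraph.Walk.edges_cons, List.mem_cons]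
    rcases dichotomy hT (r := r) h with ⟨hk, hpk⟩ | ⟨hi, hpi⟩
    · -- par k = i
      have hki : ¬ Anc hT r k i := hpk ▸ not_anc_par hT hk
      have hkj : Anc hT r k j := C1 hT r Q hP.1 k hk (anc_self hT r k) (hpk.symm ▸ hP.2)
      by_cases huk : u = k
      · subst huk
        simp only [hpk]
        constructor
        · intro _ hcon; exact hki (hcon.mpr hkj)
        · intro _; left; rw [Sym2.eq_iff]; right; exact ⟨rfl, rfl⟩
      · have hne : ¬ s(u, par hT r u) = s(i, k) := by
          intro hcon
          exact huk (edge_inj hT hu hk (by rw [hcon, hpk, Sym2.eq_swap]))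
        have hik : Anc hT r u k ↔ Anc hT r u i := by
          rw [anc_iff hT hk u, hpk]
          simp [huk]
        rw [ih hP.1]
        simp [hne, hik]
    · -- par i = k
      have hik : ¬ Anc hT r i k := hpi ▸ not_anc_par hT hi
      have hij : ¬ Anc hT r i j := C2 hT r Q hP.1 i hi hik hP.2
      by_cases hui : u = i
      · subst hui
        constructor
        · intro _ hcon; exact hij (hcon.mp (anc_self hT r u))
        · intro _; left; rw [hpi]
      · have hne : ¬ s(u, par hT r u) = s(i, k) := by
          intro hcon
          exact hui (edge_inj hT hu hi (by rw [hcon, hpi]))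
        have hik2 : Anc hT r u i ↔ Anc hT r u k := by
          rw [anc_iff hT hi u, hpi]
          simp [hui]
        rw [ih hP.1]
        simp [hne, hik2]

lemma edge_exists (hT : G.IsTree) (r : Fin n) {a b : Fin n} (hadj : G.Adj a b) :
    ∃ u, u ≠ r ∧ s(a, b) = s(u, par hT r u) := by
  rcases dichotomy hT (r := r) hadj with ⟨hb, hpb⟩ | ⟨ha, hpa⟩
  · exact ⟨b, hb, by rw [hpb, Sym2.eq_swap]⟩
  · exact ⟨a, ha, by rw [hpa]⟩

lemma edgeFinset_eq [DecidableRel G.Adj] (hT : G.IsTree) (r : Fin n) :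
    G.edgeFinset = (Finset.univ.erase r).image (fun u => s(u, par hT r u)) := by
  ext e
  simp only [SimpleGraph.mem_edgeFinset, Finset.mem_image, Finset.mem_erase, Finset.mem_univ,
    and_true]
  induction e with
  | _ a b =>
    constructor
    · intro he
      obtain ⟨u, hu, hue⟩ := edge_exists hT r he
      exact ⟨u, hu, hue.symm⟩
    · rintro ⟨u, hu, he⟩
      rw [← he]
      exact adj_par hT hu

lemma path_sum {M : Type*} [AddCommMonoid M] (hT : G.IsTree) (r : Fin n) {i j : Fin n}
    (P : G.Walk i j) (hP : P.IsPath) (w : Sym2 (Fin n) → M) :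
    (P.edges.map w).sum = ∑ u ∈ Finset.univ.erase r,
      if ¬ (Anc hT r u i ↔ Anc hT r u j) then w s(u, par hT r u) else 0 := by
  classical
  rw [← List.sum_toFinset w hP.edges_nodup]
  have hset : P.edges.toFinset = ((Finset.univ.erase r).filter
      (fun u => ¬ (Anc hT r u i ↔ Anc hT r u j))).image (fun u => s(u, par hT r u)) := by
    ext e
    simp only [List.mem_toFinset, Finset.mem_image, Finset.mem_filter, Finset.mem_erase,
      Finset.mem_univ, and_true]
    constructor
    · intro he
      have heS := P.edges_subset_edgeSet he
      obtain ⟨a, b, rfl⟩ : ∃ a b, e = s(a, b) := by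
        induction e with
        | _ a b => exact ⟨a, b, rfl⟩
      obtain ⟨u, hu, hue⟩ := edge_exists hT r heS
      refine ⟨u, ⟨hu, ?_⟩, hue.symm⟩
      exact (edge_mem_iff hT r P hP u hu).1 (hue ▸ he)
    · rintro ⟨u, ⟨hu, hxor⟩, rfl⟩
      exact (edge_mem_iff hT r P hP u hu).2 hxor
  rw [hset, Finset.sum_image, Finset.sum_filter]
  intro x hx y hy hxy
  exact edge_inj hT (Finset.mem_erase.1 (Finset.mem_filter.1 hx).1).1
    (Finset.mem_erase.1 (Finset.mem_filter.1 hy).1).1 hxy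

/-! ### Matrix lemmas -/

section MatrixLemmas
open Kronecker

variable {m : Type*} [Fintype m] [DecidableEq m]

lemma mul_vecMulVec (A : Matrix m m ℝ) (x y : m → ℝ) :
    A * vecMulVec x y = vecMulVec (A *ᵥ x) y := by
  ext i j
  simp only [Matrix.mul_apply, vecMulVec_apply, Matrix.mulVec, dotProduct,
    Finset.sum_mul]
  exact Finset.sum_congr rfl fun k _ => by ring

lemma vecMulVec_mul (A : Matrix m m ℝ) (x y : m → ℝ) :
    vecMulVec x y * A = vecMulVec x (y ᵥ* A) := by
  ext i j
  simp only [Matrix.mul_apply, vecMulVec_apply, Matrix.vecMul, dotProduct,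
    Finset.mul_sum]
  exact Finset.sum_congr rfl fun k _ => by ring

lemma vecMulVec_add_right (x y z : m → ℝ) :
    vecMulVec x (y + z) = vecMulVec x y + vecMulVec x z := by
  ext i j; simp [vecMulVec_apply, mul_add]

lemma vecMulVec_smul_right (c : ℝ) (x y : m → ℝ) :
    vecMulVec x (c • y) = c • vecMulVec x y := by
  ext i j; simp [vecMulVec_apply]; ring

lemma det_eq_one_of_triangular (P : Matrix m m ℝ) (dp : m → ℕ)
    (h1 : ∀ v, P v v = 1) (h2 : ∀ v z, v ≠ z → P v z ≠ 0 → dp z < dp v) :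
    P.det = 1 := by
  have hbt : P.BlockTriangular (fun v => (- (dp v : ℤ))) := by
    intro i j hij
    by_contra hne
    rcases eq_or_ne i j with rfl | hij'
    · simp at hij
    · have := h2 i j hij' hne
      simp only [neg_lt_neg_iff, Int.ofNat_lt] at hij
      omega
  rw [hbt.det]
  apply Finset.prod_eq_one
  intro a _
  have : P.toSquareBlock (fun v => (- (dp v : ℤ))) a = 1 := by
    ext ⟨v, hv⟩ ⟨z, hz⟩
    rcases eq_or_ne v z with rfl | hvz
    · simp [Matrix.toSquareBlock_def, h1 v, Matrix.one_apply]
    · have hPz : P v z = 0 := by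
        by_contra hne
        have := h2 v z hvz hne
        rw [← hz] at hv
        simp only [neg_inj, Nat.cast_inj] at hv
        omega
      simp [Matrix.toSquareBlock_def, hPz, Matrix.one_apply, hvz, Subtype.ext_iff]
  rw [this, Matrix.det_one]

end MatrixLemmas

section Arrow
open Kronecker

variable {N s : ℕ}

/-- standard basis vector -/
def ev (u : Fin N) : Fin N → ℝ := fun v => if v = u then 1 else 0

lemma det_arrow (r : Fin N) (hr : ∀ v, r ≤ v) (hs : s ≠ 0)
    (W : Fin N → Matrix (Fin s) (Fin s) ℝ) :
    (∑ u ∈ Finset.univ.erase r,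
      (vecMulVec (ev r) (ev u) + (1/2 : ℝ) • vecMulVec (ev r) (ev r)
        - (2 : ℝ) • vecMulVec (ev u) (ev u)) ⊗ₖ W u).det
    = ((1/2 : ℝ) ^ s * (∑ u ∈ Finset.univ.erase r, W u).det)
      * ∏ u ∈ Finset.univ.erase r, ((-2 : ℝ) ^ s * (W u).det) := by
  classical
  set T := ∑ u ∈ Finset.univ.erase r,
      (vecMulVec (ev r) (ev u) + (1/2 : ℝ) • vecMulVec (ev r) (ev r)
        - (2 : ℝ) • vecMulVec (ev u) (ev u)) ⊗ₖ W u with hT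
  have hentry : ∀ x y : Fin N × Fin s, T x y = ∑ u ∈ Finset.univ.erase r,
      ((if x.1 = r then (1:ℝ) else 0) * (if y.1 = u then 1 else 0)
        + (1/2 : ℝ) * ((if x.1 = r then (1:ℝ) else 0) * (if y.1 = r then 1 else 0))
        - (2 : ℝ) * ((if x.1 = u then (1:ℝ) else 0) * (if y.1 = u then 1 else 0)))
      * W u x.2 y.2 := by
    intro x y
    rw [hT, Matrix.sum_apply]
    refine Finset.sum_congr rfl fun u hu => ?_
    simp [Matrix.kroneckerMap_apply, Matrix.sub_apply, Matrix.add_apply, Matrix.smul_apply,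
      vecMulVec_apply, ev, smul_eq_mul]
  have hbt : T.BlockTriangular (Prod.fst) := by
    intro x y hxy
    rw [hentry]
    apply Finset.sum_eq_zero
    intro u hu
    have hur : u ≠ r := (Finset.mem_erase.1 hu).1
    have hxr : x.1 ≠ r := by
      intro h
      rw [h] at hxy
      exact absurd hxy (not_lt.2 (hr y.1))
    by_cases h1 : x.1 = u
    · have h2 : y.1 ≠ u := by
        intro h
        rw [h1, ← h] at hxy
        exact lt_irrefl _ hxy
      simp [hxr, h2]
    · simp [hxr, h1]
  rw [hbt.det]
  have himage : Finset.image Prod.fst (Finset.univ : Finset (Fin N × Fin s)) = Finset.univ := by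
    ext a
    simp only [Finset.mem_image, Finset.mem_univ, iff_true]
    exact ⟨(a, ⟨0, Nat.pos_of_ne_zero hs⟩), trivial, rfl⟩
  rw [himage]
  have hblock : ∀ a : Fin N, (T.toSquareBlock Prod.fst a).det =
      (Matrix.of fun b c => T (a, b) (a, c)).det := by
    intro a
    let e : Fin s ≃ {x : Fin N × Fin s // x.1 = a} :=
      { toFun := fun b => ⟨(a, b), rfl⟩
        invFun := fun x => x.1.2
        left_inv := fun b => rfl
        right_inv := fun x => by
          obtain ⟨⟨x1, x2⟩, hx⟩ := x
          simp only at hx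
          subst hx
          rfl }
    rw [← Matrix.det_reindex_self e (Matrix.of fun b c => T (a, b) (a, c))]
    congr 1
    ext ⟨⟨x1, x2⟩, hx⟩ ⟨⟨y1, y2⟩, hy⟩
    simp only at hx hy
    subst hx; subst hy
    simp [Matrix.toSquareBlock_def, Matrix.reindex_apply, Matrix.submatrix_apply, e]
  have hdiag : ∀ a : Fin N, (Matrix.of fun b c => T (a, b) (a, c))
      = if a = r then (1/2 : ℝ) • ∑ u ∈ Finset.univ.erase r, W u else (-2 : ℝ) • W a := by
    intro a
    by_cases ha : a = r
    · subst ha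
      rw [if_pos rfl]
      ext b c
      rw [Matrix.of_apply, hentry]
      rw [Matrix.smul_apply, Matrix.sum_apply, Finset.smul_sum]
      refine Finset.sum_congr rfl fun u hu => ?_
      have hur : u ≠ a := (Finset.mem_erase.1 hu).1
      simp [Ne.symm hur, smul_eq_mul]
    · rw [if_neg ha]
      ext b c
      rw [Matrix.of_apply, hentry]
      have ha' : a ∈ Finset.univ.erase r := Finset.mem_erase.2 ⟨ha, Finset.mem_univ a⟩
      rw [Finset.sum_eq_single_of_mem a ha']
      · rw [Matrix.smul_apply, smul_eq_mul]
        simp [ha]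
      · intro u hu hua
        simp [ha, Ne.symm hua]
  calc ∏ a : Fin N, (T.toSquareBlock Prod.fst a).det
      = ∏ a : Fin N, (if a = r then ((1/2:ℝ) • ∑ u ∈ Finset.univ.erase r, W u).det
          else ((-2:ℝ) • W a).det) := by
        refine Finset.prod_congr rfl fun a _ => ?_
        rw [hblock a, hdiag a]
        split_ifs <;> rfl
    _ = ((1/2 : ℝ) ^ s * (∑ u ∈ Finset.univ.erase r, W u).det)
      * ∏ u ∈ Finset.univ.erase r, ((-2 : ℝ) ^ s * (W u).det) := by
        rw [Finset.prod_eq_mul_prod_sdiff_singleton_of_mem (Finset.mem_univ r)]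
        rw [if_pos rfl, Matrix.det_smul]
        simp only [Fintype.card_fin]
        congr 1
        rw [← Finset.erase_eq]
        refine Finset.prod_congr rfl fun a ha => ?_
        rw [if_neg (Finset.mem_erase.1 ha).1, Matrix.det_smul, Fintype.card_fin]

end Arrow

end BapatAux

open BapatAux Kronecker in
/-- (Bapat) Let `T` be a tree on `n` vertices whose `n-1` edges are assigned
`s × s` real matrix weights, and let `D` be its distance matrix (the `(i,j)` block is the sum
of the weights of the edges on the unique path from `i` to `j`).  Then
`det D = (-1)^{(n-1)s} 2^{(n-2)s} det(∏ᵢ Wᵢ) det(∑ᵢ Wᵢ)`, where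
`det(∏ᵢ Wᵢ) = ∏ᵢ det Wᵢ` is expressed as the product of the determinants of the edge
weights (so as to be independent of the ordering of the factors). -/
theorem det_distanceMatrix_tree {n s : ℕ}
    (G : SimpleGraph (Fin n)) [DecidableRel G.Adj] (hT : G.IsTree)
    (w : Sym2 (Fin n) → Matrix (Fin s) (Fin s) ℝ)
    (D : Matrix (Fin n × Fin s) (Fin n × Fin s) ℝ)
    (hD : ∀ (i j : Fin n) (p : G.Walk i j), p.IsPath →
      ∀ a b, D (i, a) (j, b) = ((p.edges.map w).sum) a b) :
    D.det = (-1 : ℝ) ^ ((n - 1) * s) * 2 ^ ((n - 2) * s) *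
      (∏ e ∈ G.edgeFinset, (w e).det) * (∑ e ∈ G.edgeFinset, w e).det := by
  classical
  have hne : Nonempty (Fin n) := hT.isConnected.nonempty
  have hn1 : 1 ≤ n := by
    obtain ⟨v⟩ := hne
    have := v.isLt
    omega
  -- trivial case s = 0
  by_cases hs0 : s = 0
  · subst hs0
    have h1 : D.det = 1 := Matrix.det_isEmpty
    have h2 : (∑ e ∈ G.edgeFinset, w e).det = 1 := Matrix.det_isEmpty
    have h3 : ∀ e ∈ G.edgeFinset, (w e).det = 1 := fun e _ => Matrix.det_isEmpty
    rw [h1, h2, Finset.prod_congr rfl h3]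
    simp
  -- trivial case n = 1
  by_cases hn1' : n = 1
  · subst hn1'
    have hcard : G.edgeFinset.card + 1 = 1 := by
      simpa using hT.card_edgeFinset
    have hE : G.edgeFinset = ∅ := Finset.card_eq_zero.1 (by omega)
    have hD0 : D = 0 := by
      ext ⟨i, a⟩ ⟨j, b⟩
      have hij : i = j := Subsingleton.elim i j
      subst hij
      rw [hD i i SimpleGraph.Walk.nil (by simp) a b]
      simp
    have : Nonempty (Fin 1 × Fin s) := ⟨(0, ⟨0, Nat.pos_of_ne_zero hs0⟩)⟩
    rw [hD0, hE, Matrix.det_zero]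
    have : Nonempty (Fin s) := ⟨⟨0, Nat.pos_of_ne_zero hs0⟩⟩
    simp
  have hn2 : 2 ≤ n := by omega
  -- root and rooted-tree data
  set r : Fin n := ⟨0, by omega⟩ with hrdef
  have hr : ∀ v : Fin n, r ≤ v := fun v => by simp [hrdef, Fin.le_def]
  set Wv : Fin n → Matrix (Fin s) (Fin s) ℝ := fun u => w s(u, par hT r u) with hWv
  set χ : Fin n → Fin n → ℝ := fun u v => if Anc hT r u v then 1 else 0 with hχ
  set onev : Fin n → ℝ := fun _ => 1 with honev
  set E : Fin n → Matrix (Fin n) (Fin n) ℝ := fun u =>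
    vecMulVec (χ u) onev + vecMulVec onev (χ u) - (2 : ℝ) • vecMulVec (χ u) (χ u) with hE
  -- Step 1: decomposition of D
  have hDeq : D = ∑ u ∈ Finset.univ.erase r, E u ⊗ₖ Wv u := by
    ext ⟨i, a⟩ ⟨j, b⟩
    obtain ⟨P, hP⟩ := (hT.existsUnique_path i j)
    rw [hD i j P hP.1 a b, path_sum hT r P hP.1 w, Matrix.sum_apply, Matrix.sum_apply]
    refine Finset.sum_congr rfl fun u hu => ?_
    rw [Matrix.kroneckerMap_apply]
    have hEval : E u i j = if ¬ (Anc hT r u i ↔ Anc hT r u j) then 1 else 0 := by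
      simp only [hE, hχ, Matrix.sub_apply, Matrix.add_apply, Matrix.smul_apply,
        vecMulVec_apply, honev, smul_eq_mul]
      by_cases h1 : Anc hT r u i <;> by_cases h2 : Anc hT r u j <;>
        norm_num [h1, h2]
    rw [hEval]
    by_cases hxor : ¬ (Anc hT r u i ↔ Anc hT r u j)
    · simp [hxor, hWv]
    · simp [hxor]
  -- the two triangular transformation matrices
  set P0 : Matrix (Fin n) (Fin n) ℝ := Matrix.of fun v z =>
    (if z = v then (1:ℝ) else 0) + (if v ≠ r ∧ z = par hT r v then -1 else 0) with hP0
  set Q0 : Matrix (Fin n) (Fin n) ℝ := Matrix.of fun v z =>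
    (if z = v then (1:ℝ) else 0) + (if v = r ∧ z ≠ r then (1/2 : ℝ) else 0) with hQ0
  have hparne : ∀ v : Fin n, v ≠ r → par hT r v ≠ v := by
    intro v hv h
    have := dep_par hT hv
    rw [h] at this
    omega
  have hP0det : P0.det = 1 := by
    apply det_eq_one_of_triangular P0 (dep hT r)
    · intro v
      by_cases hv : v = r
      · simp [hP0, hv]
      · simp [hP0, hv, Ne.symm (hparne v hv)]
    · intro v z hvz hne
      simp only [hP0, Matrix.of_apply, if_neg (Ne.symm hvz), zero_add] at hne
      by_cases h : v ≠ r ∧ z = par hT r v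
      · rw [h.2]
        have := dep_par hT h.1
        omega
      · simp [h] at hne
  have hQ0det : Q0.det = 1 := by
    apply det_eq_one_of_triangular Q0 (fun v => if v = r then 1 else 0)
    · intro v
      simp [hQ0]
    · intro v z hvz hne
      simp only [hQ0, Matrix.of_apply, if_neg (Ne.symm hvz), zero_add] at hne
      by_cases h : v = r ∧ z ≠ r
      · simp [h.1, h.2]
      · simp [h] at hne
  -- mulVec computations
  have hP0mul : ∀ (x : Fin n → ℝ) (v : Fin n),
      (P0 *ᵥ x) v = x v + (if v ≠ r then - x (par hT r v) else 0) := by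
    intro x v
    simp only [Matrix.mulVec, dotProduct, hP0, Matrix.of_apply, add_mul, ite_mul,
      one_mul, zero_mul, neg_mul, neg_one_mul, Finset.sum_add_distrib]
    congr 1
    · simp [Finset.sum_ite_eq']
    · by_cases hv : v = r
      · simp [hv]
      · simp [hv, Finset.sum_ite_eq']
  have hone : P0 *ᵥ onev = ev r := by
    ext v
    rw [hP0mul]
    by_cases hv : v = r <;> simp [honev, ev, hv]
  have hchi : ∀ u, u ≠ r → P0 *ᵥ χ u = ev u := by
    intro u hu
    ext v
    rw [hP0mul]
    by_cases hv : v = r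
    · subst hv
      simp [hχ, ev, anc_root_iff, hu, Ne.symm hu]
    · by_cases hvu : v = u
      · subst hvu
        rw [if_pos hv]
        simp [hχ, ev, anc_self hT r v, not_anc_par hT hv]
      · have hiff : Anc hT r u v ↔ Anc hT r u (par hT r v) := by
          rw [anc_iff hT hv u]
          simp [Ne.symm hvu]
        rw [if_pos hv]
        simp only [hχ, ev]
        rw [if_congr hiff rfl rfl, if_neg hvu]
        ring
  have hmulVec_ev : ∀ (M : Matrix (Fin n) (Fin n) ℝ) (u : Fin n), M *ᵥ ev u = fun v => M v u := by
    intro M u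
    ext v
    simp [Matrix.mulVec, dotProduct, ev, Finset.sum_ite_eq']
  have hQe : ∀ u, u ≠ r → Q0 *ᵥ ev u = ev u + (1/2 : ℝ) • ev r := by
    intro u hu
    rw [hmulVec_ev]
    ext v
    simp only [hQ0, Matrix.of_apply, Pi.add_apply, Pi.smul_apply, ev, smul_eq_mul]
    by_cases hv : v = r <;> simp [hv, hu, Ne.symm hu, eq_comm] <;> ring
  have hQr : Q0 *ᵥ ev r = ev r := by
    rw [hmulVec_ev]
    ext v
    simp [hQ0, ev, eq_comm]
  -- Step 2: the transformation
  have key : (P0 ⊗ₖ (1 : Matrix (Fin s) (Fin s) ℝ)) * D * (P0 ⊗ₖ (1 : Matrix (Fin s) (Fin s) ℝ))ᵀ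
      * (Q0 ⊗ₖ (1 : Matrix (Fin s) (Fin s) ℝ))ᵀ
      = ∑ u ∈ Finset.univ.erase r,
        (vecMulVec (ev r) (ev u) + (1/2 : ℝ) • vecMulVec (ev r) (ev r)
          - (2 : ℝ) • vecMulVec (ev u) (ev u)) ⊗ₖ Wv u := by
    rw [hDeq, Matrix.mul_sum, Matrix.sum_mul, Matrix.sum_mul]
    refine Finset.sum_congr rfl fun u hu => ?_
    have hu' : u ≠ r := (Finset.mem_erase.1 hu).1
    rw [← Matrix.kroneckerMap_transpose, ← Matrix.kroneckerMap_transpose, Matrix.transpose_one,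
      ← Matrix.mul_kronecker_mul, ← Matrix.mul_kronecker_mul, ← Matrix.mul_kronecker_mul,
      Matrix.one_mul, Matrix.mul_one, Matrix.mul_one]
    have hdist : P0 * E u * P0ᵀ * Q0ᵀ
        = vecMulVec (P0 *ᵥ χ u) (Q0 *ᵥ (P0 *ᵥ onev))
          + vecMulVec (P0 *ᵥ onev) (Q0 *ᵥ (P0 *ᵥ χ u))
          - (2 : ℝ) • vecMulVec (P0 *ᵥ χ u) (Q0 *ᵥ (P0 *ᵥ χ u)) := by
      rw [hE]
      rw [Matrix.mul_sub, Matrix.mul_add, Matrix.sub_mul, Matrix.add_mul, Matrix.sub_mul,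
        Matrix.add_mul, Matrix.mul_smul, Matrix.smul_mul, Matrix.smul_mul]
      rw [BapatAux.mul_vecMulVec, BapatAux.mul_vecMulVec, BapatAux.mul_vecMulVec]
      rw [BapatAux.vecMulVec_mul, BapatAux.vecMulVec_mul, BapatAux.vecMulVec_mul, Matrix.vecMul_transpose,
        Matrix.vecMul_transpose, Matrix.vecMul_transpose]
      rw [BapatAux.vecMulVec_mul, BapatAux.vecMulVec_mul, BapatAux.vecMulVec_mul, Matrix.vecMul_transpose,
        Matrix.vecMul_transpose, Matrix.vecMul_transpose]
    rw [hdist, hone, hchi u hu', hQe u hu', hQr]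
    apply Matrix.ext
    intro i j
    simp only [Matrix.kroneckerMap_apply, Matrix.sub_apply, Matrix.add_apply, Matrix.smul_apply, vecMulVec_apply,
      Pi.add_apply, Pi.smul_apply, smul_eq_mul]
    ring
  -- Step 3: determinants
  have hdetP : (P0 ⊗ₖ (1 : Matrix (Fin s) (Fin s) ℝ)).det = 1 := by
    rw [Matrix.det_kronecker, hP0det, Matrix.det_one]
    simp
  have hdetQ : (Q0 ⊗ₖ (1 : Matrix (Fin s) (Fin s) ℝ)).det = 1 := by
    rw [Matrix.det_kronecker, hQ0det, Matrix.det_one]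
    simp
  have hdetD : D.det = ((P0 ⊗ₖ (1 : Matrix (Fin s) (Fin s) ℝ)) * D
      * (P0 ⊗ₖ (1 : Matrix (Fin s) (Fin s) ℝ))ᵀ * (Q0 ⊗ₖ (1 : Matrix (Fin s) (Fin s) ℝ))ᵀ).det := by
    rw [Matrix.det_mul, Matrix.det_mul, Matrix.det_mul, Matrix.det_transpose,
      Matrix.det_transpose, hdetP, hdetQ]
    ring
  rw [hdetD, key, det_arrow r hr hs0 Wv]
  -- Step 4: translate sums/products over edges to sums over non-root vertices
  have hinj : ∀ x ∈ Finset.univ.erase r, ∀ y ∈ Finset.univ.erase r,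
      (fun u => s(u, par hT r u)) x = (fun u => s(u, par hT r u)) y → x = y := by
    intro x hx y hy hxy
    exact edge_inj hT (Finset.mem_erase.1 hx).1 (Finset.mem_erase.1 hy).1 hxy
  have hprod : ∏ e ∈ G.edgeFinset, (w e).det = ∏ u ∈ Finset.univ.erase r, (Wv u).det := by
    rw [edgeFinset_eq hT r, Finset.prod_image hinj]
  have hsum : ∑ e ∈ G.edgeFinset, w e = ∑ u ∈ Finset.univ.erase r, Wv u := by
    rw [edgeFinset_eq hT r, Finset.sum_image hinj]
  rw [hprod, hsum]
  rw [Finset.prod_mul_distrib, Finset.prod_const]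
  have hcard : (Finset.univ.erase r).card = n - 1 := by
    rw [Finset.card_erase_of_mem (Finset.mem_univ r), Finset.card_univ, Fintype.card_fin]
  rw [hcard]
  have hexp : (n - 1) * s = (n - 2) * s + s := by
    have : n - 1 = (n - 2) + 1 := by omega
    rw [this]
    ring
  have h2 : ((-2 : ℝ) ^ s) ^ (n - 1) = (-1 : ℝ) ^ ((n - 1) * s) * (2 : ℝ) ^ ((n - 2) * s) * 2 ^ s := by
    rw [← pow_mul, Nat.mul_comm s (n - 1)]
    have hneg : (-2 : ℝ) = (-1) * 2 := by norm_num
    rw [hneg, mul_pow]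
    rw [show (2:ℝ) ^ ((n-1)*s) = 2 ^ ((n-2)*s) * 2 ^ s by rw [hexp, pow_add]]
    ring
  rw [h2]
  have h3 : (1/2 : ℝ) ^ s * 2 ^ s = 1 := by
    rw [← mul_pow]
    norm_num
  linear_combination ((-1 : ℝ) ^ ((n - 1) * s) * 2 ^ ((n - 2) * s)
    * (∏ u ∈ Finset.univ.erase r, (Wv u).det)
    * (∑ u ∈ Finset.univ.erase r, Wv u).det) * h3
end

section
/- Let T be a tree on n vertices whose edges e_1,…,e_{n−1} are assigned s×s real matrix weights W_1,…,W_{n−1}, and let D be its distance matrix. Then D is invertible if and only if each weight matrix W_i (i = 1,…,n−1) is invertible and the sum ∑_{i=1}^{n−1} W_i is invertible. -/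
open Matrix SimpleGraph

namespace DistTreeAux

set_option linter.unusedSectionVars false
variable {V : Type*} [DecidableEq V] {G : SimpleGraph V}

/-- The canonical path between two vertices of a tree. -/
noncomputable def pth (hT : G.IsTree) (i j : V) : G.Walk i j :=
  (hT.existsUnique_path i j).choose

lemma pth_isPath (hT : G.IsTree) (i j : V) : (pth hT i j).IsPath :=
  (hT.existsUnique_path i j).choose_spec.1

lemma pth_unique (hT : G.IsTree) {i j : V} {p : G.Walk i j} (hp : p.IsPath) :
    p = pth hT i j :=
  (hT.existsUnique_path i j).choose_spec.2 p hp

lemma pth_self (hT : G.IsTree) (i : V) : pth hT i i = Walk.nil :=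
  (pth_unique hT Walk.IsPath.nil).symm

/-- The parent of a vertex with respect to a root `v0`. -/
noncomputable def par (hT : G.IsTree) (v0 j : V) : V := (pth hT j v0).getVert 1

lemma pth_eq_cons (hT : G.IsTree) {v0 j : V} (hj : j ≠ v0) :
    ∃ h : G.Adj j (par hT v0 j), pth hT j v0 = Walk.cons h (pth hT (par hT v0 j) v0) := by
  have hnil : ¬ (pth hT j v0).Nil := Walk.not_nil_of_ne hj
  obtain ⟨x, h, q, hq⟩ := Walk.not_nil_iff.mp hnil
  have hx : par hT v0 j = x := by
    unfold par; rw [hq]; exact (Walk.getVert_cons_succ (n := 0) _ _).trans (Walk.getVert_zero _)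
  subst hx
  refine ⟨h, ?_⟩
  have hqp : q.IsPath := by
    have := pth_isPath hT j v0
    rw [hq] at this
    exact this.of_cons
  rw [hq, pth_unique hT hqp]

lemma adj_par (hT : G.IsTree) {v0 j : V} (hj : j ≠ v0) : G.Adj j (par hT v0 j) :=
  (pth_eq_cons hT hj).choose

lemma notMem_support_par (hT : G.IsTree) {v0 j : V} (hj : j ≠ v0) :
    j ∉ (pth hT (par hT v0 j) v0).support := by
  obtain ⟨h, hq⟩ := pth_eq_cons hT hj
  have := pth_isPath hT j v0
  rw [hq, Walk.cons_isPath_iff] at this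
  exact this.2

lemma support_pth_eq_cons (hT : G.IsTree) {v0 j : V} (hj : j ≠ v0) :
    (pth hT j v0).support = j :: (pth hT (par hT v0 j) v0).support := by
  obtain ⟨h, hq⟩ := pth_eq_cons hT hj
  rw [hq, Walk.support_cons]

lemma length_par_lt (hT : G.IsTree) {v0 j : V} (hj : j ≠ v0) :
    (pth hT (par hT v0 j) v0).length < (pth hT j v0).length := by
  obtain ⟨h, hq⟩ := pth_eq_cons hT hj
  rw [hq, Walk.length_cons]; omega

lemma pth_take (hT : G.IsTree) {i j z : V} (hz : z ∈ (pth hT i j).support) :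
    pth hT i z = (pth hT i j).takeUntil z hz :=
  (pth_unique hT ((pth_isPath hT i j).takeUntil hz)).symm

lemma pth_drop (hT : G.IsTree) {i j z : V} (hz : z ∈ (pth hT i j).support) :
    pth hT z j = (pth hT i j).dropUntil z hz :=
  (pth_unique hT ((pth_isPath hT i j).dropUntil hz)).symm

lemma pth_append (hT : G.IsTree) {i j z : V} (hz : z ∈ (pth hT i j).support) :
    pth hT i j = (pth hT i z).append (pth hT z j) := by
  rw [pth_take hT hz, pth_drop hT hz, Walk.take_spec]

lemma pth_reverse (hT : G.IsTree) (i j : V) :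
    pth hT j i = (pth hT i j).reverse :=
  (pth_unique hT ((pth_isPath hT i j).reverse)).symm

lemma pth_adj (hT : G.IsTree) {x y : V} (h : G.Adj x y) :
    pth hT x y = Walk.cons h Walk.nil := by
  refine (pth_unique hT ?_).symm
  rw [Walk.cons_isPath_iff]
  exact ⟨Walk.IsPath.nil, by simp [h.ne]⟩

lemma pth_concat (hT : G.IsTree) {x y j : V} (h : G.Adj x y)
    (hy : y ∉ (pth hT j x).support) : pth hT j y = (pth hT j x).concat h := by
  refine (pth_unique hT ?_).symm
  rw [Walk.isPath_def, Walk.support_concat]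
  rw [← List.concat_eq_append]
  exact List.Nodup.concat (by simpa using hy) (pth_isPath hT j x).support_nodup

lemma pth_through (hT : G.IsTree) {x y j : V} (h : G.Adj x y)
    (hy : y ∈ (pth hT j x).support) :
    pth hT j x = (pth hT j y).append (Walk.cons h.symm Walk.nil) ∧
      x ∉ (pth hT j y).support := by
  have happ := pth_append hT hy
  rw [pth_adj hT h.symm] at happ
  constructor
  · exact happ
  · have hnd := (pth_isPath hT j x).support_nodup
    rw [happ, Walk.support_append, Walk.support_cons, Walk.support_nil] at hnd
    simp only [List.tail_cons] at hnd
    have := List.disjoint_of_nodup_append hnd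
    intro hx
    exact this hx (by simp)

variable {V : Type*} [DecidableEq V] {G : SimpleGraph V}

/-- Key lemma: `w ≠ v0` lies on the canonical path from `j` to `par w` iff it lies on the
canonical path from `j` to the root `v0`. -/
lemma mem_pth_par_iff (hT : G.IsTree) {v0 w : V} (hw : w ≠ v0) (j : V) :
    w ∈ (pth hT j (par hT v0 w)).support ↔ w ∈ (pth hT j v0).support := by
  set q := par hT v0 w with hqdef
  constructor
  · intro hm
    -- q ∉ support (pth j w)
    have hq_notin : q ∉ (pth hT j w).support := by
      have happ := pth_append hT hm
      rw [pth_adj hT (adj_par hT hw)] at happ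
      have hnd := (pth_isPath hT j q).support_nodup
      rw [happ, Walk.support_append, Walk.support_cons, Walk.support_nil] at hnd
      simp only [List.tail_cons] at hnd
      exact fun hx => (List.disjoint_of_nodup_append hnd) hx (by simp [hqdef])
    -- Q := (pth j w).append (pth w v0) is a path
    have hwv0 : pth hT w v0 = Walk.cons (adj_par hT hw) (pth hT q v0) :=
      (pth_eq_cons hT hw).choose_spec
    have hdisj : ∀ z, z ∈ (pth hT j w).support → z ∈ (pth hT q v0).support → False := by
      intro z hzA hzB
      have hq_notin' : q ∉ (pth hT z w).support := by
        rw [pth_drop hT hzA]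
        exact fun hx => hq_notin (Walk.support_dropUntil_subset _ hzA hx)
      -- pth w z = cons _ (pth q z)
      have hwz : pth hT w z = Walk.cons (adj_par hT hw) (pth hT q z) := by
        refine (pth_unique hT ?_).symm
        rw [Walk.cons_isPath_iff]
        refine ⟨pth_isPath hT q z, fun hx => notMem_support_par hT hw ?_⟩
        rw [pth_take hT hzB] at hx
        exact Walk.support_takeUntil_subset _ hzB hx
      have hqmem : q ∈ (pth hT z w).support := by
        rw [pth_reverse hT w z, Walk.support_reverse, List.mem_reverse, hwz,
          Walk.support_cons]
        exact List.mem_cons_of_mem _ (Walk.start_mem_support _)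
      have : q ∈ (pth hT j w).support := by
        rw [pth_append hT hzA, Walk.mem_support_append_iff]
        exact Or.inr hqmem
      exact hq_notin this
    have hQ : ((pth hT j w).append (pth hT w v0)).IsPath := by
      rw [Walk.isPath_def, Walk.support_append, hwv0, Walk.support_cons]
      simp only [List.tail_cons]
      rw [List.nodup_append]
      exact ⟨(pth_isPath hT j w).support_nodup, (pth_isPath hT q v0).support_nodup,
        fun z hzA b hb hzb => hdisj z hzA (by subst hzb; exact hb)⟩
    have : pth hT j v0 = (pth hT j w).append (pth hT w v0) := (pth_unique hT hQ).symm
    rw [this, Walk.mem_support_append_iff]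
    exact Or.inl (Walk.end_mem_support _)
  · intro hm
    have hq_mem : q ∈ (pth hT j v0).support := by
      have := pth_append hT hm
      rw [this, Walk.mem_support_append_iff]
      right
      rw [(pth_eq_cons hT hw).choose_spec, Walk.support_cons]
      exact List.mem_cons_of_mem _ (Walk.start_mem_support _)
    rw [pth_take hT hq_mem]
    by_contra hnot
    have hsplit := Walk.take_spec (pth hT j v0) hq_mem
    have hdrop : (pth hT j v0).dropUntil q hq_mem = pth hT q v0 := (pth_drop hT hq_mem).symm
    have : w ∈ (pth hT j v0).support := hm
    rw [← hsplit, Walk.mem_support_append_iff] at this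
    rcases this with h1 | h2
    · exact hnot h1
    · rw [hdrop] at h2
      exact notMem_support_par hT hw h2

lemma adj_par_or (hT : G.IsTree) {v0 x y : V} (h : G.Adj x y) :
    (x ≠ v0 ∧ par hT v0 x = y) ∨ (y ≠ v0 ∧ par hT v0 y = x) := by
  by_cases hy : y ∈ (pth hT x v0).support
  · left
    have hx : x ≠ v0 := by
      rintro rfl
      rw [pth_self hT] at hy
      simp only [Walk.support_nil, List.mem_singleton] at hy
      exact h.ne hy.symm
    refine ⟨hx, ?_⟩
    have happ := pth_append hT hy
    rw [pth_adj hT h] at happ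
    rw [Walk.cons_append, Walk.nil_append] at happ
    unfold par
    rw [happ]; exact (Walk.getVert_cons_succ (n := 0) _ _).trans (Walk.getVert_zero _)
  · right
    have hyv0 : y ≠ v0 := by
      rintro rfl
      exact hy (Walk.end_mem_support _)
    refine ⟨hyv0, ?_⟩
    have : pth hT y v0 = Walk.cons h.symm (pth hT x v0) := by
      refine (pth_unique hT ?_).symm
      rw [Walk.cons_isPath_iff]
      exact ⟨pth_isPath hT x v0, hy⟩
    unfold par
    rw [this]; exact (Walk.getVert_cons_succ (n := 0) _ _).trans (Walk.getVert_zero _)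

lemma par_par_ne (hT : G.IsTree) {v0 v : V} (hv : v ≠ v0) (hpv : par hT v0 v ≠ v0) :
    par hT v0 (par hT v0 v) ≠ v := by
  intro hc
  have h1 : par hT v0 (par hT v0 v) ∈ (pth hT (par hT v0 v) v0).support := by
    rw [(pth_eq_cons hT hpv).choose_spec, Walk.support_cons]
    exact List.mem_cons_of_mem _ (Walk.start_mem_support _)
  rw [hc] at h1
  exact notMem_support_par hT hv h1

end DistTreeAux
/-- Block matrix built from an `n × n` family of `s × s` blocks. -/
def blk {n s : ℕ} (f : Fin n → Fin n → Matrix (Fin s) (Fin s) ℝ) :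
    Matrix (Fin n × Fin s) (Fin n × Fin s) ℝ :=
  Matrix.of fun p q => f p.1 q.1 p.2 q.2

lemma blk_mul {n s : ℕ} (f g : Fin n → Fin n → Matrix (Fin s) (Fin s) ℝ) :
    blk f * blk g = blk fun i j => ∑ k, f i k * g k j := by
  ext ⟨i, a⟩ ⟨j, b⟩
  simp only [blk, Matrix.mul_apply, Matrix.of_apply, Fintype.sum_prod_type,
    Matrix.sum_apply]

lemma blk_one {n s : ℕ} :
    blk (fun i j => if i = j then (1 : Matrix (Fin s) (Fin s) ℝ) else 0) = (1 : Matrix (Fin n × Fin s) (Fin n × Fin s) ℝ) := by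
  ext ⟨i, a⟩ ⟨j, b⟩
  simp only [blk, Matrix.of_apply, Matrix.one_apply, Prod.mk.injEq]
  by_cases h : i = j <;> by_cases h2 : a = b <;>
    simp [h, h2, Matrix.one_apply, Matrix.zero_apply]
lemma arrow_unit_iff {n s : ℕ} (v0 : Fin n) (W : Fin n → Matrix (Fin s) (Fin s) ℝ) :
    IsUnit (blk (fun v z => if v = v0 then (if z = v0 then 0 else W z)
      else if z = v0 then W v else if z = v then (-2 : ℝ) • W v else 0)) ↔
    (∀ v ∈ Finset.univ.erase v0, IsUnit (W v)) ∧
      IsUnit (∑ v ∈ Finset.univ.erase v0, W v) := by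
  classical
  set E : Finset (Fin n) := Finset.univ.erase v0 with hE
  set T : Matrix (Fin s) (Fin s) ℝ := ∑ v ∈ E, W v with hTdef
  set mval : Fin n → Fin n → Matrix (Fin s) (Fin s) ℝ := fun v z =>
    if v = v0 then (if z = v0 then 0 else W z)
      else if z = v0 then W v else if z = v then (-2 : ℝ) • W v else 0 with hmval
  constructor
  · -- forward: M unit → blocks unit
    intro hM
    have hMdet : (blk mval).det ≠ 0 := by
      intro h0
      have := (Matrix.isUnit_iff_isUnit_det _).mp hM
      rw [h0] at this
      simp at this
    constructor
    · intro v hv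
      rw [Finset.mem_erase] at hv
      by_contra hne
      have hdet : (W v).det = 0 := by
        by_contra hd
        exact hne ((Matrix.isUnit_iff_isUnit_det _).mpr (isUnit_iff_ne_zero.mpr hd))
      obtain ⟨x, hx0, hxW⟩ := (Matrix.exists_vecMul_eq_zero_iff).mpr hdet
      have hxW' : ∀ b, (∑ a, x a * W v a b) = 0 := by
        intro b
        have := congrFun hxW b
        simpa [Matrix.vecMul, dotProduct] using this
      set X : Fin n × Fin s → ℝ := fun p => if p.1 = v then x p.2 else 0 with hX
      have hXne : X ≠ 0 := by
        obtain ⟨a, ha⟩ := Function.ne_iff.mp hx0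
        intro hc
        have := congrFun hc (v, a)
        simp [hX] at this
        exact ha this
      have hvec : X ᵥ* (blk mval) = 0 := by
        funext q
        obtain ⟨j, b⟩ := q
        have : (X ᵥ* (blk mval)) (j, b) = ∑ a, x a * mval v j a b := by
          simp only [Matrix.vecMul, dotProduct, Fintype.sum_prod_type, blk,
            Matrix.of_apply, hX, ite_mul, zero_mul, Finset.sum_ite_irrel,
            Finset.sum_const_zero, Finset.sum_ite_eq', Finset.mem_univ, if_true]
        rw [this]
        by_cases hj : j = v0
        · have hm : ∀ a b, mval v j a b = W v a b := by
            intro a b; simp [hmval, hv.1, hj]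
          simp only [hm]
          simpa using hxW' b
        · by_cases hjv : j = v
          · have hm : ∀ a b, mval v j a b = -2 * W v a b := by
              intro a b
              simp [hmval, hv.1, hj, hjv, Matrix.smul_apply]
            simp only [hm]
            have : ∀ a, x a * (-2 * W v a b) = -2 * (x a * W v a b) := fun a => by ring
            rw [Finset.sum_congr rfl fun a _ => this a, ← Finset.mul_sum, hxW' b, mul_zero]
            simp
          · have hm : ∀ a b, mval v j a b = 0 := by
              intro a b; simp [hmval, hv.1, hj, hjv]
            simp [hm]
      exact hMdet (Matrix.exists_vecMul_eq_zero_iff.mp ⟨X, hXne, hvec⟩)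
    · by_contra hne
      have hdet : T.det = 0 := by
        by_contra hd
        exact hne ((Matrix.isUnit_iff_isUnit_det _).mpr (isUnit_iff_ne_zero.mpr hd))
      obtain ⟨z, hz0, hzT⟩ := (Matrix.exists_mulVec_eq_zero_iff).mpr hdet
      have hzT' : ∀ a, (∑ b, T a b * z b) = 0 := by
        intro a
        have := congrFun hzT a
        simpa [Matrix.mulVec, dotProduct] using this
      set Y : Fin n × Fin s → ℝ := fun p => if p.1 = v0 then 2 * z p.2 else z p.2 with hY
      have hYne : Y ≠ 0 := by
        obtain ⟨a, ha⟩ := Function.ne_iff.mp hz0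
        intro hc
        have := congrFun hc (v0, a)
        simp [hY] at this
        exact ha this
      have hvec : (blk mval) *ᵥ Y = 0 := by
        funext q
        obtain ⟨u, a⟩ := q
        have hexp : ((blk mval) *ᵥ Y) (u, a)
            = ∑ j, ∑ b, mval u j a b * Y (j, b) := by
          simp only [Matrix.mulVec, dotProduct, Fintype.sum_prod_type, blk,
            Matrix.of_apply]
        rw [hexp]
        rw [← Finset.add_sum_erase _ _ (Finset.mem_univ v0)]
        by_cases hu : u = v0
        · rw [hu]
          have h1 : ∑ b, mval v0 v0 a b * Y (v0, b) = 0 := by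
            simp [hmval]
          rw [h1, zero_add]
          have h2 : ∀ j ∈ E, (∑ b, mval v0 j a b * Y (j, b)) = ∑ b, W j a b * z b := by
            intro j hj
            rw [Finset.mem_erase] at hj
            apply Finset.sum_congr rfl
            intro b _
            simp [hmval, hj.1, hY]
          rw [Finset.sum_congr rfl h2, ← Finset.sum_comm]
          have h3 : ∀ b, (∑ j ∈ E, W j a b * z b) = T a b * z b := by
            intro b
            rw [← Finset.sum_mul]
            congr 1
            rw [hTdef]
            simp [Matrix.sum_apply]
          rw [Finset.sum_congr rfl fun b _ => h3 b]
          exact hzT' a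
        · have h1 : ∑ b, mval u v0 a b * Y (v0, b) = ∑ b, 2 * (W u a b * z b) := by
            apply Finset.sum_congr rfl
            intro b _
            simp [hmval, hu, hY]
            ring
          have h2 : ∀ j ∈ E, (∑ b, mval u j a b * Y (j, b))
              = if j = u then ∑ b, -2 * (W u a b * z b) else 0 := by
            intro j hj
            rw [Finset.mem_erase] at hj
            by_cases hju : j = u
            · subst hju
              rw [if_pos rfl]
              apply Finset.sum_congr rfl
              intro b _
              simp [hmval, hu, hj.1, hY]
              ring
            · rw [if_neg hju]
              apply Finset.sum_eq_zero
              intro b _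
              simp [hmval, hu, hj.1, hju]
          rw [h1, Finset.sum_congr rfl h2, Finset.sum_ite_eq' E u
            (fun _ => ∑ b, -2 * (W u a b * z b))]
          have huE : u ∈ E := Finset.mem_erase.mpr ⟨hu, Finset.mem_univ u⟩
          rw [if_pos huE, ← Finset.sum_add_distrib]
          apply Finset.sum_eq_zero
          intro b _
          ring
      exact hMdet (Matrix.exists_mulVec_eq_zero_iff.mp ⟨Y, hYne, hvec⟩)
  · -- backward: blocks unit → M unit
    rintro ⟨hW, hT⟩
    have hWdet : ∀ v ∈ E, IsUnit (W v).det :=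
      fun v hv => (Matrix.isUnit_iff_isUnit_det _).mp (hW v hv)
    have hTdet : IsUnit T.det := (Matrix.isUnit_iff_isUnit_det _).mp hT
    have hTinv : T * T⁻¹ = 1 := Matrix.mul_nonsing_inv _ hTdet
    have hWinv : ∀ v ∈ E, W v * (W v)⁻¹ = 1 :=
      fun v hv => Matrix.mul_nonsing_inv _ (hWdet v hv)
    set nval : Fin n → Fin n → Matrix (Fin s) (Fin s) ℝ := fun v z =>
      if v = v0 then (if z = v0 then (2 : ℝ) • T⁻¹ else T⁻¹)
      else if z = v0 then T⁻¹
      else ((1/2 : ℝ) • T⁻¹ - if z = v then (1/2 : ℝ) • (W v)⁻¹ else 0) with hnval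
    have key : blk mval * blk nval = 1 := by
      rw [blk_mul]
      have : (fun u z => ∑ v, mval u v * nval v z)
          = fun u z => if u = z then (1 : Matrix (Fin s) (Fin s) ℝ) else 0 := by
        funext u z
        rw [← Finset.add_sum_erase _ _ (Finset.mem_univ v0)]
        by_cases hu : u = v0 <;> by_cases hz : z = v0
        · rw [hu, hz, if_pos rfl]
          have h1 : mval v0 v0 * nval v0 v0 = 0 := by simp [hmval]
          have h2 : ∀ v ∈ E, mval v0 v * nval v v0 = W v * T⁻¹ := by
            intro v hv
            rw [Finset.mem_erase] at hv
            simp [hmval, hnval, hv.1]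
          rw [h1, zero_add, Finset.sum_congr rfl h2, ← Finset.sum_mul, ← hTdef, hTinv]
        · rw [if_neg (by rw [hu]; exact Ne.symm hz), hu]
          have h1 : mval v0 v0 * nval v0 z = 0 := by simp [hmval]
          have h2 : ∀ v ∈ E, mval v0 v * nval v z
              = (1/2 : ℝ) • (W v * T⁻¹) - (if z = v then (1/2 : ℝ) • (W v * (W v)⁻¹) else 0) := by
            intro v hv
            rw [Finset.mem_erase] at hv
            simp only [hmval, hnval, if_pos rfl, if_neg hv.1, if_neg hz, if_true]
            rw [Matrix.mul_sub, Matrix.mul_smul]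
            congr 1
            by_cases hzv : z = v
            · rw [if_pos hzv, if_pos hzv, Matrix.mul_smul]
            · rw [if_neg hzv, if_neg hzv, Matrix.mul_zero]
          rw [h1, zero_add, Finset.sum_congr rfl h2, Finset.sum_sub_distrib]
          have h3 : (∑ v ∈ E, (1/2 : ℝ) • (W v * T⁻¹)) = (1/2 : ℝ) • (T * T⁻¹) := by
            rw [← Finset.smul_sum, ← Finset.sum_mul, ← hTdef]
          have h4 : (∑ v ∈ E, if z = v then (1/2 : ℝ) • (W v * (W v)⁻¹) else 0)
              = (1/2 : ℝ) • (1 : Matrix (Fin s) (Fin s) ℝ) := by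
            rw [Finset.sum_ite_eq E z (fun v => (1/2 : ℝ) • (W v * (W v)⁻¹))]
            rw [if_pos (Finset.mem_erase.mpr ⟨hz, Finset.mem_univ z⟩),
              hWinv z (Finset.mem_erase.mpr ⟨hz, Finset.mem_univ z⟩)]
          rw [h3, h4, hTinv, sub_self]
        · rw [if_neg (by rw [hz]; exact hu), hz]
          have h1 : mval u v0 * nval v0 v0 = (2 : ℝ) • (W u * T⁻¹) := by
            simp only [hmval, hnval, if_neg hu, if_pos rfl, if_true]
            rw [Matrix.mul_smul]
          have h2 : ∀ v ∈ E, mval u v * nval v v0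
              = if v = u then (-2 : ℝ) • (W u * T⁻¹) else 0 := by
            intro v hv
            rw [Finset.mem_erase] at hv
            by_cases hvu : v = u
            · subst hvu
              rw [if_pos rfl]
              simp only [hmval, hnval, if_neg hu, if_neg hv.1, if_pos rfl, if_true]
              rw [Matrix.smul_mul]
            · rw [if_neg hvu]
              simp only [hmval, hnval, if_neg hu, if_neg hv.1, if_neg hvu, Matrix.zero_mul]
          rw [h1, Finset.sum_congr rfl h2,
            Finset.sum_ite_eq' E u (fun _ => (-2 : ℝ) • (W u * T⁻¹)),
            if_pos (Finset.mem_erase.mpr ⟨hu, Finset.mem_univ u⟩), ← add_smul]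
          norm_num
        · -- u ≠ v0, z ≠ v0
          have huE : u ∈ E := Finset.mem_erase.mpr ⟨hu, Finset.mem_univ u⟩
          have h1 : mval u v0 * nval v0 z = W u * T⁻¹ := by
            simp only [hmval, hnval, if_neg hu, if_pos rfl, if_neg hz, if_true]
          have h2 : ∀ v ∈ E, mval u v * nval v z
              = if v = u then (-2 : ℝ) • (W u * nval u z) else 0 := by
            intro v hv
            rw [Finset.mem_erase] at hv
            by_cases hvu : v = u
            · subst hvu
              rw [if_pos rfl]
              simp only [hmval, if_neg hu, if_neg hv.1, if_pos rfl, if_true]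
              rw [Matrix.smul_mul]
            · rw [if_neg hvu]
              simp only [hmval, if_neg hu, if_neg hv.1, if_neg hvu, Matrix.zero_mul]
          rw [h1, Finset.sum_congr rfl h2,
            Finset.sum_ite_eq' E u (fun _ => (-2 : ℝ) • (W u * nval u z)),
            if_pos huE]
          have hnu : nval u z
              = (1/2 : ℝ) • T⁻¹ - (if z = u then (1/2 : ℝ) • (W u)⁻¹ else 0) := by
            simp only [hnval, if_neg hu, if_neg hz]
          rw [hnu, Matrix.mul_sub, Matrix.mul_smul, smul_sub, smul_smul]
          by_cases hzu : z = u
          · rw [if_pos hzu, if_pos hzu.symm, Matrix.mul_smul, smul_smul,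
              hWinv u huE]
            norm_num
          · rw [if_neg hzu, if_neg fun h => hzu h.symm, Matrix.mul_zero, smul_zero,
              sub_zero]
            norm_num
      rw [this, blk_one]
    exact (Matrix.isUnit_iff_isUnit_det _).mpr (Matrix.isUnit_det_of_right_inverse key)
namespace DistTreeAux

lemma beta_mul_gamma {n : ℕ} {G : SimpleGraph (Fin n)} (hT : G.IsTree) (v0 : Fin n) :
    (Matrix.of fun i v : Fin n => if v = v0 then (if i = v0 then (1:ℝ) else 0)
        else (if i = v then (1:ℝ) else 0) - (if i = par hT v0 v then 1 else 0)) *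
      (Matrix.of fun v j : Fin n => if v ∈ (pth hT j v0).support then (1:ℝ) else 0) = 1 := by
  classical
  set β : Matrix (Fin n) (Fin n) ℝ := Matrix.of fun i v : Fin n =>
    if v = v0 then (if i = v0 then (1:ℝ) else 0)
      else (if i = v then (1:ℝ) else 0) - (if i = par hT v0 v then 1 else 0) with hβ
  set γ : Matrix (Fin n) (Fin n) ℝ := Matrix.of fun v j : Fin n =>
    if v ∈ (pth hT j v0).support then (1:ℝ) else 0 with hγ
  have key : ∀ (N : ℕ) (j : Fin n), (pth hT j v0).length ≤ N →
      ∀ i, (∑ v, β i v * γ v j) = if i = j then 1 else 0 := by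
    intro N
    induction N with
    | zero =>
      intro j hlen i
      have hj : j = v0 := by
        by_contra hj
        have := Walk.not_nil_iff_lt_length.mp (Walk.not_nil_of_ne hj (p := pth hT j v0))
        omega
      subst hj
      have hγv : ∀ v, γ v j = if v = j then (1:ℝ) else 0 := by
        intro v
        simp [hγ, pth_self hT j]
      simp only [hγv, mul_ite, mul_one, mul_zero]
      rw [Finset.sum_ite_eq' Finset.univ j (fun v => β i v), if_pos (Finset.mem_univ j)]
      simp [hβ]
    | succ N ih =>
      intro j hlen i
      by_cases hj : j = v0
      · subst hj
        have hγv : ∀ v, γ v j = if v = j then (1:ℝ) else 0 := by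
          intro v
          simp [hγ, pth_self hT j]
        simp only [hγv, mul_ite, mul_one, mul_zero]
        rw [Finset.sum_ite_eq' Finset.univ j (fun v => β i v), if_pos (Finset.mem_univ j)]
        simp [hβ]
      · have hjp : G.Adj j (par hT v0 j) := adj_par hT hj
        have hsupp := support_pth_eq_cons hT hj
        have hjnot := notMem_support_par hT hj
        have hγsplit : ∀ v, γ v j = γ v (par hT v0 j) + (if v = j then 1 else 0) := by
          intro v
          by_cases hvj : v = j
          · rw [if_pos hvj]
            have h1 : γ v j = 1 := by
              simp [hγ, hsupp, hvj]
            have h2 : γ v (par hT v0 j) = 0 := by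
              simp only [hγ, Matrix.of_apply]
              rw [hvj, if_neg hjnot]
            rw [h1, h2, zero_add]
          · rw [if_neg hvj, hγ]
            simp only [Matrix.of_apply, hsupp, List.mem_cons]
            rw [add_zero]
            congr 1
            simp [hvj]
        have hβj : ∀ i, β i j = (if i = j then (1:ℝ) else 0) - (if i = par hT v0 j then 1 else 0) := by
          intro i; simp [hβ, hj]
        have hlen' : (pth hT (par hT v0 j) v0).length ≤ N := by
          have := length_par_lt hT hj
          omega
        calc ∑ v, β i v * γ v j
            = (∑ v, β i v * γ v (par hT v0 j)) + ∑ v, β i v * (if v = j then 1 else 0) := by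
              rw [← Finset.sum_add_distrib]
              apply Finset.sum_congr rfl
              intro v _
              rw [hγsplit v, mul_add]
          _ = (if i = par hT v0 j then 1 else 0) + β i j := by
              rw [ih _ hlen' i]
              congr 1
              simp only [mul_ite, mul_one, mul_zero]
              rw [Finset.sum_ite_eq' Finset.univ j (fun v => β i v), if_pos (Finset.mem_univ j)]
          _ = if i = j then 1 else 0 := by
              rw [hβj i]
              ring
  ext i j
  rw [Matrix.mul_apply, Matrix.one_apply]
  exact key (pth hT j v0).length j le_rfl i

end DistTreeAux

open DistTreeAux

/-- Let `T` be a tree on `n` vertices whose edges are assigned `s × s` real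
matrix weights and let `D` be its distance matrix.  Then `D` is invertible if and only if
every edge weight matrix is invertible and the sum of all the edge weight matrices is
invertible. -/
theorem distanceMatrix_invertible_iff {n s : ℕ}
    (G : SimpleGraph (Fin n)) [DecidableRel G.Adj] (hT : G.IsTree)
    (w : Sym2 (Fin n) → Matrix (Fin s) (Fin s) ℝ)
    (D : Matrix (Fin n × Fin s) (Fin n × Fin s) ℝ)
    (hD : ∀ (i j : Fin n) (p : G.Walk i j), p.IsPath →
      ∀ a b, D (i, a) (j, b) = ((p.edges.map w).sum) a b) :
    IsUnit D ↔ (∀ e ∈ G.edgeFinset, IsUnit (w e)) ∧ IsUnit (∑ e ∈ G.edgeFinset, w e) := by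
  classical
  obtain ⟨v0⟩ := hT.isConnected.nonempty
  set d : Fin n → Fin n → Matrix (Fin s) (Fin s) ℝ :=
    fun i j => Matrix.of fun a b => D (i, a) (j, b) with hd_def
  have hDblk : D = blk d := by
    ext ⟨i, a⟩ ⟨j, b⟩
    rfl
  have hd : ∀ (i j : Fin n) (p : G.Walk i j), p.IsPath → d i j = (p.edges.map w).sum := by
    intro i j p hp
    ext a b
    exact hD i j p hp a b
  have hdsym : ∀ i j, d i j = d j i := by
    intro i j
    rw [hd i j (pth hT i j) (pth_isPath hT i j),
      hd j i (pth hT j i) (pth_isPath hT j i), pth_reverse hT i j]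
    rw [Walk.edges_reverse, List.map_reverse, List.sum_reverse]
  set W : Fin n → Matrix (Fin s) (Fin s) ℝ := fun v => w s(v, par hT v0 v) with hWdef
  have hstep : ∀ v, v ≠ v0 → ∀ j, d j v - d j (par hT v0 v)
      = (if v ∈ (pth hT j v0).support then (-1:ℝ) else 1) • W v := by
    intro v hv j
    have hadj : G.Adj v (par hT v0 v) := adj_par hT hv
    by_cases hm : v ∈ (pth hT j v0).support
    · rw [if_pos hm]
      have hm' : v ∈ (pth hT j (par hT v0 v)).support := (mem_pth_par_iff hT hv j).mpr hm
      obtain ⟨happ, _⟩ := pth_through hT hadj.symm hm'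
      have heq : d j (par hT v0 v) = d j v + W v := by
        rw [hd j (par hT v0 v) _ (pth_isPath hT j (par hT v0 v)),
          hd j v _ (pth_isPath hT j v)]
        conv_lhs => rw [happ]
        rw [Walk.edges_append]
        simp [hWdef]
      rw [heq, neg_smul, one_smul]
      abel
    · rw [if_neg hm]
      have hm' : v ∉ (pth hT j (par hT v0 v)).support :=
        fun h => hm ((mem_pth_par_iff hT hv j).mp h)
      have heq : d j v = d j (par hT v0 v) + W v := by
        rw [hd j v _ (pth_isPath hT j v),
          hd j (par hT v0 v) _ (pth_isPath hT j (par hT v0 v))]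
        conv_lhs => rw [pth_concat hT hadj.symm hm']
        rw [Walk.edges_concat]
        simp [hWdef, Sym2.eq_swap]
      rw [heq, one_smul]
      abel
  set E : Finset (Fin n) := Finset.univ.erase v0 with hE
  set TS : Matrix (Fin s) (Fin s) ℝ := ∑ v ∈ E, W v with hTS
  set β : Matrix (Fin n) (Fin n) ℝ := Matrix.of fun i v =>
    if v = v0 then (if i = v0 then (1:ℝ) else 0)
      else (if i = v then (1:ℝ) else 0) - (if i = par hT v0 v then 1 else 0) with hβ
  set γ : Matrix (Fin n) (Fin n) ℝ := Matrix.of fun v j =>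
    if v ∈ (pth hT j v0).support then (1:ℝ) else 0 with hγ
  have hβγ : β * γ = 1 := beta_mul_gamma hT v0
  have hγβ : γ * β = 1 := mul_eq_one_comm.mp hβγ
  set Bb : Matrix (Fin n × Fin s) (Fin n × Fin s) ℝ :=
    blk (fun i v => β i v • (1 : Matrix (Fin s) (Fin s) ℝ)) with hBbdef
  set Cb : Matrix (Fin n × Fin s) (Fin n × Fin s) ℝ :=
    blk (fun v i => β i v • (1 : Matrix (Fin s) (Fin s) ℝ)) with hCbdef
  have hBb : IsUnit Bb := by
    apply (Matrix.isUnit_iff_isUnit_det _).mpr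
    apply Matrix.isUnit_det_of_right_inverse
      (B := blk (fun v j => γ v j • (1 : Matrix (Fin s) (Fin s) ℝ)))
    rw [hBbdef, blk_mul, ← blk_one]
    refine congrArg blk ?_
    funext i j
    have h1 : ∀ v, (β i v • (1:Matrix (Fin s) (Fin s) ℝ)) * (γ v j • 1)
        = (β i v * γ v j) • (1:Matrix (Fin s) (Fin s) ℝ) := by
      intro v
      rw [Matrix.smul_mul, Matrix.mul_smul, smul_smul, Matrix.one_mul]
    rw [Finset.sum_congr rfl fun v _ => h1 v, ← Finset.sum_smul]
    have h2 : (∑ v, β i v * γ v j) = (1 : Matrix (Fin n) (Fin n) ℝ) i j := by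
      rw [← hβγ, Matrix.mul_apply]
    rw [h2, Matrix.one_apply]
    by_cases h : i = j <;> simp [h]
  have hCb : IsUnit Cb := by
    apply (Matrix.isUnit_iff_isUnit_det _).mpr
    apply Matrix.isUnit_det_of_right_inverse
      (B := blk (fun i z => γ z i • (1 : Matrix (Fin s) (Fin s) ℝ)))
    rw [hCbdef, blk_mul, ← blk_one]
    refine congrArg blk ?_
    funext v z
    have h1 : ∀ i, (β i v • (1:Matrix (Fin s) (Fin s) ℝ)) * (γ z i • 1)
        = (γ z i * β i v) • (1:Matrix (Fin s) (Fin s) ℝ) := by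
      intro i
      rw [Matrix.smul_mul, Matrix.mul_smul, smul_smul, Matrix.one_mul, mul_comm]
    rw [Finset.sum_congr rfl fun i _ => h1 i, ← Finset.sum_smul]
    have h2 : (∑ i, γ z i * β i v) = (1 : Matrix (Fin n) (Fin n) ℝ) z v := by
      rw [← hγβ, Matrix.mul_apply]
    rw [h2, Matrix.one_apply]
    by_cases h : v = z <;> simp [h, Ne.symm]
  have hβsum : ∀ (v : Fin n) (F : Fin n → Matrix (Fin s) (Fin s) ℝ),
      (∑ i, β i v • F i) = if v = v0 then F v0 else F v - F (par hT v0 v) := by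
    intro v F
    by_cases hv : v = v0
    · rw [if_pos hv]
      have h1 : ∀ i, β i v • F i = (if i = v0 then (1:ℝ) else 0) • F i := by
        intro i
        rw [hβ]
        simp [hv]
      rw [Finset.sum_congr rfl fun i _ => h1 i]
      simp only [ite_smul, one_smul, zero_smul]
      rw [Finset.sum_ite_eq' Finset.univ v0 F, if_pos (Finset.mem_univ v0)]
    · rw [if_neg hv]
      have h1 : ∀ i, β i v • F i
          = (if i = v then (1:ℝ) else 0) • F i - (if i = par hT v0 v then (1:ℝ) else 0) • F i := by
        intro i
        rw [hβ]
        simp [hv, sub_smul]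
      rw [Finset.sum_congr rfl fun i _ => h1 i, Finset.sum_sub_distrib]
      simp only [ite_smul, one_smul, zero_smul]
      rw [Finset.sum_ite_eq' Finset.univ v F, Finset.sum_ite_eq' Finset.univ (par hT v0 v) F]
      simp
  set cval : Fin n → Fin n → Matrix (Fin s) (Fin s) ℝ :=
    fun i v => if v = v0 then d i v0 else d i v - d i (par hT v0 v) with hcval
  have hDBb : D * Bb = blk cval := by
    rw [hDblk, hBbdef, blk_mul]
    refine congrArg blk ?_
    funext i v
    have h1 : ∀ j, d i j * (β j v • (1:Matrix (Fin s) (Fin s) ℝ)) = β j v • d i j := by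
      intro j
      rw [Matrix.mul_smul, Matrix.mul_one]
    rw [Finset.sum_congr rfl fun j _ => h1 j, hβsum v (d i)]
  set mval : Fin n → Fin n → Matrix (Fin s) (Fin s) ℝ := fun v z =>
    if v = v0 then (if z = v0 then 0 else W z)
      else if z = v0 then W v else if z = v then (-2 : ℝ) • W v else 0 with hmval
  have hMeq : Cb * (D * Bb) = blk mval := by
    rw [hDBb, hCbdef, blk_mul]
    refine congrArg blk ?_
    funext v z
    have h1 : ∀ i, (β i v • (1:Matrix (Fin s) (Fin s) ℝ)) * cval i z = β i v • cval i z := by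
      intro i
      rw [Matrix.smul_mul, Matrix.one_mul]
    rw [Finset.sum_congr rfl fun i _ => h1 i, hβsum v (fun i => cval i z)]
    by_cases hv : v = v0 <;> by_cases hz : z = v0
    · simp only [hmval, hcval, if_pos hv, if_pos hz]
      rw [hd v0 v0 Walk.nil Walk.IsPath.nil]
      simp
    · simp only [hmval, hcval, if_pos hv, if_neg hz]
      rw [hstep z hz v0, pth_self hT v0]
      have hns : z ∉ (Walk.nil : G.Walk v0 v0).support := by
        simp [hz]
      rw [if_neg hns, one_smul]
    · simp only [hmval, hcval, if_neg hv, if_pos hz]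
      rw [hdsym v v0, hdsym (par hT v0 v) v0, hstep v hv v0, pth_self hT v0]
      have hns : v ∉ (Walk.nil : G.Walk v0 v0).support := by
        simp [hv]
      rw [if_neg hns, one_smul]
    · simp only [hmval, hcval, if_neg hv, if_neg hz]
      rw [hstep z hz v, hstep z hz (par hT v0 v)]
      by_cases hzv : z = v
      · rw [if_pos hzv]
        have hm1 : z ∈ (pth hT v v0).support := by
          rw [hzv]
          exact Walk.start_mem_support _
        have hm2 : z ∉ (pth hT (par hT v0 v) v0).support := by
          rw [hzv]
          exact notMem_support_par hT hv
        rw [if_pos hm1, if_neg hm2, ← sub_smul, hzv]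
        norm_num
      · rw [if_neg hzv]
        have hiff : (z ∈ (pth hT v v0).support) ↔ (z ∈ (pth hT (par hT v0 v) v0).support) := by
          rw [support_pth_eq_cons hT hv, List.mem_cons]
          simp [hzv]
        by_cases hm : z ∈ (pth hT (par hT v0 v) v0).support
        · rw [if_pos (hiff.mpr hm), if_pos hm, sub_self]
        · rw [if_neg (fun h => hm (hiff.mp h)), if_neg hm, sub_self]
  have hDiff : IsUnit D ↔ IsUnit (blk mval) := by
    constructor
    · intro h
      rw [← hMeq]
      exact hCb.mul (h.mul hBb)
    · intro h
      obtain ⟨uC, huC⟩ := hCb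
      obtain ⟨uB, huB⟩ := hBb
      have h1 : (↑uC⁻¹ : Matrix (Fin n × Fin s) (Fin n × Fin s) ℝ) * Cb = 1 := by
        rw [← huC]
        exact uC.inv_mul
      have h2 : Bb * (↑uB⁻¹ : Matrix (Fin n × Fin s) (Fin n × Fin s) ℝ) = 1 := by
        rw [← huB]
        exact uB.mul_inv
      have hid : (↑uC⁻¹ : Matrix (Fin n × Fin s) (Fin n × Fin s) ℝ) * (Cb * (D * Bb))
          * (↑uB⁻¹ : Matrix (Fin n × Fin s) (Fin n × Fin s) ℝ) = D := by
        rw [show (↑uC⁻¹ : Matrix (Fin n × Fin s) (Fin n × Fin s) ℝ) * (Cb * (D * Bb))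
            = D * Bb from by rw [← Matrix.mul_assoc, h1, Matrix.one_mul]]
        rw [Matrix.mul_assoc, h2, Matrix.mul_one]
      rw [← hid, hMeq]
      exact ((Units.isUnit _).mul h).mul (Units.isUnit _)
  have hmaps : ∀ v ∈ E, s(v, par hT v0 v) ∈ G.edgeFinset := by
    intro v hv
    rw [hE, Finset.mem_erase] at hv
    rw [SimpleGraph.mem_edgeFinset, SimpleGraph.mem_edgeSet]
    exact adj_par hT hv.1
  have hinj : ∀ v ∈ E, ∀ v' ∈ E, s(v, par hT v0 v) = s(v', par hT v0 v') → v = v' := by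
    intro v hv v' hv' heq
    rw [hE, Finset.mem_erase] at hv hv'
    rw [Sym2.eq_iff] at heq
    rcases heq with ⟨h1, _⟩ | ⟨h1, h2⟩
    · exact h1
    · exfalso
      have hpv' : par hT v0 v' ≠ v0 := by
        rw [← h1]
        exact hv.1
      have hne := par_par_ne hT hv'.1 hpv'
      rw [← h1] at hne
      exact hne h2
  have hsurj : ∀ e ∈ G.edgeFinset, ∃ v, ∃ hv : v ∈ E, s(v, par hT v0 v) = e := by
    intro e he
    induction e using Sym2.ind with
    | _ x y =>
      rw [SimpleGraph.mem_edgeFinset, SimpleGraph.mem_edgeSet] at he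
      rcases adj_par_or hT (v0 := v0) he with ⟨hx, hpx⟩ | ⟨hy, hpy⟩
      · exact ⟨x, by rw [hE]; exact Finset.mem_erase.mpr ⟨hx, Finset.mem_univ x⟩, by rw [hpx]⟩
      · exact ⟨y, by rw [hE]; exact Finset.mem_erase.mpr ⟨hy, Finset.mem_univ y⟩,
          by rw [hpy, Sym2.eq_swap]⟩
  have hsum : (∑ e ∈ G.edgeFinset, w e) = TS := by
    rw [hTS]
    exact (Finset.sum_bij (fun v _ => s(v, par hT v0 v)) hmaps hinj hsurj
      (fun v _ => rfl)).symm
  have hforall : (∀ e ∈ G.edgeFinset, IsUnit (w e)) ↔ (∀ v ∈ E, IsUnit (W v)) := by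
    constructor
    · intro h v hv
      exact h _ (hmaps v hv)
    · intro h e he
      obtain ⟨v, hv, rfl⟩ := hsurj e he
      exact h v hv
  rw [hsum, hDiff, hforall]
  rw [hmval]
  exact arrow_unit_iff v0 W
end

section
/- Let T be a tree on n vertices with s×s real matrix edge weights W_1,…,W_{n−1} such that each W_i and the sum ∑_{i=1}^{n−1} W_i are invertible, let D be the distance matrix of T, and let L be the Laplacian matrix of T formed from the inverses of the weights. For i = 1,…,n let δ_i = 2 − d_i, where d_i is the degree of vertex i, and let δ = (δ_1,…,δ_n)^T. Then D^{-1} = −(1/2)L + (1/2)(δδ^T) ⊗ (∑_{i=1}^{n−1} W_i)^{-1}. -/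
open Matrix
open scoped Kronecker

set_option linter.unusedSectionVars false

namespace TreeDistAux

open SimpleGraph Walk

variable {n s : ℕ} {G : SimpleGraph (Fin n)} [DecidableRel G.Adj]

noncomputable def pathB (hT : G.IsTree) (i j : Fin n) : G.Walk i j :=
  (hT.existsUnique_path i j).choose

lemma pathB_isPath (hT : G.IsTree) (i j : Fin n) : (pathB hT i j).IsPath :=
  (hT.existsUnique_path i j).choose_spec.1

lemma pathB_unique (hT : G.IsTree) {i j : Fin n} (p : G.Walk i j) (hp : p.IsPath) :
    p = pathB hT i j :=
  (hT.existsUnique_path i j).choose_spec.2 p hp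

lemma pathB_self (hT : G.IsTree) (j : Fin n) : pathB hT j j = Walk.nil :=
  (pathB_unique hT Walk.nil (by simp)).symm

lemma dichotomy (hT : G.IsTree) {k i : Fin n} (h : G.Adj k i) (j : Fin n) :
    pathB hT k j = Walk.cons h (pathB hT i j) ∨
      pathB hT i j = Walk.cons h.symm (pathB hT k j) := by
  by_cases hk : k ∈ (pathB hT i j).support
  · right
    have hp := pathB_isPath hT i j
    have h1 : (pathB hT i j).takeUntil k hk = Walk.cons h.symm Walk.nil :=
      (pathB_unique hT _ (hp.takeUntil hk)).trans
        (pathB_unique hT (Walk.cons h.symm Walk.nil)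
          (by simp [Walk.cons_isPath_iff, h.ne'])).symm
    have h2 : (pathB hT i j).dropUntil k hk = pathB hT k j :=
      pathB_unique hT _ (hp.dropUntil hk)
    calc pathB hT i j
        = ((pathB hT i j).takeUntil k hk).append ((pathB hT i j).dropUntil k hk) :=
          (Walk.take_spec _ hk).symm
      _ = Walk.cons h.symm (pathB hT k j) := by rw [h1, h2]; rfl
  · left
    exact (pathB_unique hT (Walk.cons h (pathB hT i j))
      ((pathB_isPath hT i j).cons hk)).symm

lemma exists_parent (hT : G.IsTree) {i j : Fin n} (hij : i ≠ j) :
    ∃ (k : Fin n) (h : G.Adj i k), pathB hT i j = Walk.cons h (pathB hT k j) := by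
  have hnil : ¬ (pathB hT i j).Nil := Walk.not_nil_of_ne hij
  obtain ⟨k, h, q, hq⟩ := Walk.not_nil_iff.mp hnil
  have hp := pathB_isPath hT i j
  rw [hq, Walk.cons_isPath_iff] at hp
  exact ⟨k, h, by rw [hq, pathB_unique hT q hp.1]⟩

lemma parent_unique (hT : G.IsTree) {i j k k' : Fin n} (h : G.Adj i k) (h' : G.Adj i k')
    (e1 : pathB hT i j = Walk.cons h (pathB hT k j))
    (e2 : pathB hT i j = Walk.cons h' (pathB hT k' j)) : k = k' := by
  have := congrArg (fun p => p.getVert 1) (e1.symm.trans e2)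
  simpa using this

variable (w : Sym2 (Fin n) → Matrix (Fin s) (Fin s) ℝ)

noncomputable def dmat (hT : G.IsTree) (i j : Fin n) : Matrix (Fin s) (Fin s) ℝ :=
  ((pathB hT i j).edges.map w).sum

lemma dmat_self (hT : G.IsTree) (j : Fin n) : dmat w hT j j = 0 := by
  simp [dmat, pathB_self]

lemma dmat_cons (hT : G.IsTree) {i j k : Fin n} (h : G.Adj i k)
    (e1 : pathB hT i j = Walk.cons h (pathB hT k j)) :
    dmat w hT i j = w (s(i, k)) + dmat w hT k j := by
  rw [dmat, e1]
  simp [dmat]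

noncomputable def Lb (G : SimpleGraph (Fin n)) [DecidableRel G.Adj]
    (w : Sym2 (Fin n) → Matrix (Fin s) (Fin s) ℝ) (i k : Fin n) :
    Matrix (Fin s) (Fin s) ℝ :=
  if i = k then ∑ m ∈ G.neighborFinset i, (w (s(i, m)))⁻¹
  else if G.Adj i k then -(w (s(i, k)))⁻¹ else 0

lemma matLap_apply (i k : Fin n) (a c : Fin s) :
    matLap G w (i, a) (k, c) = Lb G w i k a c := by
  unfold matLap Lb
  by_cases h1 : i = k
  · subst h1; simp
  · by_cases h2 : G.Adj i k <;> simp [h1, h2]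

variable (hw' : ∀ {a b : Fin n}, G.Adj a b → IsUnit (w (s(a, b))))

section
include hw'

lemma winv_mul {a b : Fin n} (h : G.Adj a b) :
    (w (s(a, b)))⁻¹ * w (s(a, b)) = 1 :=
  Matrix.nonsing_inv_mul _ ((Matrix.isUnit_iff_isUnit_det _).mp (hw' h))

lemma LD_block (hT : G.IsTree) (i j : Fin n) :
    ∑ k, Lb G w i k * dmat w hT k j =
      (((2 : ℝ) - G.degree i) - (if i = j then 2 else 0)) • (1 : Matrix (Fin s) (Fin s) ℝ) := by
  classical
  have hsplit : ∑ k, Lb G w i k * dmat w hT k j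
      = ∑ k ∈ G.neighborFinset i,
          (w (s(i, k)))⁻¹ * (dmat w hT i j - dmat w hT k j) := by
    rw [← Finset.add_sum_erase _ _ (Finset.mem_univ i)]
    have hdiag : Lb G w i i * dmat w hT i j
        = ∑ k ∈ G.neighborFinset i, (w (s(i, k)))⁻¹ * dmat w hT i j := by
      rw [Lb, if_pos rfl, Finset.sum_mul]
    have hoff : ∑ k ∈ Finset.univ.erase i, Lb G w i k * dmat w hT k j
        = ∑ k ∈ G.neighborFinset i, -((w (s(i, k)))⁻¹ * dmat w hT k j) := by
      have h1 : ∀ k ∈ Finset.univ.erase i, Lb G w i k * dmat w hT k j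
          = if G.Adj i k then -((w (s(i, k)))⁻¹ * dmat w hT k j) else 0 := by
        intro k hk
        have hik : i ≠ k := fun h => (Finset.mem_erase.mp hk).1 h.symm
        rw [Lb, if_neg hik]
        by_cases h2 : G.Adj i k <;> simp [h2]
      rw [Finset.sum_congr rfl h1, ← Finset.sum_filter]
      congr 1
      ext k
      simp only [Finset.mem_filter, Finset.mem_erase, Finset.mem_univ, true_and, and_true,
        SimpleGraph.mem_neighborFinset]
      exact ⟨fun h => h.2, fun h => ⟨h.ne', h⟩⟩
    rw [hdiag, hoff, ← Finset.sum_add_distrib]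
    exact Finset.sum_congr rfl fun k _ => by rw [mul_sub, ← sub_eq_add_neg]
  rw [hsplit]
  by_cases hij : i = j
  · subst hij
    have hval : ∀ k ∈ G.neighborFinset i,
        (w (s(i, k)))⁻¹ * (dmat w hT i i - dmat w hT k i)
          = -(1 : Matrix (Fin s) (Fin s) ℝ) := by
      intro k hk
      have hik : G.Adj i k := (SimpleGraph.mem_neighborFinset _ _ _).mp hk
      rcases dichotomy hT hik.symm i with hc | hc
      · have hd := dmat_cons w hT hik.symm hc
        rw [hd, dmat_self, add_zero, zero_sub, mul_neg,
          show s(k, i) = s(i, k) from Sym2.eq_swap, winv_mul w hw' hik]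
      · exfalso
        rw [pathB_self] at hc
        exact SimpleGraph.Walk.not_nil_cons (hc ▸ SimpleGraph.Walk.nil_nil)
    rw [Finset.sum_congr rfl hval, Finset.sum_const, SimpleGraph.card_neighborFinset_eq_degree]
    rw [if_pos rfl]
    have : ((2 : ℝ) - G.degree i - 2) = -(G.degree i : ℝ) := by ring
    rw [this, neg_smul, ← Nat.cast_smul_eq_nsmul ℝ, smul_neg]
  · obtain ⟨k₀, h₀, e₀⟩ := exists_parent hT hij
    have hk₀ : k₀ ∈ G.neighborFinset i := (SimpleGraph.mem_neighborFinset _ _ _).mpr h₀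
    rw [← Finset.add_sum_erase _ _ hk₀]
    have hval₀ : (w (s(i, k₀)))⁻¹ * (dmat w hT i j - dmat w hT k₀ j)
        = (1 : Matrix (Fin s) (Fin s) ℝ) := by
      rw [dmat_cons w hT h₀ e₀, add_sub_cancel_right, winv_mul w hw' h₀]
    have hval : ∀ k ∈ (G.neighborFinset i).erase k₀,
        (w (s(i, k)))⁻¹ * (dmat w hT i j - dmat w hT k j)
          = -(1 : Matrix (Fin s) (Fin s) ℝ) := by
      intro k hk
      obtain ⟨hkk₀, hkN⟩ := Finset.mem_erase.mp hk
      have hik : G.Adj i k := (SimpleGraph.mem_neighborFinset _ _ _).mp hkN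
      rcases dichotomy hT hik.symm j with hc | hc
      · rw [dmat_cons w hT hik.symm hc]
        rw [show s(k, i) = s(i, k) from Sym2.eq_swap]
        rw [show dmat w hT i j - (w (s(i, k)) + dmat w hT i j)
          = -(w (s(i, k))) by abel]
        rw [mul_neg, winv_mul w hw' hik]
      · exact absurd (parent_unique hT hik.symm.symm h₀ hc e₀) hkk₀
    rw [hval₀, Finset.sum_congr rfl hval, Finset.sum_const, Finset.card_erase_of_mem hk₀,
      SimpleGraph.card_neighborFinset_eq_degree, if_neg hij]
    have hd : 1 ≤ G.degree i := by
      rw [← SimpleGraph.card_neighborFinset_eq_degree]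
      exact Finset.card_pos.mpr ⟨k₀, hk₀⟩
    rw [← Nat.cast_smul_eq_nsmul ℝ, smul_neg, sub_zero]
    have : ((2 : ℝ) - G.degree i) = 1 - ((G.degree i : ℕ) - 1 : ℕ) := by
      push_cast [hd]
      ring
    rw [this, sub_smul, one_smul, sub_eq_add_neg]

end

def IsPar (hT : G.IsTree) (j : Fin n) (p : Fin n × Fin n) : Prop :=
  ∃ h : G.Adj p.1 p.2, pathB hT p.1 j = Walk.cons h (pathB hT p.2 j)

lemma isPar_not_both (hT : G.IsTree) (j : Fin n) (p : Fin n × Fin n) :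
    ¬(IsPar hT j p ∧ IsPar hT j p.swap) := by
  rintro ⟨⟨h1, e1⟩, ⟨h2, e2⟩⟩
  have l1 := congrArg SimpleGraph.Walk.length e1
  have l2 := congrArg SimpleGraph.Walk.length e2
  simp only [SimpleGraph.Walk.length_cons, Prod.fst_swap, Prod.snd_swap] at l1 l2
  omega

lemma isPar_ne (hT : G.IsTree) {j : Fin n} {p : Fin n × Fin n} (hp : IsPar hT j p) :
    p.1 ≠ j := by
  obtain ⟨h, e⟩ := hp
  intro hj
  subst hj
  rw [pathB_self] at e
  exact SimpleGraph.Walk.not_nil_cons (e ▸ SimpleGraph.Walk.nil_nil)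

lemma isPar_unique (hT : G.IsTree) {j k m m' : Fin n}
    (h1 : IsPar hT j (k, m)) (h2 : IsPar hT j (k, m')) : m = m' := by
  obtain ⟨h, e⟩ := h1
  obtain ⟨h', e'⟩ := h2
  exact parent_unique hT h h' e e'

lemma isPar_exists (hT : G.IsTree) {j k : Fin n} (hk : k ≠ j) :
    ∃ m, IsPar hT j (k, m) := by
  obtain ⟨m, h, e⟩ := exists_parent hT hk
  exact ⟨m, h, e⟩

lemma isPar_dmat (hT : G.IsTree) {j : Fin n} {p : Fin n × Fin n} (hp : IsPar hT j p) :
    dmat w hT p.1 j = w (s(p.1, p.2)) + dmat w hT p.2 j := by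
  obtain ⟨h, e⟩ := hp
  exact dmat_cons w hT h e

lemma delta_sum (hT : G.IsTree) (j : Fin n) :
    ∑ k, ((2 : ℝ) - G.degree k) • dmat w hT k j = ∑ e ∈ G.edgeFinset, w e := by
  classical
  -- degree-weighted sum as a sum over adjacent ordered pairs
  have hdeg : ∑ k, (G.degree k : ℝ) • dmat w hT k j
      = ∑ p ∈ Finset.univ.filter (fun p : Fin n × Fin n => G.Adj p.1 p.2),
          dmat w hT p.1 j := by
    rw [Finset.sum_filter, Fintype.sum_prod_type]
    refine Finset.sum_congr rfl fun k _ => ?_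
    show (G.degree k : ℝ) • dmat w hT k j
      = ∑ a : Fin n, if G.Adj k a then dmat w hT k j else 0
    rw [← Finset.sum_filter, Finset.sum_const, Nat.cast_smul_eq_nsmul,
      ← SimpleGraph.card_neighborFinset_eq_degree, SimpleGraph.neighborFinset_eq_filter]
  have hdisj : Disjoint (Finset.univ.filter (IsPar hT j))
      ((Finset.univ.filter (IsPar hT j)).image Prod.swap) := by
    rw [Finset.disjoint_left]
    intro p hp hq
    obtain ⟨q, hqB, hqp⟩ := Finset.mem_image.mp hq
    refine isPar_not_both hT j q ⟨(Finset.mem_filter.mp hqB).2, ?_⟩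
    rw [hqp]
    exact (Finset.mem_filter.mp hp).2
  have hunion : Finset.univ.filter (fun p : Fin n × Fin n => G.Adj p.1 p.2)
      = Finset.univ.filter (IsPar hT j)
        ∪ (Finset.univ.filter (IsPar hT j)).image Prod.swap := by
    ext p
    simp only [Finset.mem_filter, Finset.mem_univ, true_and, Finset.mem_union,
      Finset.mem_image]
    constructor
    · intro h
      rcases dichotomy hT h j with hc | hc
      · exact Or.inl ⟨h, hc⟩
      · exact Or.inr ⟨p.swap, ⟨h.symm, hc⟩, Prod.swap_swap p⟩
    · rintro (⟨h, _⟩ | ⟨q, hq, rfl⟩)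
      · exact h
      · exact hq.choose.symm
  have hB1 : ∀ f : Fin n → Matrix (Fin s) (Fin s) ℝ,
      ∑ p ∈ Finset.univ.filter (IsPar hT j), f p.1
        = ∑ k ∈ Finset.univ.erase j, f k := by
    intro f
    refine Finset.sum_bij (fun p _ => p.1) ?_ ?_ ?_ ?_
    · intro p hp
      exact Finset.mem_erase.mpr ⟨isPar_ne hT (Finset.mem_filter.mp hp).2, Finset.mem_univ _⟩
    · intro p hp q hq hpq
      have h1 := (Finset.mem_filter.mp hp).2
      have h2 := (Finset.mem_filter.mp hq).2
      obtain ⟨a, b⟩ := p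
      obtain ⟨c, d⟩ := q
      simp only at hpq
      subst hpq
      exact Prod.ext rfl (isPar_unique hT h1 h2)
    · intro k hk
      obtain ⟨m, hm⟩ := isPar_exists hT (Finset.mem_erase.mp hk).1
      exact ⟨(k, m), Finset.mem_filter.mpr ⟨Finset.mem_univ _, hm⟩, rfl⟩
    · intro p hp
      rfl
  have hB2 : ∑ p ∈ Finset.univ.filter (IsPar hT j), w (s(p.1, p.2))
      = ∑ e ∈ G.edgeFinset, w e := by
    refine Finset.sum_bij (fun p _ => s(p.1, p.2)) ?_ ?_ ?_ ?_
    · intro p hp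
      exact SimpleGraph.mem_edgeFinset.mpr
        ((SimpleGraph.mem_edgeSet _).mpr ((Finset.mem_filter.mp hp).2).choose)
    · intro p hp q hq hpq
      have h1 := (Finset.mem_filter.mp hp).2
      have h2 := (Finset.mem_filter.mp hq).2
      rw [Sym2.eq_iff] at hpq
      rcases hpq with ⟨ha, hb⟩ | ⟨ha, hb⟩
      · exact Prod.ext ha hb
      · exfalso
        refine isPar_not_both hT j q ⟨h2, ?_⟩
        have : p = q.swap := Prod.ext ha hb
        exact this ▸ h1
    · intro e he
      induction e using Sym2.ind with
      | _ u v =>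
        have hadj : G.Adj u v := (SimpleGraph.mem_edgeSet _).mp (SimpleGraph.mem_edgeFinset.mp he)
        rcases dichotomy hT hadj j with hc | hc
        · exact ⟨(u, v), Finset.mem_filter.mpr ⟨Finset.mem_univ _, hadj, hc⟩, rfl⟩
        · exact ⟨(v, u), Finset.mem_filter.mpr ⟨Finset.mem_univ _, hadj.symm, hc⟩,
            Sym2.eq_swap⟩
    · intro p hp
      rfl
  have hswap : ∑ p ∈ Finset.univ.filter (IsPar hT j), dmat w hT p.swap.1 j
      = ∑ p ∈ Finset.univ.filter (IsPar hT j),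
          (dmat w hT p.1 j - w (s(p.1, p.2))) := by
    refine Finset.sum_congr rfl fun p hp => ?_
    have := isPar_dmat w hT (Finset.mem_filter.mp hp).2
    show dmat w hT p.2 j = _
    rw [this]
    abel
  have huniv : ∑ k, dmat w hT k j = ∑ k ∈ Finset.univ.erase j, dmat w hT k j := by
    rw [← Finset.add_sum_erase _ _ (Finset.mem_univ j), dmat_self, zero_add]
  have hkey : ∑ k, (G.degree k : ℝ) • dmat w hT k j
      = (∑ k ∈ Finset.univ.erase j, dmat w hT k j)
        + ((∑ k ∈ Finset.univ.erase j, dmat w hT k j) - ∑ e ∈ G.edgeFinset, w e) := by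
    rw [hdeg, hunion, Finset.sum_union hdisj,
      Finset.sum_image (fun p _ q _ h => Prod.swap_injective h),
      hB1 (fun k => dmat w hT k j), hswap, Finset.sum_sub_distrib,
      hB1 (fun k => dmat w hT k j), hB2]
  calc ∑ k, ((2 : ℝ) - G.degree k) • dmat w hT k j
      = ∑ k, ((2 : ℝ) • dmat w hT k j - (G.degree k : ℝ) • dmat w hT k j) := by
        refine Finset.sum_congr rfl fun k _ => ?_
        rw [sub_smul]
    _ = (2 : ℝ) • ∑ k, dmat w hT k j - ∑ k, (G.degree k : ℝ) • dmat w hT k j := by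
        rw [Finset.sum_sub_distrib, Finset.smul_sum]
    _ = ∑ e ∈ G.edgeFinset, w e := by
        rw [hkey, huniv, two_smul]
        abel

section
include hw'

lemma key (hT : G.IsTree)
    (hsumu : IsUnit (∑ e ∈ G.edgeFinset, w e))
    (δ : Fin n → ℝ) (hδ : ∀ i, δ i = 2 - (G.degree i : ℝ)) (i j : Fin n) :
    ∑ k, ((-(1/2) : ℝ) • Lb G w i k
        + ((1/2) * (δ i * δ k)) • (∑ e ∈ G.edgeFinset, w e)⁻¹) * dmat w hT k j
      = if i = j then (1 : Matrix (Fin s) (Fin s) ℝ) else 0 := by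
  classical
  have hWinv : (∑ e ∈ G.edgeFinset, w e)⁻¹ * (∑ e ∈ G.edgeFinset, w e) = 1 :=
    Matrix.nonsing_inv_mul _ ((Matrix.isUnit_iff_isUnit_det _).mp hsumu)
  have h1 : ∀ k, ((-(1/2) : ℝ) • Lb G w i k
        + ((1/2) * (δ i * δ k)) • (∑ e ∈ G.edgeFinset, w e)⁻¹) * dmat w hT k j
      = (-(1/2) : ℝ) • (Lb G w i k * dmat w hT k j)
        + ((1/2) * δ i) • (δ k • ((∑ e ∈ G.edgeFinset, w e)⁻¹ * dmat w hT k j)) := by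
    intro k
    rw [add_mul, smul_mul_assoc, smul_mul_assoc, smul_smul, mul_assoc]
  rw [Finset.sum_congr rfl fun k _ => h1 k, Finset.sum_add_distrib,
    ← Finset.smul_sum, ← Finset.smul_sum]
  have h2 : ∑ k, δ k • ((∑ e ∈ G.edgeFinset, w e)⁻¹ * dmat w hT k j)
      = (∑ e ∈ G.edgeFinset, w e)⁻¹ * ∑ k, δ k • dmat w hT k j := by
    rw [Matrix.mul_sum]
    exact Finset.sum_congr rfl fun k _ => (Matrix.mul_smul _ _ _).symm
  have h3 : ∑ k, δ k • dmat w hT k j = ∑ e ∈ G.edgeFinset, w e := by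
    rw [Finset.sum_congr rfl fun k _ => by rw [hδ k]]
    exact delta_sum w hT j
  rw [h2, h3, hWinv, LD_block w hw' hT i j, hδ i, smul_smul, ← add_smul]
  by_cases hij : i = j
  · rw [if_pos hij, if_pos hij]
    have hc : (-(1/2) : ℝ) * (((2 : ℝ) - G.degree i) - 2)
        + (1/2) * ((2 : ℝ) - G.degree i) = 1 := by ring
    rw [hc, one_smul]
  · rw [if_neg hij, if_neg hij]
    have hc : (-(1/2) : ℝ) * (((2 : ℝ) - G.degree i) - 0)
        + (1/2) * ((2 : ℝ) - G.degree i) = 0 := by ring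
    rw [hc, zero_smul]

end

end TreeDistAux

/-- Let `T` be a tree on `n` vertices with `s × s` real matrix edge weights such
that each edge weight and the sum of all the edge weights are invertible, let `D` be the
distance matrix of `T`, and let `L` be the Laplacian formed from the inverses of the weights.
With `δᵢ = 2 - dᵢ` (`dᵢ` the degree of vertex `i`),
`D⁻¹ = -(1/2) L + (1/2) (δ δᵀ) ⊗ (∑ᵢ Wᵢ)⁻¹`. -/
theorem distanceMatrix_inv_tree {n s : ℕ}
    (G : SimpleGraph (Fin n)) [DecidableRel G.Adj] (hT : G.IsTree)
    (w : Sym2 (Fin n) → Matrix (Fin s) (Fin s) ℝ)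
    (hw : ∀ e ∈ G.edgeFinset, IsUnit (w e))
    (hsum : IsUnit (∑ e ∈ G.edgeFinset, w e))
    (D : Matrix (Fin n × Fin s) (Fin n × Fin s) ℝ)
    (hD : ∀ (i j : Fin n) (p : G.Walk i j), p.IsPath →
      ∀ a b, D (i, a) (j, b) = ((p.edges.map w).sum) a b)
    (δ : Fin n → ℝ) (hδ : ∀ i, δ i = 2 - (G.degree i : ℝ)) :
    D⁻¹ = (-(1/2) : ℝ) • matLap G w +
      ((1/2) : ℝ) • (vecMulVec δ δ ⊗ₖ (∑ e ∈ G.edgeFinset, w e)⁻¹) := by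
  classical
  have hw' : ∀ {a b : Fin n}, G.Adj a b → IsUnit (w (s(a, b))) := fun {a b} h =>
    hw _ (SimpleGraph.mem_edgeFinset.mpr ((SimpleGraph.mem_edgeSet _).mpr h))
  apply Matrix.inv_eq_left_inv
  ext p q
  obtain ⟨i, a⟩ := p
  obtain ⟨j, b⟩ := q
  rw [Matrix.mul_apply, Fintype.sum_prod_type]
  have hstep : ∀ k : Fin n,
      ∑ c, ((-(1/2) : ℝ) • matLap G w +
        ((1/2) : ℝ) • (vecMulVec δ δ ⊗ₖ (∑ e ∈ G.edgeFinset, w e)⁻¹)) (i, a) (k, c)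
          * D (k, c) (j, b)
      = (((-(1/2) : ℝ) • TreeDistAux.Lb G w i k
          + ((1/2) * (δ i * δ k)) • (∑ e ∈ G.edgeFinset, w e)⁻¹)
            * TreeDistAux.dmat w hT k j) a b := by
    intro k
    rw [Matrix.mul_apply]
    refine Finset.sum_congr rfl fun c _ => ?_
    have hMe : ((-(1/2) : ℝ) • matLap G w +
        ((1/2) : ℝ) • (vecMulVec δ δ ⊗ₖ (∑ e ∈ G.edgeFinset, w e)⁻¹)) (i, a) (k, c)
        = ((-(1/2) : ℝ) • TreeDistAux.Lb G w i k
            + ((1/2) * (δ i * δ k)) • (∑ e ∈ G.edgeFinset, w e)⁻¹) a c := by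
      simp only [Matrix.add_apply, Matrix.smul_apply, TreeDistAux.matLap_apply,
        Matrix.kroneckerMap_apply, Matrix.vecMulVec_apply, smul_eq_mul]
      ring
    have hDe : D (k, c) (j, b) = TreeDistAux.dmat w hT k j c b :=
      hD k j (TreeDistAux.pathB hT k j) (TreeDistAux.pathB_isPath hT k j) c b
    rw [hMe, hDe]
  rw [Finset.sum_congr rfl fun k _ => hstep k, ← Matrix.sum_apply,
    TreeDistAux.key w hw' hT hsum δ hδ i j]
  by_cases hij : i = j
  · subst hij
    simp [Matrix.one_apply, Prod.ext_iff]
  · simp [Matrix.one_apply, Prod.ext_iff, hij]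
end

section
/- Let T be a tree on n vertices whose edges are assigned s×s real positive definite matrix weights, let D be its distance matrix and L its Laplacian matrix formed from the inverses of the weights. Let δ_i denote the degree of the ith vertex, τ = (2−δ_1, 2−δ_2, …, 2−δ_n)^T, Δ = τ ⊗ I_s, and let R be the sum of all the edge weight matrices of T. Then D^{-1} = −(1/2)L + (1/2) Δ R^{-1} Δ^T. -/
open Matrix

namespace BB
open SimpleGraph Walk
set_option linter.unusedSectionVars false


variable {n s : ℕ} {G : SimpleGraph (Fin n)}
  (hT : G.IsTree) (w : Sym2 (Fin n) → Matrix (Fin s) (Fin s) ℝ)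

/-- The unique path between two vertices of a tree. -/
noncomputable def P (i j : Fin n) : G.Walk i j := (hT.existsUnique_path i j).choose

lemma P_isPath (i j : Fin n) : (P hT i j).IsPath := (hT.existsUnique_path i j).choose_spec.1

lemma P_unique {i j : Fin n} (p : G.Walk i j) (hp : p.IsPath) : p = P hT i j :=
  (hT.existsUnique_path i j).choose_spec.2 p hp

lemma P_self (i : Fin n) : P hT i i = Walk.nil := (P_unique hT Walk.nil (by simp)).symm

/-- Block distance. -/
noncomputable def d (i j : Fin n) : Matrix (Fin s) (Fin s) ℝ := ((P hT i j).edges.map w).sum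

lemma d_self (i : Fin n) : d hT w i i = 0 := by rw [d, P_self]; simp

lemma step {i k : Fin n} (h : G.Adj i k) (j : Fin n) :
    P hT i j = Walk.cons h (P hT k j) ∨ P hT k j = Walk.cons h.symm (P hT i j) := by
  by_cases hi : i ∈ (P hT k j).support
  · right
    have ht : (P hT k j).takeUntil i hi = Walk.cons h.symm Walk.nil :=
      (P_unique hT _ ((P_isPath hT k j).takeUntil hi)).trans
        (P_unique hT (Walk.cons h.symm Walk.nil) (by simp [h.ne'])).symm
    have hs := ((P hT k j).take_spec hi).symm
    rw [ht] at hs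
    rw [hs, P_unique hT ((P hT k j).dropUntil i hi) ((P_isPath hT k j).dropUntil hi)]
    simp
  · left
    exact (P_unique hT (Walk.cons h (P hT k j)) ((P_isPath hT k j).cons hi)).symm

lemma cons_inj {i j k k' : Fin n} {h : G.Adj i k} {h' : G.Adj i k'}
    (e : P hT i j = Walk.cons h (P hT k j)) (e' : P hT i j = Walk.cons h' (P hT k' j)) :
    k = k' := by
  have : (Walk.cons h (P hT k j)).getVert 1 = (Walk.cons h' (P hT k' j)).getVert 1 := by
    rw [← e, ← e']
  simpa using this

lemma not_both {i j k : Fin n} {h : G.Adj i k} {h' : G.Adj k i}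
    (e : P hT i j = Walk.cons h (P hT k j)) (e' : P hT k j = Walk.cons h' (P hT i j)) :
    False := by
  have h1 := congrArg Walk.length e
  have h2 := congrArg Walk.length e'
  simp [Walk.length_cons] at h1 h2
  omega

/-- next vertex along the path to `j`. -/
noncomputable def nx (i j : Fin n) : Fin n := (P hT i j).getVert 1

lemma nx_spec {i j : Fin n} (hij : i ≠ j) :
    ∃ h : G.Adj i (nx hT i j), P hT i j = Walk.cons h (P hT (nx hT i j) j) := by
  obtain ⟨k, h, q, hq⟩ := Walk.exists_eq_cons_of_ne hij (P hT i j)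
  have hq' : q = P hT k j := P_unique hT q (by
    have := P_isPath hT i j
    rw [hq] at this
    exact this.of_cons)
  have hk : nx hT i j = k := by rw [nx, hq]; simp
  rw [hk]
  exact ⟨h, by rw [hq, hq']⟩

lemma d_step {i k j : Fin n} (h : G.Adj i k) (e : P hT i j = Walk.cons h (P hT k j)) :
    d hT w i j = w (s(i, k)) + d hT w k j := by
  rw [d, e]
  simp [d]

lemma P_self_ne_cons {j k : Fin n} {h : G.Adj j k} {q : G.Walk k j} :
    P hT j j ≠ Walk.cons h q := by
  rw [P_self]
  exact fun hc => by simpa using congrArg Walk.length hc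

lemma d_adj_self {k j : Fin n} (h : G.Adj k j) : d hT w k j = w (s(k, j)) := by
  rcases step hT h j with e | e
  · rw [d_step hT w h e, d_self, add_zero]
  · exact absurd e (P_self_ne_cons hT)


variable [DecidableRel G.Adj]

lemma inv_mul_w (hw : ∀ e ∈ G.edgeSet, (w e).PosDef) {i k : Fin n} (h : G.Adj i k) :
    (w (s(i, k)))⁻¹ * w (s(i, k)) = 1 :=
  Matrix.nonsing_inv_mul _ ((hw _ ((G.mem_edgeSet).2 h)).isUnit.map (Matrix.detMonoidHom))

lemma LD_block (hw : ∀ e ∈ G.edgeSet, (w e).PosDef) (i j : Fin n) :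
    ∑ k ∈ G.neighborFinset i, (w (s(i, k)))⁻¹ * (d hT w i j - d hT w k j)
      = (if i = j then (-(G.degree i : ℝ)) else (2 - (G.degree i : ℝ))) • 1 := by
  by_cases hij : i = j
  · subst hij
    rw [if_pos rfl]
    have hterm : ∀ k ∈ G.neighborFinset i,
        (w (s(i, k)))⁻¹ * (d hT w i i - d hT w k i)
          = -(1 : Matrix (Fin s) (Fin s) ℝ) := by
      intro k hk
      rw [mem_neighborFinset] at hk
      rw [d_self, d_adj_self hT w hk.symm, zero_sub, mul_neg, Sym2.eq_swap (a := k),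
        inv_mul_w w hw hk]
    rw [Finset.sum_congr rfl hterm, Finset.sum_const, card_neighborFinset_eq_degree,
      ← Nat.cast_smul_eq_nsmul ℝ, smul_neg, neg_smul]
  · rw [if_neg hij]
    obtain ⟨h₀, e₀⟩ := nx_spec hT hij
    have hk₀ : nx hT i j ∈ G.neighborFinset i := (mem_neighborFinset _ _ _).2 h₀
    rw [← Finset.add_sum_erase _ _ hk₀]
    have h1 : (w (s(i, nx hT i j)))⁻¹ * (d hT w i j - d hT w (nx hT i j) j) = 1 := by
      rw [d_step hT w h₀ e₀, add_sub_cancel_right, inv_mul_w w hw h₀]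
    have h2 : ∀ k ∈ (G.neighborFinset i).erase (nx hT i j),
        (w (s(i, k)))⁻¹ * (d hT w i j - d hT w k j)
          = -(1 : Matrix (Fin s) (Fin s) ℝ) := by
      intro k hk
      have hkne : k ≠ nx hT i j := (Finset.mem_erase.1 hk).1
      have hadj : G.Adj i k := (mem_neighborFinset _ _ _).1 (Finset.mem_erase.1 hk).2
      rcases step hT hadj j with e | e
      · exact absurd (cons_inj hT e e₀) hkne
      · have hd : d hT w k j = w (s(k, i)) + d hT w i j := d_step hT w hadj.symm e
        have hsub : d hT w i j - d hT w k j = -(w (s(k, i))) := by rw [hd]; abel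
        rw [hsub, mul_neg, Sym2.eq_swap (a := k), inv_mul_w w hw hadj]
    rw [h1, Finset.sum_congr rfl h2, Finset.sum_const, Finset.card_erase_of_mem hk₀,
      card_neighborFinset_eq_degree]
    have hd1 : 1 ≤ G.degree i := by
      rw [← card_neighborFinset_eq_degree]
      exact Finset.card_pos.2 ⟨_, hk₀⟩
    rw [← Nat.cast_smul_eq_nsmul ℝ, Nat.cast_sub hd1]
    push_cast
    module


/-- `i` is one step farther from `j` than `nx i j`. -/
lemma len_nx {i j : Fin n} (hij : i ≠ j) :
    (P hT i j).length = (P hT (nx hT i j) j).length + 1 := by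
  obtain ⟨h, e⟩ := nx_spec hT hij
  rw [e]; simp

open Classical in
lemma filter_Q (j i : Fin n) :
    (G.neighborFinset i).filter
        (fun k => ∃ h : G.Adj i k, P hT i j = Walk.cons h (P hT k j))
      = if i = j then (∅ : Finset (Fin n)) else {nx hT i j} := by
  by_cases hij : i = j
  · subst hij
    rw [if_pos rfl, Finset.eq_empty_iff_forall_notMem]
    intro k hk
    rw [Finset.mem_filter] at hk
    obtain ⟨-, h, e⟩ := hk
    exact P_self_ne_cons hT e
  · rw [if_neg hij]
    obtain ⟨h₀, e₀⟩ := nx_spec hT hij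
    ext k
    rw [Finset.mem_filter, Finset.mem_singleton, mem_neighborFinset]
    constructor
    · rintro ⟨-, h, e⟩
      exact cons_inj hT e e₀
    · rintro rfl
      exact ⟨h₀, h₀, e₀⟩

open Classical in
lemma tau_D (j : Fin n) :
    ∑ i, ((2 : ℝ) - (G.degree i : ℝ)) • d hT w i j = ∑ e ∈ G.edgeFinset, w e := by
  -- the degree sum
  have hdeg : ∀ i : Fin n, (G.degree i : ℝ) • d hT w i j
      = ∑ k ∈ G.neighborFinset i, d hT w i j := by
    intro i
    rw [Finset.sum_const, card_neighborFinset_eq_degree, Nat.cast_smul_eq_nsmul]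
  -- split each neighbor sum by Q
  have hsplit : ∀ i : Fin n, ∑ k ∈ G.neighborFinset i, d hT w i j
      = (∑ k ∈ (G.neighborFinset i).filter
            (fun k => ∃ h : G.Adj i k, P hT i j = Walk.cons h (P hT k j)), d hT w i j)
        + ∑ k ∈ (G.neighborFinset i).filter
            (fun k => ¬ ∃ h : G.Adj i k, P hT i j = Walk.cons h (P hT k j)), d hT w i j := by
    intro i
    rw [Finset.sum_filter_add_sum_filter_not]
  -- first part
  have hQsum : ∀ i : Fin n, (∑ k ∈ (G.neighborFinset i).filter
        (fun k => ∃ h : G.Adj i k, P hT i j = Walk.cons h (P hT k j)), d hT w i j)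
      = if i = j then 0 else d hT w i j := by
    intro i
    rw [filter_Q hT j i]
    by_cases hij : i = j
    · simp [hij]
    · simp [hij]
  -- second part, to be swapped
  have hnotQ : ∀ i k : Fin n, G.Adj i k →
      (¬ (∃ h : G.Adj i k, P hT i j = Walk.cons h (P hT k j))
        ↔ ∃ h : G.Adj k i, P hT k j = Walk.cons h (P hT i j)) := by
    intro i k h
    constructor
    · intro hnq
      rcases step hT h j with e | e
      · exact absurd ⟨h, e⟩ hnq
      · exact ⟨h.symm, e⟩
    · rintro ⟨h', e'⟩ ⟨h'', e''⟩
      exact not_both hT e'' e'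
  have hswap : ∑ i : Fin n, (∑ k ∈ (G.neighborFinset i).filter
        (fun k => ¬ ∃ h : G.Adj i k, P hT i j = Walk.cons h (P hT k j)), d hT w i j)
      = ∑ i ∈ Finset.univ.erase j, d hT w (nx hT i j) j := by
    have e1 : ∀ i : Fin n, (∑ k ∈ (G.neighborFinset i).filter
          (fun k => ¬ ∃ h : G.Adj i k, P hT i j = Walk.cons h (P hT k j)), d hT w i j)
        = ∑ k : Fin n, if G.Adj i k ∧ ¬ ∃ h : G.Adj i k, P hT i j = Walk.cons h (P hT k j)
            then d hT w i j else 0 := by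
      intro i
      rw [neighborFinset_eq_filter, Finset.filter_filter, Finset.sum_filter]
    rw [Finset.sum_congr rfl fun i _ => e1 i, Finset.sum_comm]
    have e2 : ∀ k i : Fin n,
        (G.Adj i k ∧ ¬ ∃ h : G.Adj i k, P hT i j = Walk.cons h (P hT k j))
          ↔ (G.Adj k i ∧ ∃ h : G.Adj k i, P hT k j = Walk.cons h (P hT i j)) := by
      intro k i
      exact ⟨fun ⟨h, hq⟩ => ⟨h.symm, (hnotQ i k h).1 hq⟩, fun ⟨h, hq⟩ =>
        ⟨h.symm, (hnotQ i k h.symm).2 hq⟩⟩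
    have e3 : ∀ k : Fin n, (∑ i : Fin n,
          if G.Adj i k ∧ ¬ ∃ h : G.Adj i k, P hT i j = Walk.cons h (P hT k j)
            then d hT w i j else 0)
        = if k = j then 0 else d hT w (nx hT k j) j := by
      intro k
      have estep : (∑ i : Fin n,
            if G.Adj i k ∧ ¬ ∃ h : G.Adj i k, P hT i j = Walk.cons h (P hT k j)
              then d hT w i j else 0)
          = ∑ i ∈ (G.neighborFinset k).filter
              (fun i => ∃ h : G.Adj k i, P hT k j = Walk.cons h (P hT i j)), d hT w i j := by
        simp only [e2]
        rw [neighborFinset_eq_filter, Finset.filter_filter, Finset.sum_filter]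
      rw [estep, filter_Q hT j k]
      by_cases hkj : k = j
      · simp [hkj]
      · simp [hkj]
    rw [Finset.sum_congr rfl fun k _ => e3 k]
    rw [← Finset.add_sum_erase _ _ (Finset.mem_univ j), if_pos rfl, zero_add]
    exact Finset.sum_congr rfl fun k hk => by rw [if_neg (Finset.mem_erase.1 hk).1]
  -- sum of d over all i
  have hQtot : ∑ i : Fin n, (if i = j then 0 else d hT w i j)
      = ∑ i ∈ Finset.univ.erase j, d hT w i j := by
    rw [← Finset.add_sum_erase _ _ (Finset.mem_univ j), if_pos rfl, zero_add]
    exact Finset.sum_congr rfl fun k hk => by rw [if_neg (Finset.mem_erase.1 hk).1]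
  have htot : ∑ i : Fin n, d hT w i j = ∑ i ∈ Finset.univ.erase j, d hT w i j := by
    rw [← Finset.add_sum_erase _ _ (Finset.mem_univ j), d_self, zero_add]
  -- put everything together
  have main : ∑ i, ((2 : ℝ) - (G.degree i : ℝ)) • d hT w i j
      = ∑ i ∈ Finset.univ.erase j, (d hT w i j - d hT w (nx hT i j) j) := by
    have lhs1 : ∑ i, ((2 : ℝ) - (G.degree i : ℝ)) • d hT w i j
        = (∑ i : Fin n, (2 : ℝ) • d hT w i j) - ∑ i : Fin n, (G.degree i : ℝ) • d hT w i j := by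
      rw [← Finset.sum_sub_distrib]
      exact Finset.sum_congr rfl fun i _ => (sub_smul _ _ _)
    rw [lhs1, ← Finset.smul_sum, htot,
      Finset.sum_congr rfl fun i _ => (hdeg i),
      Finset.sum_congr rfl fun i _ => (hsplit i),
      Finset.sum_add_distrib,
      Finset.sum_congr rfl fun i _ => (hQsum i), hQtot, hswap,
      two_smul, Finset.sum_sub_distrib]
    abel
  rw [main,
    Finset.sum_congr rfl (fun i hi => by
      obtain ⟨h, e⟩ := nx_spec hT (Finset.mem_erase.1 hi).1
      rw [d_step hT w h e, add_sub_cancel_right])]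
  -- the bijection with edges
  refine Finset.sum_bij (fun a _ => s(a, nx hT a j)) ?_ ?_ ?_ ?_
  · intro a ha
    obtain ⟨h, -⟩ := nx_spec hT (Finset.mem_erase.1 ha).1
    exact mem_edgeFinset.2 ((G.mem_edgeSet).2 h)
  · intro a₁ ha₁ a₂ ha₂ hee
    rw [Sym2.eq_iff] at hee
    rcases hee with ⟨h1, -⟩ | ⟨h1, h2⟩
    · exact h1
    · exfalso
      have l1 := len_nx hT (Finset.mem_erase.1 ha₁).1
      have l2 := len_nx hT (Finset.mem_erase.1 ha₂).1
      have c1 : (P hT (nx hT a₁ j) j).length = (P hT a₂ j).length := by rw [h2]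
      have c2 : (P hT (nx hT a₂ j) j).length = (P hT a₁ j).length := by rw [← h1]
      omega
  · intro e he
    induction e with
    | _ a b =>
      have hadj : G.Adj a b := (G.mem_edgeSet).1 (mem_edgeFinset.1 he)
      rcases step hT hadj j with e | e
      · have haj : a ≠ j := by
          rintro rfl
          exact P_self_ne_cons hT e
        obtain ⟨h', e'⟩ := nx_spec hT haj
        refine ⟨a, Finset.mem_erase.2 ⟨haj, Finset.mem_univ a⟩, ?_⟩
        show s(a, nx hT a j) = s(a, b)
        rw [cons_inj hT e' e]
      · have hbj : b ≠ j := by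
          rintro rfl
          exact P_self_ne_cons hT e
        obtain ⟨h', e'⟩ := nx_spec hT hbj
        refine ⟨b, Finset.mem_erase.2 ⟨hbj, Finset.mem_univ b⟩, ?_⟩
        show s(b, nx hT b j) = s(a, b)
        rw [cons_inj hT e' e, Sym2.eq_swap]
  · intro a ha
    rfl
end BB

open SimpleGraph Walk in
/-- (Balaji–Bapat) Let `T` be a tree on `n` vertices with positive definite
matrix weights, `D` its distance matrix, `L` its Laplacian formed from the inverses of the
weights, `τᵢ = 2 - (degree of i)`, `Δ = τ ⊗ I_s` (an `ns × s` matrix), and `R` the sum of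
all the edge weights.  Then `D⁻¹ = -(1/2) L + (1/2) Δ R⁻¹ Δᵀ`. -/
theorem distanceMatrix_inv_tree_posDef {n s : ℕ}
    (G : SimpleGraph (Fin n)) [DecidableRel G.Adj] (hT : G.IsTree)
    (w : Sym2 (Fin n) → Matrix (Fin s) (Fin s) ℝ)
    (hw : ∀ e ∈ G.edgeSet, (w e).PosDef)
    (D : Matrix (Fin n × Fin s) (Fin n × Fin s) ℝ)
    (hD : ∀ (i j : Fin n) (p : G.Walk i j), p.IsPath →
      ∀ a b, D (i, a) (j, b) = ((p.edges.map w).sum) a b)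
    (Δ : Matrix (Fin n × Fin s) (Fin s) ℝ)
    (hΔ : ∀ p b, Δ p b = (2 - (G.degree p.1 : ℝ)) * (if p.2 = b then 1 else 0))
    (R : Matrix (Fin s) (Fin s) ℝ) (hR : R = ∑ e ∈ G.edgeFinset, w e) :
    D⁻¹ = (-(1/2) : ℝ) • matLap G w + ((1/2) : ℝ) • (Δ * R⁻¹ * Δᵀ) := by
  classical
  by_cases hE : IsEmpty (Fin n × Fin s)
  · apply Matrix.ext
    intro p q
    exact (hE.false p).elim
  rw [not_isEmpty_iff] at hE
  have hDe : ∀ p q : Fin n × Fin s, D p q = BB.d hT w p.1 q.1 p.2 q.2 := by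
    rintro ⟨i, a⟩ ⟨j, b⟩
    exact hD i j (BB.P hT i j) (BB.P_isPath hT i j) a b
  by_cases hn2 : 2 ≤ n
  · -- main case
    -- R is invertible
    have hedge : G.edgeFinset.Nonempty := by
      have hne : (⟨0, by omega⟩ : Fin n) ≠ ⟨1, by omega⟩ := by
        intro hc
        simpa using congrArg Fin.val hc
      obtain ⟨p⟩ := hT.isConnected.preconnected ⟨0, by omega⟩ ⟨1, by omega⟩
      obtain ⟨k, hadj, -, -⟩ := Walk.exists_eq_cons_of_ne hne p
      exact ⟨_, SimpleGraph.mem_edgeFinset.2 ((G.mem_edgeSet).2 hadj)⟩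
    have hRpd : R.PosDef := by
      rw [hR]
      exact Finset.sum_induction_nonempty _ _
        (fun a b ha hb => ha.add_posSemidef hb.posSemidef) hedge
        (fun e he => hw e (SimpleGraph.mem_edgeFinset.1 he))
    have hRinv : R⁻¹ * R = 1 := Matrix.nonsing_inv_mul R (hRpd.isUnit.map Matrix.detMonoidHom)
    -- the key block computation
    have key : ∀ i j : Fin n, (∑ k : Fin n,
        ((-(1/2) : ℝ) • (if i = k then (∑ l ∈ G.neighborFinset i, (w (s(i, l)))⁻¹)
            else if G.Adj i k then -(w (s(i, k)))⁻¹ else 0)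
          + ((1/2) * (2 - (G.degree i : ℝ)) * (2 - (G.degree k : ℝ))) • R⁻¹) * BB.d hT w k j)
        = if i = j then 1 else 0 := by
      intro i j
      have hsum : ∀ k : Fin n,
          ((-(1/2) : ℝ) • (if i = k then (∑ l ∈ G.neighborFinset i, (w (s(i, l)))⁻¹)
            else if G.Adj i k then -(w (s(i, k)))⁻¹ else 0)
          + ((1/2) * (2 - (G.degree i : ℝ)) * (2 - (G.degree k : ℝ))) • R⁻¹) * BB.d hT w k j
          = (-(1/2) : ℝ) • ((if i = k then (∑ l ∈ G.neighborFinset i, (w (s(i, l)))⁻¹)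
              else if G.Adj i k then -(w (s(i, k)))⁻¹ else 0) * BB.d hT w k j)
            + ((1/2) * (2 - (G.degree i : ℝ))) •
                (R⁻¹ * (((2 : ℝ) - (G.degree k : ℝ)) • BB.d hT w k j)) := by
        intro k
        rw [add_mul, smul_mul_assoc, smul_mul_assoc, mul_smul_comm, smul_smul]
      rw [Finset.sum_congr rfl fun k _ => hsum k, Finset.sum_add_distrib,
        ← Finset.smul_sum, ← Finset.smul_sum, ← Finset.mul_sum, BB.tau_D, ← hR, hRinv]
      -- now compute the Laplacian part
      have hL : ∑ k : Fin n,
          (if i = k then (∑ l ∈ G.neighborFinset i, (w (s(i, l)))⁻¹)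
            else if G.Adj i k then -(w (s(i, k)))⁻¹ else 0) * BB.d hT w k j
          = ∑ k ∈ G.neighborFinset i, (w (s(i, k)))⁻¹ * (BB.d hT w i j - BB.d hT w k j) := by
        rw [← Finset.add_sum_erase _ _ (Finset.mem_univ i), if_pos rfl]
        have h2 : ∀ k ∈ Finset.univ.erase i,
            (if i = k then (∑ l ∈ G.neighborFinset i, (w (s(i, l)))⁻¹)
              else if G.Adj i k then -(w (s(i, k)))⁻¹ else 0) * BB.d hT w k j
            = if G.Adj i k then -(w (s(i, k)))⁻¹ * BB.d hT w k j else 0 := by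
          intro k hk
          rw [if_neg (Ne.symm (Finset.mem_erase.1 hk).1), ite_mul, zero_mul]
        rw [Finset.sum_congr rfl h2, ← Finset.sum_filter]
        have h3 : (Finset.univ.erase i).filter (G.Adj i) = G.neighborFinset i := by
          ext k
          simp only [Finset.mem_filter, Finset.mem_erase, Finset.mem_univ, true_and,
            mem_neighborFinset, and_iff_right_iff_imp]
          exact fun h => ⟨(G.ne_of_adj h).symm, trivial⟩
        rw [h3, Finset.sum_mul, ← Finset.sum_add_distrib]
        exact Finset.sum_congr rfl fun k _ => by rw [mul_sub, neg_mul, sub_eq_add_neg]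
      rw [hL, BB.LD_block hT w hw i j]
      rw [smul_smul, ← add_smul]
      by_cases hij : i = j
      · rw [if_pos hij, if_pos hij]
        have hc : -(1 / 2) * -(G.degree i : ℝ) + 1 / 2 * (2 - (G.degree i : ℝ)) = 1 := by ring
        rw [hc, one_smul]
      · rw [if_neg hij, if_neg hij]
        have hc : -(1 / 2) * (2 - (G.degree i : ℝ)) + 1 / 2 * (2 - (G.degree i : ℝ)) = 0 := by
          ring
        rw [hc, zero_smul]
    -- entries of the candidate inverse
    have hMe : ∀ (i k : Fin n) (a c : Fin s),
        ((-(1/2) : ℝ) • matLap G w + ((1/2) : ℝ) • (Δ * R⁻¹ * Δᵀ)) (i, a) (k, c)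
        = (((-(1/2) : ℝ) • (if i = k then (∑ l ∈ G.neighborFinset i, (w (s(i, l)))⁻¹)
            else if G.Adj i k then -(w (s(i, k)))⁻¹ else 0)
          + ((1/2) * (2 - (G.degree i : ℝ)) * (2 - (G.degree k : ℝ))) • R⁻¹)) a c := by
      intro i k a c
      have hlap : matLap G w (i, a) (k, c)
          = (if i = k then (∑ l ∈ G.neighborFinset i, (w (s(i, l)))⁻¹)
              else if G.Adj i k then -(w (s(i, k)))⁻¹ else 0) a c := by
        by_cases h1 : i = k
        · subst h1
          simp [matLap]
        · by_cases h2 : G.Adj i k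
          · simp [matLap, h1, h2]
          · simp [matLap, h1, h2]
      have hdrd : (Δ * R⁻¹ * Δᵀ) (i, a) (k, c)
          = ((2 - (G.degree i : ℝ)) * (2 - (G.degree k : ℝ))) * R⁻¹ a c := by
        rw [Matrix.mul_apply]
        have h1 : ∀ c' : Fin s, (Δ * R⁻¹) (i, a) c' * Δᵀ c' (k, c)
            = (2 - (G.degree k : ℝ)) * (if c = c' then (Δ * R⁻¹) (i, a) c' else 0) := by
          intro c'
          rw [Matrix.transpose_apply, hΔ]
          by_cases hc : c = c'
          · rw [if_pos hc, if_pos hc]; ring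
          · rw [if_neg hc, if_neg hc]; ring
        rw [Finset.sum_congr rfl fun c' _ => h1 c', ← Finset.mul_sum,
          Finset.sum_ite_eq _ c _, if_pos (Finset.mem_univ c), Matrix.mul_apply]
        have h2 : ∀ e : Fin s, Δ (i, a) e * R⁻¹ e c
            = (2 - (G.degree i : ℝ)) * (if a = e then R⁻¹ e c else 0) := by
          intro e
          rw [hΔ]
          by_cases he : a = e
          · rw [if_pos he, if_pos he]; ring
          · rw [if_neg he, if_neg he]; ring
        rw [Finset.sum_congr rfl fun e _ => h2 e, ← Finset.mul_sum,
          Finset.sum_ite_eq _ a _, if_pos (Finset.mem_univ a)]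
        ring
      simp only [Matrix.add_apply, Matrix.smul_apply, hlap, hdrd, smul_eq_mul]
      ring
    -- final assembly
    have hMD : (((-(1/2) : ℝ) • matLap G w + ((1/2) : ℝ) • (Δ * R⁻¹ * Δᵀ))) * D = 1 := by
      apply Matrix.ext
      rintro ⟨i, a⟩ ⟨j, b⟩
      rw [Matrix.mul_apply, Fintype.sum_prod_type]
      have hline : ∀ k : Fin n, ∑ c : Fin s,
          ((-(1/2) : ℝ) • matLap G w + ((1/2) : ℝ) • (Δ * R⁻¹ * Δᵀ)) (i, a) (k, c)
            * D (k, c) (j, b)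
          = ((((-(1/2) : ℝ) • (if i = k then (∑ l ∈ G.neighborFinset i, (w (s(i, l)))⁻¹)
              else if G.Adj i k then -(w (s(i, k)))⁻¹ else 0)
            + ((1/2) * (2 - (G.degree i : ℝ)) * (2 - (G.degree k : ℝ))) • R⁻¹))
              * BB.d hT w k j) a b := by
        intro k
        rw [Matrix.mul_apply]
        exact Finset.sum_congr rfl fun c _ => by rw [hMe i k a c, hDe (k, c) (j, b)]
      rw [Finset.sum_congr rfl fun k _ => hline k, ← Matrix.sum_apply, key i j]
      by_cases hij : i = j
      · subst hij
        by_cases hab : a = b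
        · subst hab
          simp [Matrix.one_apply]
        · simp [Matrix.one_apply, hab, Prod.ext_iff]
      · simp [Matrix.one_apply, hij, Prod.ext_iff]
    exact Matrix.inv_eq_left_inv hMD
  · -- n = 1
    have hone : ∀ i j : Fin n, i = j := by
      intro i j
      have h1 := i.isLt
      have h2 := j.isLt
      have h3 : n ≠ 0 := by rintro rfl; exact i.elim0
      apply Fin.ext
      omega
    have hnoadj : ∀ i k : Fin n, ¬ G.Adj i k := fun i k h => (G.ne_of_adj h) (hone i k)
    have hD0 : D = 0 := by
      apply Matrix.ext
      rintro ⟨i, a⟩ ⟨j, b⟩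
      rw [hDe]
      obtain rfl : i = j := hone i j
      rw [BB.d_self]
      simp
    have hR0 : R = 0 := by
      rw [hR]
      have he : G.edgeFinset = ∅ := Finset.eq_empty_iff_forall_notMem.2 fun e he => by
        induction e with
        | _ a b => exact hnoadj a b ((G.mem_edgeSet).1 (SimpleGraph.mem_edgeFinset.1 he))
      rw [he, Finset.sum_empty]
    have hL0 : matLap G w = 0 := by
      apply Matrix.ext
      rintro ⟨i, a⟩ ⟨k, c⟩
      obtain rfl : i = k := hone i k
      have hNe : G.neighborFinset i = ∅ := Finset.eq_empty_iff_forall_notMem.2 fun l hl =>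
        hnoadj i l ((SimpleGraph.mem_neighborFinset _ _ _).1 hl)
      simp [matLap, hNe]
    rw [hD0, hL0, hR0, Matrix.inv_zero, Matrix.inv_zero]
    simp
end

section
/- Let T be a tree on n vertices with s×s real matrix edge weights W_1,…,W_{n−1} such that the distance matrix D of T is invertible, and let L be the Laplacian matrix of T formed from the inverses of the weights. For i = 1,…,n let δ_i = 2 − d_i, where d_i is the degree of vertex i, and let δ = (δ_1,…,δ_n)^T and let 1 denote the all-ones column vector of length n. Then L·D = (δ·1^T) ⊗ I_s − 2 I_n ⊗ I_s. -/
open Matrix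
open scoped Kronecker

private def Db {n s : ℕ} (D : Matrix (Fin n × Fin s) (Fin n × Fin s) ℝ)
    (i j : Fin n) : Matrix (Fin s) (Fin s) ℝ := Matrix.of fun a b => D (i, a) (j, b)

section Aux

variable {n s : ℕ} {G : SimpleGraph (Fin n)} [DecidableRel G.Adj]
  {w : Sym2 (Fin n) → Matrix (Fin s) (Fin s) ℝ}
  {D : Matrix (Fin n × Fin s) (Fin n × Fin s) ℝ}

private lemma Db_eq (hD : ∀ (i j : Fin n) (p : G.Walk i j), p.IsPath →
      ∀ a b, D (i, a) (j, b) = ((p.edges.map w).sum) a b)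
    {i j : Fin n} (p : G.Walk i j) (hp : p.IsPath) :
    Db D i j = (p.edges.map w).sum := by
  ext a b
  exact hD i j p hp a b

private lemma Db_self (hD : ∀ (i j : Fin n) (p : G.Walk i j), p.IsPath →
      ∀ a b, D (i, a) (j, b) = ((p.edges.map w).sum) a b) (i : Fin n) :
    Db D i i = 0 := by
  simpa using Db_eq hD (SimpleGraph.Walk.nil : G.Walk i i) SimpleGraph.Walk.IsPath.nil

private lemma Db_adj (hD : ∀ (i j : Fin n) (p : G.Walk i j), p.IsPath →
      ∀ a b, D (i, a) (j, b) = ((p.edges.map w).sum) a b)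
    {a b : Fin n} (hab : G.Adj a b) :
    Db D a b = w (s(a, b)) := by
  have := Db_eq hD (SimpleGraph.Path.singleton hab).1 (SimpleGraph.Path.singleton hab).2
  simpa [SimpleGraph.Path.singleton] using this

/-- Step dichotomy across an edge. -/
private lemma Db_dichotomy (hT : G.IsTree)
    (hD : ∀ (i j : Fin n) (p : G.Walk i j), p.IsPath →
      ∀ a b, D (i, a) (j, b) = ((p.edges.map w).sum) a b)
    {a b : Fin n} (hab : G.Adj a b) (j : Fin n) :
    Db D a j = w (s(a, b)) + Db D b j ∨
      Db D b j = w (s(a, b)) + Db D a j := by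
  obtain ⟨q, hq, -⟩ := hT.existsUnique_path b j
  by_cases ha : a ∈ q.support
  · right
    have h1 : (⟨q.takeUntil a ha, hq.takeUntil ha⟩ : G.Path b a) =
        SimpleGraph.Path.singleton hab.symm := hT.IsAcyclic.path_unique _ _
    have htake : q.takeUntil a ha = SimpleGraph.Walk.cons hab.symm SimpleGraph.Walk.nil := by
      simpa [SimpleGraph.Path.singleton] using congrArg Subtype.val h1
    have hspec := q.take_spec ha
    rw [htake] at hspec
    have hdrop := hq.dropUntil ha
    rw [Db_eq hD q hq, ← hspec, Db_eq hD _ hdrop]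
    simp [SimpleGraph.Walk.edges_append, Sym2.eq_swap]
  · left
    have hpath : (SimpleGraph.Walk.cons hab q).IsPath :=
      (SimpleGraph.Walk.cons_isPath_iff hab q).mpr ⟨hq, ha⟩
    rw [Db_eq hD _ hpath, Db_eq hD q hq]
    simp

/-- For `i ≠ j` there is a unique neighbor of `i` toward `j`. -/
private lemma Db_neighbors (hT : G.IsTree)
    (hD : ∀ (i j : Fin n) (p : G.Walk i j), p.IsPath →
      ∀ a b, D (i, a) (j, b) = ((p.edges.map w).sum) a b)
    {i j : Fin n} (hij : i ≠ j) :
    ∃ k₀, G.Adj i k₀ ∧ Db D i j = w (s(i, k₀)) + Db D k₀ j ∧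
      ∀ k, G.Adj i k → k ≠ k₀ → Db D k j = w (s(i, k)) + Db D i j := by
  obtain ⟨p, hp, -⟩ := hT.existsUnique_path i j
  cases p with
  | nil => exact absurd rfl hij
  | @cons _ k₀ _ h q =>
    obtain ⟨hq, hi⟩ := (SimpleGraph.Walk.cons_isPath_iff h q).mp hp
    refine ⟨k₀, h, ?_, ?_⟩
    · rw [Db_eq hD _ hp, Db_eq hD q hq]
      simp
    · intro k hik hkk₀
      by_cases hk : k ∈ q.support
      · exfalso
        have hpath : (SimpleGraph.Walk.cons h (q.takeUntil k hk)).IsPath := by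
          rw [SimpleGraph.Walk.cons_isPath_iff]
          exact ⟨hq.takeUntil hk, fun hc => hi (q.support_takeUntil_subset hk hc)⟩
        have h1 : (⟨SimpleGraph.Walk.cons h (q.takeUntil k hk), hpath⟩ : G.Path i k) =
            SimpleGraph.Path.singleton hik := hT.IsAcyclic.path_unique _ _
        have h2 : (SimpleGraph.Walk.cons h (q.takeUntil k hk)).length =
            (SimpleGraph.Walk.cons hik SimpleGraph.Walk.nil).length := by
          have := congrArg Subtype.val h1
          simp only [SimpleGraph.Path.singleton] at this
          rw [this]
        simp only [SimpleGraph.Walk.length_cons, SimpleGraph.Walk.length_nil,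
          Nat.add_left_inj] at h2
        exact hkk₀ (SimpleGraph.Walk.eq_of_length_eq_zero h2).symm
      · have hknotp : k ∉ (SimpleGraph.Walk.cons h q).support := by
          rw [SimpleGraph.Walk.support_cons]
          simp only [List.mem_cons, not_or]
          exact ⟨hik.ne', hk⟩
        have hpath : (SimpleGraph.Walk.cons hik.symm (SimpleGraph.Walk.cons h q)).IsPath :=
          (SimpleGraph.Walk.cons_isPath_iff _ _).mpr ⟨hp, hknotp⟩
        rw [Db_eq hD _ hpath, Db_eq hD _ hp]
        simp [Sym2.eq_swap]

/-- Invertibility of `D` forces invertibility of every edge weight. -/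
private lemma w_isUnit (hT : G.IsTree)
    (hD : ∀ (i j : Fin n) (p : G.Walk i j), p.IsPath →
      ∀ a b, D (i, a) (j, b) = ((p.edges.map w).sum) a b)
    (hDinv : IsUnit D) {a b : Fin n} (hab : G.Adj a b) :
    IsUnit (w (s(a, b))) := by
  by_contra hW
  rw [Matrix.isUnit_iff_isUnit_det, isUnit_iff_ne_zero, not_not] at hW
  obtain ⟨v, hv0, hvW⟩ := Matrix.exists_vecMul_eq_zero_iff.mpr hW
  set u : Fin n × Fin s → ℝ :=
    fun p => if p.1 = a then v p.2 else if p.1 = b then -v p.2 else 0 with hu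
  have key : ∀ (j : Fin n) (c : Fin s),
      (u ᵥ* D) (j, c) = (v ᵥ* Db D a j) c - (v ᵥ* Db D b j) c := by
    intro j c
    simp only [Matrix.vecMul, dotProduct]
    rw [Fintype.sum_prod_type]
    set X : ℝ := ∑ c' : Fin s, v c' * D (a, c') (j, c) with hX
    set Y : ℝ := -∑ c' : Fin s, v c' * D (b, c') (j, c) with hY
    have hsum : ∀ k ∈ Finset.univ, (∑ c' : Fin s, u (k, c') * D (k, c') (j, c)) =
        (if k = a then X else 0) + (if k = b then Y else 0) := by
      intro k _
      by_cases h1 : k = a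
      · subst h1; simp [hu, hX, hab.ne]
      · by_cases h2 : k = b
        · subst h2; simp [hu, hY, h1, neg_mul, Finset.sum_neg_distrib]
        · simp [hu, h1, h2]
    rw [Finset.sum_congr rfl hsum, Finset.sum_add_distrib,
      Finset.sum_ite_eq' Finset.univ a (fun _ => X),
      Finset.sum_ite_eq' Finset.univ b (fun _ => Y)]
    simp only [Finset.mem_univ, if_true, hX, hY]
    simp [Db, Matrix.vecMul, dotProduct, sub_eq_add_neg]
  have huD : u ᵥ* D = 0 := by
    funext p
    obtain ⟨j, c⟩ := p
    rw [key j c]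
    rcases Db_dichotomy hT hD hab j with hc | hc
    · rw [hc, Matrix.vecMul_add, hvW]
      simp
    · rw [hc, Matrix.vecMul_add, hvW]
      simp
  have hu0 : u = 0 := by
    have hdet : IsUnit D.det := (Matrix.isUnit_iff_isUnit_det D).mp hDinv
    have := congrArg (fun x => x ᵥ* D⁻¹) huD
    simpa [Matrix.vecMul_vecMul, Matrix.mul_nonsing_inv D hdet] using this
  apply hv0
  funext c
  have := congrFun hu0 (a, c)
  simpa [hu] using this

end Aux

/-- Let `T` be a tree on `n` vertices with `s × s` real matrix edge weights such
that the distance matrix `D` of `T` is invertible, and let `L` be the Laplacian formed from the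
inverses of the weights.  With `δᵢ = 2 - dᵢ` and `𝟙` the all-ones vector,
`L · D = (δ 𝟙ᵀ) ⊗ I_s - 2 Iₙ ⊗ I_s`. -/
theorem lap_mul_distanceMatrix {n s : ℕ}
    (G : SimpleGraph (Fin n)) [DecidableRel G.Adj] (hT : G.IsTree)
    (w : Sym2 (Fin n) → Matrix (Fin s) (Fin s) ℝ)
    (D : Matrix (Fin n × Fin s) (Fin n × Fin s) ℝ)
    (hD : ∀ (i j : Fin n) (p : G.Walk i j), p.IsPath →
      ∀ a b, D (i, a) (j, b) = ((p.edges.map w).sum) a b)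
    (hDinv : IsUnit D)
    (δ : Fin n → ℝ) (hδ : ∀ i, δ i = 2 - (G.degree i : ℝ)) :
    matLap G w * D = vecMulVec δ (fun _ => (1 : ℝ)) ⊗ₖ (1 : Matrix (Fin s) (Fin s) ℝ)
      - (2 : ℝ) • ((1 : Matrix (Fin n) (Fin n) ℝ) ⊗ₖ (1 : Matrix (Fin s) (Fin s) ℝ)) := by
  have hW : ∀ {a b : Fin n}, G.Adj a b → IsUnit (w (s(a, b))) :=
    fun hab => w_isUnit hT hD hDinv hab
  -- blockwise formula for the product
  have key : ∀ (i j : Fin n) (a b : Fin s), (matLap G w * D) (i, a) (j, b) =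
      (∑ k ∈ G.neighborFinset i, (w (s(i, k)))⁻¹ * (Db D i j - Db D k j)) a b := by
    intro i j a b
    rw [Matrix.mul_apply, Fintype.sum_prod_type]
    have hsum : ∀ k : Fin n, (∑ c : Fin s, matLap G w (i, a) (k, c) * D (k, c) (j, b)) =
        (if k = i then ((∑ k' ∈ G.neighborFinset i, (w (s(i, k')))⁻¹) * Db D i j) a b
         else 0)
        + (if k ∈ G.neighborFinset i then (-(w (s(i, k)))⁻¹ * Db D k j) a b else 0) := by
      intro k
      by_cases h1 : k = i
      · subst h1
        have : k ∉ G.neighborFinset k := by simp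
        simp only [this, if_neg, if_pos rfl, if_false, add_zero]
        simp [matLap, Matrix.mul_apply, Db]
      · by_cases h2 : G.Adj i k
        · have hk : k ∈ G.neighborFinset i := by simpa using h2
          simp only [if_neg h1, if_pos hk, zero_add]
          simp [matLap, Matrix.mul_apply, Db, Ne.symm h1, h2]
        · have hk : k ∉ G.neighborFinset i := by simpa using h2
          simp only [if_neg h1, if_neg hk, add_zero]
          simp [matLap, Ne.symm h1, h2]
    simp only [hsum, Finset.sum_add_distrib, Finset.sum_ite_eq' Finset.univ,
      Finset.mem_univ, if_true, Finset.sum_ite_mem, Finset.univ_inter]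
    rw [Finset.sum_mul, Matrix.sum_apply, Matrix.sum_apply, ← Finset.sum_add_distrib]
    refine Finset.sum_congr rfl fun k hk => ?_
    rw [sub_eq_add_neg, mul_add, Matrix.mul_neg, Matrix.add_apply, Matrix.neg_apply,
      Matrix.neg_mul, Matrix.neg_apply]
  ext p q
  obtain ⟨i, a⟩ := p
  obtain ⟨j, b⟩ := q
  rw [key i j a b]
  by_cases hij : i = j
  · subst hij
    have hterm : ∀ k ∈ G.neighborFinset i,
        (w (s(i, k)))⁻¹ * (Db D i i - Db D k i) = -1 := by
      intro k hk
      have hadj : G.Adj i k := by simpa using hk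
      have hd : Db D i i - Db D k i = -(w (s(i, k))) := by
        rw [Db_self hD, Db_adj hD hadj.symm, Sym2.eq_swap]
        abel
      rw [hd, mul_neg,
        Matrix.nonsing_inv_mul _ ((Matrix.isUnit_iff_isUnit_det _).mp (hW hadj))]
    rw [Finset.sum_congr rfl hterm, Finset.sum_const, SimpleGraph.card_neighborFinset_eq_degree,
      Matrix.smul_apply, Matrix.neg_apply, Matrix.sub_apply, Matrix.smul_apply,
      Matrix.kroneckerMap_apply, Matrix.kroneckerMap_apply, Matrix.vecMulVec_apply,
      Matrix.one_apply_eq, hδ i]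
    simp only [smul_eq_mul, nsmul_eq_mul, mul_one]
    by_cases hab' : a = b
    · subst hab'
      try simp only [Matrix.one_apply_eq]
      ring
    · try simp only [Matrix.one_apply_ne hab']
      ring
  · obtain ⟨k₀, hk₀, heq, hrest⟩ := Db_neighbors hT hD hij
    have hk₀mem : k₀ ∈ G.neighborFinset i := by simpa using hk₀
    rw [← Finset.add_sum_erase _ _ hk₀mem]
    have h1 : (w (s(i, k₀)))⁻¹ * (Db D i j - Db D k₀ j) = 1 := by
      rw [heq, add_sub_cancel_right,
        Matrix.nonsing_inv_mul _ ((Matrix.isUnit_iff_isUnit_det _).mp (hW hk₀))]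
    have h2 : ∀ k ∈ (G.neighborFinset i).erase k₀,
        (w (s(i, k)))⁻¹ * (Db D i j - Db D k j) = -1 := by
      intro k hk
      obtain ⟨hne, hkN⟩ := Finset.mem_erase.mp hk
      have hadj : G.Adj i k := by simpa using hkN
      have hd : Db D i j - Db D k j = -(w (s(i, k))) := by
        rw [hrest k hadj hne]
        abel
      rw [hd, mul_neg,
        Matrix.nonsing_inv_mul _ ((Matrix.isUnit_iff_isUnit_det _).mp (hW hadj))]
    rw [h1, Finset.sum_congr rfl h2, Finset.sum_const, Finset.card_erase_of_mem hk₀mem,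
      SimpleGraph.card_neighborFinset_eq_degree]
    have hdeg : 1 ≤ G.degree i := by
      rw [← SimpleGraph.card_neighborFinset_eq_degree]
      exact Finset.card_pos.mpr ⟨k₀, hk₀mem⟩
    rw [Matrix.add_apply, Matrix.smul_apply, Matrix.neg_apply, Matrix.sub_apply,
      Matrix.smul_apply, Matrix.kroneckerMap_apply, Matrix.kroneckerMap_apply,
      Matrix.vecMulVec_apply, Matrix.one_apply_ne hij, hδ i]
    simp only [smul_eq_mul, nsmul_eq_mul, mul_one, zero_mul, Nat.cast_sub hdeg, Nat.cast_one]
    by_cases hab' : a = b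
    · subst hab'
      try simp only [Matrix.one_apply_eq]
      ring
    · try simp only [Matrix.one_apply_ne hab']
      ring
end
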